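/- arXiv:1809.05739 — 4 statements merged into one kernel-verified Lean document; each statement's English description precedes it below -/
import Mathlib

section
/- Let ρ > 1 be a real number, let v : Ω → EuclideanSpace ℝ (Fin d) be a finite family of unit vectors with |⟪v i, v j⟫| = 1/ρ for all i ≠ j, and suppose the two-graph (Ω, C) of these lines is a regular two-graph with parameters (n, a, b). Let Γ ⊆ Ω be an incoherent subset with |Γ| = d ≥ 2, and suppose there exist γ₀ ∈ Ω∖Γ and α₀ ∈ Γ with 2·|Γ ∩ S_{γ₀α₀}| = d. Then d = ρ(ρ − 1) and n = (ρ − 1)(ρ² − 1). Moreover, if ρ > 2, then for every three pairwise distinct α, β, δ ∈ Γ, 2 · #{γ ∈ Ω∖Γ : β ∉ S_{γα} and δ ∉ S_{γα}} = 2(n − d) − 3a (so the parts of size d/2 of the partitions of Γ induced by the elements γ ∈ Ω∖Γ form a 3-(d, d/2, n − d − 3a/2) design). -/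
open scoped RealInnerProductSpace
open Finset

/-- The set `S_{xy} = {z : {x,y,z} ∈ C}` associated to a two-graph `(Ω, C)`. -/
def Sset {Ω : Type*} [Fintype Ω] [DecidableEq Ω] (C : Finset (Finset Ω)) (x y : Ω) :
    Finset Ω :=
  univ.filter fun z => ({x, y, z} : Finset Ω) ∈ C

set_option maxHeartbeats 4000000 in
/-- **Theorem 7.3 (Gillespie).** If a set of equiangular lines in `ℝ^d` with angle `1/ρ` and
regular two-graph contains an incoherent set `Γ` of `d` lines with some part
`|Γ₁(γ₀)| = d/2`, then `d = ρ(ρ-1)`, `n = (ρ-1)(ρ²-1)`, and (for `ρ > 2`) the parts of the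
induced partitions of `Γ` form a `3-(d, d/2, n - d - 3a/2)` design. -/
theorem stmt_13 {Ω : Type*} [Fintype Ω] [DecidableEq Ω] (d : ℕ) (hd : 2 ≤ d)
    (ρ : ℝ) (hρ : 1 < ρ)
    (v : Ω → EuclideanSpace ℝ (Fin d))
    (hunit : ∀ i, ‖v i‖ = 1)
    (hangle : ∀ i j : Ω, i ≠ j → |⟪v i, v j⟫| = 1 / ρ)
    (C : Finset (Finset Ω))
    (hC3 : ∀ c ∈ C, c.card = 3)
    (hCdef : ∀ i j k : Ω, i ≠ j → i ≠ k → j ≠ k →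
      (({i, j, k} : Finset Ω) ∈ C ↔ ⟪v i, v j⟫ * ⟪v i, v k⟫ * ⟪v j, v k⟫ < 0))
    (n a b : ℕ)
    (hn : Fintype.card Ω = n)
    (ha : ∀ p : Finset Ω, p.card = 2 → (C.filter fun c => p ⊆ c).card = a)
    (hb : ∀ c ∈ C, (((univ : Finset Ω).powersetCard 4).filter
      (fun Q => c ⊆ Q ∧ ∀ t ∈ Q.powersetCard 3, t ∈ C)).card = b)
    (Γ : Finset Ω) (hΓcard : Γ.card = d)
    (hinc : ∀ t ⊆ Γ, t.card = 3 → t ∉ C)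
    (hhalf : ∃ γ₀ : Ω, γ₀ ∉ Γ ∧ ∃ α₀ ∈ Γ, 2 * (Γ ∩ Sset C γ₀ α₀).card = d) :
    (d : ℝ) = ρ * (ρ - 1) ∧
    (n : ℝ) = (ρ - 1) * (ρ ^ 2 - 1) ∧
    (2 < ρ →
      ∀ α ∈ Γ, ∀ β ∈ Γ, ∀ δ ∈ Γ, α ≠ β → α ≠ δ → β ≠ δ →
        2 * (((univ \ Γ).filter fun γ =>
            β ∉ Sset C γ α ∧ δ ∉ Sset C γ α).card : ℤ)
          = 2 * ((n : ℤ) - d) - 3 * a) := by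
  classical
  obtain ⟨γ₀, hγ₀, α₀, hα₀, hhalf₀⟩ := hhalf
  have hρ0 : (0:ℝ) < ρ := lt_trans one_pos hρ
  have hρne : ρ ≠ 0 := ne_of_gt hρ0
  have hρ1 : (0:ℝ) < ρ - 1 := by linarith
  have hρ1ne : ρ - 1 ≠ 0 := ne_of_gt hρ1
  have hd2 : (2:ℝ) ≤ (d:ℝ) := by exact_mod_cast hd
  have hrd : (0:ℝ) < ρ - 1 + (d:ℝ) := by linarith
  have hrdne : ρ - 1 + (d:ℝ) ≠ 0 := ne_of_gt hrd
  -- squares of inner products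
  have hsq : ∀ i j : Ω, i ≠ j → ρ ^ 2 * ⟪v i, v j⟫ ^ 2 = 1 := by
    intro i j hij
    have h := hangle i j hij
    have h2 : ⟪v i, v j⟫ ^ 2 = |⟪v i, v j⟫| ^ 2 := (sq_abs _).symm
    rw [h2, h]
    field_simp
  have hvne : ∀ i j : Ω, i ≠ j → ⟪v i, v j⟫ ≠ 0 := by
    intro i j hij h0
    have h := hsq i j hij
    rw [h0] at h
    norm_num at h
  -- cardinality of explicit triples
  have hcard3 : ∀ x y z : Ω, x ≠ y → x ≠ z → y ≠ z → ({x, y, z} : Finset Ω).card = 3 := by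
    intro x y z hxy hxz hyz
    rw [card_insert_of_notMem (by simp [hxy, hxz]), card_insert_of_notMem (by simp [hyz]),
      card_singleton]
  -- positivity on incoherent triples
  have hpos : ∀ x ∈ Γ, ∀ y ∈ Γ, ∀ z ∈ Γ, x ≠ y → x ≠ z → y ≠ z →
      0 < ⟪v x, v y⟫ * ⟪v x, v z⟫ * ⟪v y, v z⟫ := by
    intro x hx y hy z hz hxy hxz hyz
    have hsub : ({x, y, z} : Finset Ω) ⊆ Γ := by
      intro w hw
      simp only [mem_insert, mem_singleton] at hw
      rcases hw with rfl | rfl | rfl <;> assumption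
    have hmem : ({x, y, z} : Finset Ω) ∉ C := hinc _ hsub (hcard3 x y z hxy hxz hyz)
    have hnlt : ¬ ⟪v x, v y⟫ * ⟪v x, v z⟫ * ⟪v y, v z⟫ < 0 := fun hlt =>
      hmem ((hCdef x y z hxy hxz hyz).2 hlt)
    have hne : ⟪v x, v y⟫ * ⟪v x, v z⟫ * ⟪v y, v z⟫ ≠ 0 := by
      exact mul_ne_zero (mul_ne_zero (hvne x y hxy) (hvne x z hxz)) (hvne y z hyz)
    rcases hne.lt_or_gt with h | h
    · exact absurd h hnlt
    · exact h
  -- the switching signs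
  set s : Ω → ℝ := fun β => if β = α₀ then 1 else ρ * ⟪v α₀, v β⟫ with hs_def
  have hs2 : ∀ β : Ω, s β ^ 2 = 1 := by
    intro β
    by_cases h : β = α₀
    · simp [hs_def, h]
    · simp only [hs_def, if_neg h]
      rw [mul_pow]
      exact hsq α₀ β (fun hh => h hh.symm)
  set u : Ω → EuclideanSpace ℝ (Fin d) := fun β => s β • v β with hu_def
  have hvu : ∀ β : Ω, v β = s β • u β := by
    intro β
    simp only [hu_def, smul_smul]
    rw [show s β * s β = s β ^ 2 by ring, hs2]
    simp
  -- the Gram matrix of u on Γ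
  have hG : ∀ β ∈ Γ, ∀ δ ∈ Γ, ⟪u β, u δ⟫ = if β = δ then 1 else 1/ρ := by
    intro β hβ δ hδ
    have key : ⟪u β, u δ⟫ = s β * (s δ * ⟪v β, v δ⟫) := by
      simp only [hu_def]
      rw [real_inner_smul_left, real_inner_smul_right]
    by_cases h : β = δ
    · subst h
      rw [if_pos rfl, key, real_inner_self_eq_norm_sq, hunit β]
      have h2 := hs2 β
      nlinarith
    · rw [if_neg h, key]
      by_cases hb : β = α₀
      · rw [hb]
        have hδα : δ ≠ α₀ := fun hh => h (hb.trans hh.symm)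
        rw [show s α₀ = 1 from if_pos rfl, show s δ = ρ * ⟪v α₀, v δ⟫ from if_neg hδα,
          eq_div_iff hρne]
        have hq := hsq α₀ δ (fun hh => hδα hh.symm)
        linear_combination hq
      · by_cases hc : δ = α₀
        · rw [hc]
          have hβα : β ≠ α₀ := fun hh => h (hh.trans hc.symm)
          rw [show s α₀ = 1 from if_pos rfl, show s β = ρ * ⟪v α₀, v β⟫ from if_neg hβα,
            eq_div_iff hρne]
          have hq := hsq α₀ β (fun hh => hβα hh.symm)
          have hcomm : ⟪v β, v α₀⟫ = ⟪v α₀, v β⟫ := real_inner_comm _ _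
          linear_combination hq + (ρ^2*⟪v α₀, v β⟫) * hcomm
        · rw [show s β = ρ * ⟪v α₀, v β⟫ from if_neg hb,
            show s δ = ρ * ⟪v α₀, v δ⟫ from if_neg hc, eq_div_iff hρne]
          have hp := hpos α₀ hα₀ β hβ δ hδ (fun hh => hb hh.symm) (fun hh => hc hh.symm) h
          have hq1 := hsq α₀ β (fun hh => hb hh.symm)
          have hq2 := hsq α₀ δ (fun hh => hc hh.symm)
          have hq3 := hsq β δ h
          have hval : ρ^3 * (⟪v α₀, v β⟫ * ⟪v α₀, v δ⟫ * ⟪v β, v δ⟫) = 1 := by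
            have hsq6 : (ρ^3 * (⟪v α₀, v β⟫ * ⟪v α₀, v δ⟫ * ⟪v β, v δ⟫))^2 = 1 := by
              linear_combination (ρ^2*⟪v α₀, v δ⟫^2 * (ρ^2*⟪v β, v δ⟫^2)) * hq1
                + (ρ^2*⟪v β, v δ⟫^2) * hq2 + hq3
            nlinarith [mul_pos (pow_pos hρ0 3) hp]
          linear_combination hval
  -- t values
  set t : Ω → Ω → ℝ := fun γ β => ρ * ⟪v γ, u β⟫ with ht_def
  have ht2 : ∀ γ, γ ∉ Γ → ∀ β ∈ Γ, t γ β ^ 2 = 1 := by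
    intro γ hγ β hβ
    have hgb : γ ≠ β := fun h => hγ (h ▸ hβ)
    simp only [ht_def, hu_def, real_inner_smul_right]
    rw [mul_pow, mul_pow]
    have hq := hsq γ β hgb
    have h2 := hs2 β
    linear_combination (s β^2) * hq + h2
  have htinner : ∀ γ β : Ω, ⟪u β, v γ⟫ = t γ β / ρ := by
    intro γ β
    simp only [ht_def]
    rw [real_inner_comm]
    field_simp
  have hvinner : ∀ γ β : Ω, ⟪v γ, v β⟫ = s β * (t γ β / ρ) := by
    intro γ β
    have h1 := htinner γ β
    rw [real_inner_comm] at h1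
    rw [show ⟪v γ, v β⟫ = ⟪v γ, s β • u β⟫ from by rw [← hvu β],
      real_inner_smul_right, h1]
  clear_value s u t
  clear hs_def hu_def ht_def
  -- bilinear expansion of inner products of sums
  have hbil : ∀ c e : Ω → ℝ,
      ⟪∑ β ∈ Γ, c β • u β, ∑ δ ∈ Γ, e δ • u δ⟫ =
        (1 - 1/ρ) * (∑ β ∈ Γ, c β * e β) +
          (1/ρ) * ((∑ β ∈ Γ, c β) * (∑ δ ∈ Γ, e δ)) := by
    intro c e
    rw [sum_inner]
    have step : ∀ β ∈ Γ, ⟪c β • u β, ∑ δ ∈ Γ, e δ • u δ⟫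
        = (1/ρ) * (c β * ∑ δ ∈ Γ, e δ) + (1 - 1/ρ) * (c β * e β) := by
      intro β hβ
      rw [inner_sum]
      have e1 : ∀ δ ∈ Γ, ⟪c β • u β, e δ • u δ⟫
          = (1/ρ) * (c β * e δ) + (if δ = β then (1 - 1/ρ) * (c β * e δ) else 0) := by
        intro δ hδ
        rw [real_inner_smul_left, real_inner_smul_right, hG β hβ δ hδ]
        by_cases h : β = δ
        · subst h; norm_num; ring
        · rw [if_neg h, if_neg (Ne.symm h)]; ring
      rw [Finset.sum_congr rfl e1, Finset.sum_add_distrib,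
        Finset.sum_ite_eq' Γ β (fun δ => (1 - 1/ρ) * (c β * e δ)), if_pos hβ, ← Finset.mul_sum,
        ← Finset.mul_sum]
    rw [Finset.sum_congr rfl step, Finset.sum_add_distrib, ← Finset.mul_sum, ← Finset.mul_sum,
      ← Finset.sum_mul]
    ring
  have hsumv : ∀ (γ : Ω) (c : Ω → ℝ),
      ⟪∑ β ∈ Γ, c β • u β, v γ⟫ = ∑ β ∈ Γ, c β * (t γ β / ρ) := by
    intro γ c
    rw [sum_inner]
    refine Finset.sum_congr rfl fun β _ => ?_
    rw [real_inner_smul_left, htinner]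
  -- spanning property
  have hρfrac : (0:ℝ) < 1 - 1/ρ := by
    have : 1/ρ < 1 := by
      rw [div_lt_one hρ0]; exact hρ
    linarith
  have hspan : ∀ y : EuclideanSpace ℝ (Fin d), (∀ β ∈ Γ, ⟪u β, y⟫ = 0) → y = 0 := by
    have hli : LinearIndependent ℝ (fun β : {x // x ∈ Γ} => u ↑β) := by
      rw [Fintype.linearIndependent_iff]
      intro g hg i
      set g' : Ω → ℝ := fun β => if h : β ∈ Γ then g ⟨β, h⟩ else 0 with hg'_def
      have e : ∑ β ∈ Γ, g' β • u β = ∑ i : {x // x ∈ Γ}, g i • u ↑i := by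
        rw [Finset.univ_eq_attach, ← Finset.sum_attach Γ (fun β => g' β • u β)]
        refine Finset.sum_congr rfl fun i _ => ?_
        simp [hg'_def, i.2]
      have hsum : ∑ β ∈ Γ, g' β • u β = 0 := by rw [e, hg]
      have h0 : ⟪∑ β ∈ Γ, g' β • u β, ∑ β ∈ Γ, g' β • u β⟫ = 0 := by
        rw [hsum]; simp
      rw [hbil g' g'] at h0
      have hA : (0:ℝ) ≤ ∑ β ∈ Γ, g' β * g' β :=
        Finset.sum_nonneg fun β _ => mul_self_nonneg _
      have hB : (0:ℝ) ≤ (∑ β ∈ Γ, g' β) * (∑ β ∈ Γ, g' β) := mul_self_nonneg _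
      have hA0 : ∑ β ∈ Γ, g' β * g' β = 0 := by
        have h1 : (1 - 1/ρ) * (∑ β ∈ Γ, g' β * g' β) ≤ 0 := by
          have := mul_nonneg (le_of_lt (div_pos one_pos hρ0)) hB
          linarith
        have h2 : ∑ β ∈ Γ, g' β * g' β ≤ 0 := by
          rcases mul_nonpos_iff.mp h1 with ⟨_, h⟩ | ⟨h, _⟩
          · exact h
          · linarith
        linarith
      have hzero : ∀ β ∈ Γ, g' β * g' β = 0 :=
        (Finset.sum_eq_zero_iff_of_nonneg fun β _ => mul_self_nonneg _).1 hA0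
      have := hzero i i.2
      have hgi : g' ↑i = 0 := by
        rcases mul_self_eq_zero.1 this with h
        exact h
      rw [hg'_def] at hgi
      simpa [i.2] using hgi
    have hspan_top : Submodule.span ℝ (Set.range (fun β : {x // x ∈ Γ} => u ↑β)) = ⊤ := by
      refine hli.span_eq_top_of_card_eq_finrank' ?_
      simp [Fintype.card_coe, hΓcard]
    intro y hy
    have hmem : y ∈ Submodule.span ℝ (Set.range (fun β : {x // x ∈ Γ} => u ↑β)) := by
      rw [hspan_top]; trivial
    obtain ⟨c, hc⟩ := (Submodule.mem_span_range_iff_exists_fun ℝ).1 hmem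
    have h0 : ⟪y, y⟫ = 0 := by
      nth_rewrite 1 [← hc]
      rw [sum_inner]
      refine Finset.sum_eq_zero fun i _ => ?_
      rw [real_inner_smul_left, hy _ i.2, mul_zero]
    exact inner_self_eq_zero.1 h0
  -- master equation
  have hmaster : ∀ γ, γ ∉ Γ →
      ρ * (ρ - 1) = (d:ℝ) - (∑ β ∈ Γ, t γ β)^2/(ρ-1+(d:ℝ)) ∧
      ((∑ β ∈ Γ, t γ β) = 0 → v γ = ∑ β ∈ Γ, (t γ β / (ρ-1)) • u β) := by
    intro γ hγ
    set S := ∑ δ ∈ Γ, t γ δ with hS_def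
    clear_value S
    obtain ⟨m, hm_def⟩ : ∃ m : ℝ, m = S / (ρ - 1 + (d:ℝ)) := ⟨_, rfl⟩
    obtain ⟨c, hc_def⟩ : ∃ c : Ω → ℝ, c = fun β => (t γ β - m)/(ρ-1) := ⟨_, rfl⟩
    have hmS : m * (ρ - 1 + (d:ℝ)) = S := by rw [hm_def]; field_simp
    have hcsum : ∑ β ∈ Γ, c β = m := by
      simp only [hc_def]
      rw [← Finset.sum_div, Finset.sum_sub_distrib, Finset.sum_const, hΓcard, nsmul_eq_mul,
        div_eq_iff hρ1ne]
      linear_combination -hmS - hS_def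
    have hw : v γ = ∑ β ∈ Γ, c β • u β := by
      have hz : ∀ δ ∈ Γ, ⟪u δ, (∑ β ∈ Γ, c β • u β) - v γ⟫ = 0 := by
        intro δ hδ
        rw [inner_sub_right, htinner]
        have e0 : ⟪u δ, ∑ β ∈ Γ, c β • u β⟫ = ∑ β ∈ Γ, c β * ⟪u δ, u β⟫ := by
          rw [inner_sum]
          exact Finset.sum_congr rfl fun β _ => by rw [real_inner_smul_right]
        rw [e0]
        have e1 : ∀ β ∈ Γ, c β * ⟪u δ, u β⟫
            = (1/ρ) * c β + (if β = δ then (1 - 1/ρ) * c β else 0) := by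
          intro β hβ
          rw [hG δ hδ β hβ]
          by_cases h : δ = β
          · subst h; rw [if_pos rfl, if_pos rfl]; ring
          · rw [if_neg h, if_neg (Ne.symm h)]; ring
        rw [Finset.sum_congr rfl e1, Finset.sum_add_distrib,
          Finset.sum_ite_eq' Γ δ (fun β => (1 - 1/ρ) * c β), if_pos hδ, ← Finset.mul_sum, hcsum]
        simp only [hc_def]
        field_simp
        ring
      have := hspan _ hz
      have h2 := sub_eq_zero.1 this
      exact h2.symm
    have hnorm : ρ = (ρ - 1) * (∑ β ∈ Γ, c β * c β) + m * m := by
      have h1 : ⟪v γ, v γ⟫ = 1 := by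
        rw [real_inner_self_eq_norm_sq, hunit]; norm_num
      rw [hw, hbil c c, hcsum] at h1
      field_simp at h1
      simp only [pow_two] at h1
      linear_combination -h1
    have hsumc2 : (∑ β ∈ Γ, c β * c β) * ((ρ-1)*(ρ-1))
        = (d:ℝ) - 2*(m*S) + (d:ℝ)*(m*m) := by
      rw [Finset.sum_mul]
      have e : ∀ β ∈ Γ, (c β * c β) * ((ρ-1)*(ρ-1)) = 1 - 2*(m * t γ β) + m*m := by
        intro β hβ
        have h2 := ht2 γ hγ β hβ
        have hA : c β * (ρ-1) = t γ β - m := by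
          simp only [hc_def]
          field_simp
        linear_combination (c β * (ρ-1) + (t γ β - m)) * hA + h2
      rw [Finset.sum_congr rfl e]
      rw [Finset.sum_add_distrib, Finset.sum_sub_distrib, Finset.sum_const, hΓcard,
        nsmul_eq_mul, Finset.sum_const, hΓcard, nsmul_eq_mul]
      have e2 : ∑ i ∈ Γ, 2*(m * t γ i) = 2*(m*S) := by
        rw [hS_def, Finset.mul_sum, Finset.mul_sum]
      rw [e2]
      ring
    have key : ρ * (ρ - 1) = (d:ℝ) - m * S := by
      linear_combination (ρ-1) * hnorm + hsumc2 + m * hmS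
    constructor
    · have e3 : S/(ρ-1+(d:ℝ)) * S = S^2/(ρ-1+(d:ℝ)) := by ring
      rw [key, hm_def, e3]
    · intro hS0
      rw [hw]
      refine Finset.sum_congr rfl fun β _ => ?_
      simp only [hc_def, hm_def, hS0, zero_div, sub_zero]
  -- triple sets are permutation invariant
  have hperm : ∀ x y z : Ω, ({x, y, z} : Finset Ω) = ({z, x, y} : Finset Ω) := by
    intro x y z
    ext w
    simp only [mem_insert, mem_singleton]
    tauto
  -- degenerate triples are not in C
  have hpairnot : ∀ (T : Finset Ω) (x y : Ω), T = {x, y} → T ∉ C := by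
    intro T x y hT hmem
    have h3 := hC3 _ hmem
    rw [hT] at h3
    have h2 : ({x, y} : Finset Ω).card ≤ 2 := by
      refine le_trans (card_insert_le _ _) ?_
      simp
    omega
  have hdeg : ∀ x y : Ω, ({x, y, y} : Finset Ω) ∉ C := by
    intro x y
    exact hpairnot _ x y (by ext w; simp only [mem_insert, mem_singleton]; tauto)
  -- pm one values
  have hpm : ∀ x : ℝ, x ^ 2 = 1 → x = 1 ∨ x = -1 := by
    intro x hx
    have : (x - 1) * (x + 1) = 0 := by nlinarith
    rcases mul_eq_zero.1 this with h | h
    · left; linarith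
    · right; linarith
  -- characterization of coherent triples with one vertex outside
  have hchar : ∀ γ, γ ∉ Γ → ∀ α ∈ Γ, ∀ β ∈ Γ, α ≠ β →
      (({γ, α, β} : Finset Ω) ∈ C ↔ t γ α * t γ β = -1) := by
    intro γ hγ α hα β hβ hab
    have hga : γ ≠ α := fun h => hγ (h ▸ hα)
    have hgb : γ ≠ β := fun h => hγ (h ▸ hβ)
    rw [hCdef γ α β hga hgb hab]
    have e1 := hvinner γ α
    have e2 := hvinner γ β
    have e3 : ⟪v α, v β⟫ = s α * s β * (1/ρ) := by
      rw [show ⟪v α, v β⟫ = ⟪s α • u α, s β • u β⟫ from by rw [← hvu α, ← hvu β],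
        real_inner_smul_left, real_inner_smul_right, hG α hα β hβ, if_neg hab]
      ring
    rw [e1, e2, e3]
    have hsa := hs2 α
    have hsb := hs2 β
    have hta := ht2 γ hγ α hα
    have htb := ht2 γ hγ β hβ
    have hexpr : s α * (t γ α / ρ) * (s β * (t γ β / ρ)) * (s α * s β * (1/ρ))
        = (t γ α * t γ β) * (1/ρ^3) := by
      linear_combination (s β^2 * (t γ α * t γ β)/ρ^3) * hsa + ((t γ α * t γ β)/ρ^3) * hsb
    rw [hexpr]
    have hpos3 : (0:ℝ) < 1/ρ^3 := by positivity
    constructor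
    · intro hlt
      have hlt2 : t γ α * t γ β < 0 := by
        by_contra hcon
        push_neg at hcon
        have := mul_nonneg hcon hpos3.le
        linarith
      have hsq1 : (t γ α * t γ β)^2 = 1 := by
        rw [mul_pow, hta, htb]; norm_num
      rcases hpm _ hsq1 with h | h
      · linarith
      · exact h
    · intro heq
      rw [heq]
      linarith
  -- counting lemma inside Γ
  have hcount2 : ∀ γ, γ ∉ Γ → ∀ α ∈ Γ,
      (2:ℝ) * ((Γ.filter fun β => t γ α * t γ β = -1).card : ℝ)
        = (d:ℝ) - t γ α * (∑ β ∈ Γ, t γ β) := by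
    intro γ hγ α hα
    have hsplit := Finset.sum_filter_add_sum_filter_not Γ (fun β => t γ α * t γ β = -1)
      (fun β => t γ α * t γ β)
    have h1 : ∑ β ∈ Γ.filter (fun β => t γ α * t γ β = -1), t γ α * t γ β
        = -(((Γ.filter fun β => t γ α * t γ β = -1).card : ℕ) : ℝ) := by
      rw [Finset.sum_congr rfl (fun β hβ => (Finset.mem_filter.1 hβ).2), Finset.sum_const,
        nsmul_eq_mul]
      ring
    have h2 : ∑ β ∈ Γ.filter (fun β => ¬(t γ α * t γ β = -1)), t γ α * t γ β
        = (((Γ.filter fun β => ¬(t γ α * t γ β = -1)).card : ℕ) : ℝ) := by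
      have e : ∀ β ∈ Γ.filter (fun β => ¬(t γ α * t γ β = -1)), t γ α * t γ β = 1 := by
        intro β hβ
        obtain ⟨hβΓ, hne⟩ := Finset.mem_filter.1 hβ
        have hsq1 : (t γ α * t γ β)^2 = 1 := by
          rw [mul_pow, ht2 γ hγ α hα, ht2 γ hγ β hβΓ]; norm_num
        rcases hpm _ hsq1 with h | h
        · exact h
        · exact absurd h hne
      rw [Finset.sum_congr rfl e, Finset.sum_const, nsmul_eq_mul, mul_one]
    have hmulsum : ∑ β ∈ Γ, t γ α * t γ β = t γ α * ∑ β ∈ Γ, t γ β := by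
      rw [Finset.mul_sum]
    have hcards := Finset.card_filter_add_card_filter_not
      (s := Γ) (p := fun β => t γ α * t γ β = -1)
    rw [hΓcard] at hcards
    have hcardsR : (((Γ.filter fun β => t γ α * t γ β = -1).card : ℕ) : ℝ)
        + (((Γ.filter fun β => ¬(t γ α * t γ β = -1)).card : ℕ) : ℝ) = (d:ℝ) := by
      exact_mod_cast hcards
    rw [h1, h2, hmulsum] at hsplit
    linarith
  -- Γ ∩ Sset as a filter
  have hinterS : ∀ γ, γ ∉ Γ → ∀ α ∈ Γ,
      Γ ∩ Sset C γ α = Γ.filter fun β => t γ α * t γ β = -1 := by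
    intro γ hγ α hα
    ext β
    simp only [mem_inter, mem_filter, Sset, mem_univ, true_and]
    constructor
    · rintro ⟨hβ, hmem⟩
      exact ⟨hβ, (hchar γ hγ α hα β hβ (by rintro rfl; exact (hdeg γ α) hmem)).1 hmem⟩
    · rintro ⟨hβ, hval⟩
      refine ⟨hβ, ?_⟩
      have hne : α ≠ β := by
        rintro rfl
        rw [show t γ α * t γ α = t γ α ^ 2 by ring, ht2 γ hγ α hα] at hval
        norm_num at hval
      exact (hchar γ hγ α hα β hβ hne).2 hval
  -- S γ₀ = 0
  have hS₀ : ∑ β ∈ Γ, t γ₀ β = 0 := by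
    have h1 := hcount2 γ₀ hγ₀ α₀ hα₀
    rw [← hinterS γ₀ hγ₀ α₀ hα₀] at h1
    have h2 : (2:ℝ) * ((Γ ∩ Sset C γ₀ α₀).card : ℝ) = (d:ℝ) := by exact_mod_cast hhalf₀
    have h3 : t γ₀ α₀ * (∑ β ∈ Γ, t γ₀ β) = 0 := by linarith
    have h4 : t γ₀ α₀ ≠ 0 := by
      intro h0
      have := ht2 γ₀ hγ₀ α₀ hα₀
      rw [h0] at this; norm_num at this
    exact (mul_eq_zero.1 h3).resolve_left h4
  -- d = ρ(ρ-1)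
  have hdρ : (d:ℝ) = ρ * (ρ - 1) := by
    have := (hmaster γ₀ hγ₀).1
    rw [hS₀] at this
    simp at this
    linarith
  -- all γ outside have balanced partitions
  have hSall : ∀ γ, γ ∉ Γ → ∑ β ∈ Γ, t γ β = 0 := by
    intro γ hγ
    have h := (hmaster γ hγ).1
    rw [← hdρ] at h
    have h2 : (∑ β ∈ Γ, t γ β)^2 / (ρ - 1 + (d:ℝ)) = 0 := by linarith
    field_simp at h2
    simpa using h2
  -- representation of outside vectors
  have hrepr : ∀ γ, γ ∉ Γ → v γ = ∑ β ∈ Γ, (t γ β / (ρ-1)) • u β := by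
    intro γ hγ
    exact (hmaster γ hγ).2 (hSall γ hγ)
  -- inner products of two outside vectors
  have houtinner : ∀ γ, γ ∉ Γ → ∀ k, k ∉ Γ →
      ⟪v γ, v k⟫ = (∑ β ∈ Γ, t γ β * t k β) / (ρ * (ρ - 1)) := by
    intro γ hγ k hk
    rw [hrepr γ hγ, hrepr k hk, hbil]
    rw [← Finset.sum_div, ← Finset.sum_div, hSall γ hγ, hSall k hk]
    have e3 : ∑ β ∈ Γ, t γ β / (ρ-1) * (t k β / (ρ-1))
        = (∑ β ∈ Γ, t γ β * t k β) / ((ρ-1)*(ρ-1)) := by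
      rw [Finset.sum_div]
      refine Finset.sum_congr rfl fun β _ => ?_
      field_simp
    rw [e3]
    field_simp
    ring
  -- squared correlation of outside pairs
  have hPsq : ∀ γ, γ ∉ Γ → ∀ k, k ∉ Γ → γ ≠ k →
      (∑ β ∈ Γ, t γ β * t k β)^2 = (ρ-1)^2 := by
    intro γ hγ k hk hγk
    have h1 := hsq γ k hγk
    rw [houtinner γ hγ k hk] at h1
    rw [div_pow] at h1
    field_simp at h1
    nlinarith [h1]
  -- count of Γ-elements coherent with an outside pair
  have houtcount : ∀ γ, γ ∉ Γ → ∀ k, k ∉ Γ → γ ≠ k →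
      (2:ℝ) * ((Γ.filter fun α => ({γ, k, α} : Finset Ω) ∈ C).card : ℝ) = (d:ℝ) - (ρ-1) := by
    intro γ hγ k hk hγk
    have hP2 := hPsq γ hγ k hk hγk
    have hposK : (0:ℝ) < ρ^3*(ρ-1) := by positivity
    have hcc : ∀ α ∈ Γ, (({γ, k, α} : Finset Ω) ∈ C ↔
        (∑ β ∈ Γ, t γ β * t k β) * (t γ α * t k α) < 0) := by
      intro α hα
      have hga : γ ≠ α := fun h => hγ (h ▸ hα)
      have hka : k ≠ α := fun h => hk (h ▸ hα)
      have hi1 : ρ*(ρ-1) * ⟪v γ, v k⟫ = ∑ β ∈ Γ, t γ β * t k β := by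
        rw [houtinner γ hγ k hk]
        field_simp
      have hi2 : ρ * ⟪v γ, v α⟫ = s α * t γ α := by
        rw [hvinner γ α]; field_simp
      have hi3 : ρ * ⟪v k, v α⟫ = s α * t k α := by
        rw [hvinner k α]; field_simp
      have hsa := hs2 α
      have hXc : (ρ^3*(ρ-1)) * (⟪v γ, v k⟫ * ⟪v γ, v α⟫ * ⟪v k, v α⟫)
          = (∑ β ∈ Γ, t γ β * t k β) * (t γ α * t k α) := by
        linear_combination (ρ^2*(⟪v γ, v α⟫ * ⟪v k, v α⟫)) * hi1
          + (ρ*⟪v k, v α⟫*(∑ β ∈ Γ, t γ β * t k β)) * hi2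
          + ((∑ β ∈ Γ, t γ β * t k β)*(s α*t γ α)) * hi3
          + ((∑ β ∈ Γ, t γ β * t k β)*(t γ α*t k α)) * hsa
      rw [hCdef γ k α hγk hga hka]
      constructor
      · intro h
        rw [← hXc]
        exact mul_neg_of_pos_of_neg hposK h
      · intro h
        rw [← hXc] at h
        by_contra hcon
        push_neg at hcon
        have := mul_nonneg hposK.le hcon
        linarith
    -- now the counting
    have hsplit := Finset.sum_filter_add_sum_filter_not Γ
      (fun α => ({γ, k, α} : Finset Ω) ∈ C)
      (fun α => (∑ β ∈ Γ, t γ β * t k β) * (t γ α * t k α))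
    have hval : ∀ α ∈ Γ, ((∑ β ∈ Γ, t γ β * t k β) * (t γ α * t k α))^2 = (ρ-1)^2 := by
      intro α hα
      have h1 : (t γ α * t k α)^2 = 1 := by
        rw [mul_pow, ht2 γ hγ α hα, ht2 k hk α hα]; norm_num
      rw [mul_pow, hP2, h1, mul_one]
    have h1 : ∑ α ∈ Γ.filter (fun α => ({γ, k, α} : Finset Ω) ∈ C),
        (∑ β ∈ Γ, t γ β * t k β) * (t γ α * t k α)
        = -(ρ-1) * (((Γ.filter fun α => ({γ, k, α} : Finset Ω) ∈ C).card : ℕ) : ℝ) := by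
      have e : ∀ α ∈ Γ.filter (fun α => ({γ, k, α} : Finset Ω) ∈ C),
          (∑ β ∈ Γ, t γ β * t k β) * (t γ α * t k α) = -(ρ-1) := by
        intro α hα'
        obtain ⟨hαΓ, hmem⟩ := Finset.mem_filter.1 hα'
        have hlt := (hcc α hαΓ).1 hmem
        have hv := hval α hαΓ
        have hfac : ((∑ β ∈ Γ, t γ β * t k β) * (t γ α * t k α) - (ρ-1))
            * ((∑ β ∈ Γ, t γ β * t k β) * (t γ α * t k α) + (ρ-1)) = 0 := by
          linear_combination hv
        rcases mul_eq_zero.1 hfac with h | h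
        · linarith
        · linarith
      rw [Finset.sum_congr rfl e, Finset.sum_const, nsmul_eq_mul]
      ring
    have h2 : ∑ α ∈ Γ.filter (fun α => ¬(({γ, k, α} : Finset Ω) ∈ C)),
        (∑ β ∈ Γ, t γ β * t k β) * (t γ α * t k α)
        = (ρ-1) * (((Γ.filter fun α => ¬(({γ, k, α} : Finset Ω) ∈ C)).card : ℕ) : ℝ) := by
      have e : ∀ α ∈ Γ.filter (fun α => ¬(({γ, k, α} : Finset Ω) ∈ C)),
          (∑ β ∈ Γ, t γ β * t k β) * (t γ α * t k α) = (ρ-1) := by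
        intro α hα'
        obtain ⟨hαΓ, hmem⟩ := Finset.mem_filter.1 hα'
        have hge : ¬((∑ β ∈ Γ, t γ β * t k β) * (t γ α * t k α) < 0) :=
          fun hlt => hmem ((hcc α hαΓ).2 hlt)
        push_neg at hge
        have hv := hval α hαΓ
        have hfac : ((∑ β ∈ Γ, t γ β * t k β) * (t γ α * t k α) - (ρ-1))
            * ((∑ β ∈ Γ, t γ β * t k β) * (t γ α * t k α) + (ρ-1)) = 0 := by
          linear_combination hv
        rcases mul_eq_zero.1 hfac with h | h
        · linarith
        · linarith
      rw [Finset.sum_congr rfl e, Finset.sum_const, nsmul_eq_mul]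
      ring
    have htot : ∑ α ∈ Γ, (∑ β ∈ Γ, t γ β * t k β) * (t γ α * t k α) = (ρ-1)^2 := by
      rw [← Finset.mul_sum]
      have e4 : (∑ β ∈ Γ, t γ β * t k β) * (∑ α ∈ Γ, t γ α * t k α)
          = (∑ β ∈ Γ, t γ β * t k β)^2 := by ring
      rw [e4, hP2]
    have hcards := Finset.card_filter_add_card_filter_not
      (s := Γ) (p := fun α => ({γ, k, α} : Finset Ω) ∈ C)
    rw [hΓcard] at hcards
    have hcardsR : (((Γ.filter fun α => ({γ, k, α} : Finset Ω) ∈ C).card : ℕ) : ℝ)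
        + (((Γ.filter fun α => ¬(({γ, k, α} : Finset Ω) ∈ C)).card : ℕ) : ℝ) = (d:ℝ) := by
      exact_mod_cast hcards
    rw [h1, h2, htot] at hsplit
    -- (ρ-1)^2 = -(ρ-1)cF + (ρ-1)cFc,  cF + cFc = d
    have hkey : (ρ-1) * ((d:ℝ) - (ρ-1)
        - 2*(((Γ.filter fun α => ({γ, k, α} : Finset Ω) ∈ C).card : ℕ) : ℝ)) = 0 := by
      linear_combination hsplit - (ρ-1) * hcardsR
    rcases mul_eq_zero.1 hkey with h | h
    · exact absurd h hρ1ne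
    · linarith
  -- the `a`-count lemma
  have hacount : ∀ i j : Ω, i ≠ j →
      (univ.filter fun k => ({i, j, k} : Finset Ω) ∈ C).card = a := by
    intro i j hij
    have hpair : ({i, j} : Finset Ω).card = 2 := by
      rw [card_insert_of_notMem (by simp [hij]), card_singleton]
    rw [← ha {i, j} hpair]
    apply Finset.card_bij (fun k _ => ({i, j, k} : Finset Ω))
    · intro k hk
      simp only [mem_filter, mem_univ, true_and] at hk
      simp only [mem_filter]
      refine ⟨hk, ?_⟩
      intro w hw
      simp only [mem_insert, mem_singleton] at hw ⊢
      tauto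
    · intro k1 hk1 k2 hk2 heq
      simp only [mem_filter, mem_univ, true_and] at hk1 hk2
      have h1i : k1 ≠ i := by
        intro hne
        refine hpairnot {i, j, k1} i j ?_ hk1
        rw [hne]
        ext w; simp only [mem_insert, mem_singleton]; tauto
      have h1j : k1 ≠ j := by
        intro hne
        refine hpairnot {i, j, k1} i j ?_ hk1
        rw [hne]
        ext w; simp only [mem_insert, mem_singleton]; tauto
      have hmem : k1 ∈ ({i, j, k2} : Finset Ω) := by
        rw [← heq]; simp
      simp only [mem_insert, mem_singleton] at hmem
      tauto
    · intro c hc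
      simp only [mem_filter] at hc
      obtain ⟨hcC, hsub⟩ := hc
      have hcard := hC3 c hcC
      have hone : (c \ {i, j}).card = 1 := by
        rw [card_sdiff_of_subset hsub, hcard, hpair]
      obtain ⟨k, hk⟩ := Finset.card_eq_one.1 hone
      have hkmem : k ∈ c \ ({i, j} : Finset Ω) := by
        rw [hk]; exact mem_singleton_self k
      obtain ⟨hkc, hknot⟩ := mem_sdiff.1 hkmem
      simp only [mem_insert, mem_singleton, not_or] at hknot
      have hceq : ({i, j, k} : Finset Ω) = c := by
        apply Finset.eq_of_subset_of_card_le
        · intro w hw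
          simp only [mem_insert, mem_singleton] at hw
          rcases hw with rfl | rfl | rfl
          · exact hsub (by simp)
          · exact hsub (by simp)
          · exact hkc
        · rw [hcard, hcard3 i j k hij (Ne.symm hknot.1) (Ne.symm hknot.2)]
      refine ⟨k, ?_, hceq⟩
      simp only [mem_filter, mem_univ, true_and]
      rw [hceq]
      exact hcC
  -- pairs inside Γ only have outside coherent completions
  have hpairΓ : ∀ α ∈ Γ, ∀ β ∈ Γ, α ≠ β →
      (((univ \ Γ).filter fun γ => ({α, β, γ} : Finset Ω) ∈ C).card : ℝ) = (a:ℝ) := by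
    intro α hα β hβ hab
    have h := hacount α β hab
    have hsplit : (univ : Finset Ω).filter (fun γ => ({α, β, γ} : Finset Ω) ∈ C)
        = Γ.filter (fun γ => ({α, β, γ} : Finset Ω) ∈ C)
          ∪ (univ \ Γ).filter (fun γ => ({α, β, γ} : Finset Ω) ∈ C) := by
      rw [← Finset.filter_union, Finset.union_sdiff_of_subset (subset_univ Γ)]
    have hdisj : Disjoint (Γ.filter (fun γ => ({α, β, γ} : Finset Ω) ∈ C))
        ((univ \ Γ).filter (fun γ => ({α, β, γ} : Finset Ω) ∈ C)) :=
      Finset.disjoint_filter_filter Finset.disjoint_sdiff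
    have hΓ0 : Γ.filter (fun γ => ({α, β, γ} : Finset Ω) ∈ C) = ∅ := by
      rw [Finset.filter_eq_empty_iff]
      intro k hk hmem
      refine hinc {α, β, k} ?_ (hC3 _ hmem) hmem
      intro w hw
      simp only [mem_insert, mem_singleton] at hw
      rcases hw with rfl | rfl | rfl <;> assumption
    rw [hsplit, Finset.card_union_of_disjoint hdisj, hΓ0, card_empty, zero_add] at h
    exact_mod_cast h
  have hdn : d ≤ n := by
    rw [← hn, ← hΓcard]
    exact card_le_card (subset_univ Γ)
  have hndcard : (((univ \ Γ) : Finset Ω).card : ℝ) = (n:ℝ) - (d:ℝ) := by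
    rw [card_sdiff_of_subset (subset_univ Γ), card_univ, hn, hΓcard]
    push_cast [Nat.cast_sub hdn]
    ring
  -- Equation 2 : 2 (d²-d) a = (n-d) d²
  have htriple : ∀ γ, γ ∉ Γ →
      2 * (∑ α ∈ Γ, ∑ β ∈ Γ, (if ({α, β, γ} : Finset Ω) ∈ C then (1:ℝ) else 0)) = (d:ℝ)^2 := by
    intro γ hγ
    have hS0 := hSall γ hγ
    have key2 : ∀ α ∈ Γ, ∀ β ∈ Γ,
        2 * (if ({α, β, γ} : Finset Ω) ∈ C then (1:ℝ) else 0) = 1 - t γ α * t γ β := by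
      intro α hα β hβ
      by_cases h : α = β
      · subst h
        rw [if_neg (hpairnot {α, α, γ} α γ
            (by ext w; simp only [mem_insert, mem_singleton]; tauto)),
          show t γ α * t γ α = t γ α^2 by ring, ht2 γ hγ α hα]
        ring
      · rw [hperm α β γ]
        by_cases hc : ({γ, α, β} : Finset Ω) ∈ C
        · rw [if_pos hc, (hchar γ hγ α hα β hβ h).1 hc]
          ring
        · rw [if_neg hc]
          have hne2 : t γ α * t γ β ≠ -1 := fun he => hc ((hchar γ hγ α hα β hβ h).2 he)
          have hsq1 : (t γ α * t γ β)^2 = 1 := by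
            rw [mul_pow, ht2 γ hγ α hα, ht2 γ hγ β hβ]; norm_num
          rcases hpm _ hsq1 with h1 | h1
          · rw [h1]; ring
          · exact absurd h1 hne2
    have step : ∀ α ∈ Γ,
        2 * ∑ β ∈ Γ, (if ({α, β, γ} : Finset Ω) ∈ C then (1:ℝ) else 0) = (d:ℝ) := by
      intro α hα
      rw [Finset.mul_sum, Finset.sum_congr rfl (fun β hβ => key2 α hα β hβ),
        Finset.sum_sub_distrib, Finset.sum_const, hΓcard, nsmul_eq_mul, mul_one,
        ← Finset.mul_sum, hS0, mul_zero, sub_zero]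
    rw [Finset.mul_sum, Finset.sum_congr rfl step, Finset.sum_const, hΓcard, nsmul_eq_mul]
    ring
  have hEq2 : 2 * ((d:ℝ)^2 - d) * a = ((n:ℝ) - d) * d^2 := by
    have inner1 : ∀ α ∈ Γ, ∀ β ∈ Γ,
        ∑ γ ∈ univ \ Γ, (if ({α, β, γ} : Finset Ω) ∈ C then (1:ℝ) else 0)
          = if α = β then 0 else (a:ℝ) := by
      intro α hα β hβ
      by_cases h : α = β
      · subst h
        rw [if_pos rfl]
        refine Finset.sum_eq_zero fun γ hγ => ?_
        rw [if_neg (hpairnot {α, α, γ} α γ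
          (by ext w; simp only [mem_insert, mem_singleton]; tauto))]
      · rw [if_neg h, Finset.sum_boole]
        exact hpairΓ α hα β hβ h
    have e : ∀ α ∈ Γ, ∑ β ∈ Γ, (if α = β then (0:ℝ) else (a:ℝ)) = (d:ℝ)*a - a := by
      intro α hα
      have e0 : ∀ β ∈ Γ, (if α = β then (0:ℝ) else (a:ℝ))
          = (a:ℝ) - (if α = β then (a:ℝ) else 0) := by
        intro β hβ
        by_cases h : α = β <;> simp [h]
      rw [Finset.sum_congr rfl e0, Finset.sum_sub_distrib, Finset.sum_const, hΓcard,
        nsmul_eq_mul, Finset.sum_ite_eq Γ α (fun _ => (a:ℝ)), if_pos hα]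
    have h1 : ∑ α ∈ Γ, ∑ β ∈ Γ, ∑ γ ∈ univ \ Γ,
        (if ({α, β, γ} : Finset Ω) ∈ C then (1:ℝ) else 0) = (d:ℝ) * ((d:ℝ)*a - a) := by
      have per : ∀ α ∈ Γ, ∑ β ∈ Γ, ∑ γ ∈ univ \ Γ,
          (if ({α, β, γ} : Finset Ω) ∈ C then (1:ℝ) else 0) = (d:ℝ)*a - a := by
        intro α hα
        rw [Finset.sum_congr rfl (fun β hβ => inner1 α hα β hβ)]
        exact e α hα
      rw [Finset.sum_congr rfl per, Finset.sum_const, hΓcard, nsmul_eq_mul]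
    have hswap : ∑ α ∈ Γ, ∑ β ∈ Γ, ∑ γ ∈ univ \ Γ,
        (if ({α, β, γ} : Finset Ω) ∈ C then (1:ℝ) else 0)
        = ∑ γ ∈ univ \ Γ, ∑ α ∈ Γ, ∑ β ∈ Γ,
            (if ({α, β, γ} : Finset Ω) ∈ C then (1:ℝ) else 0) := by
      rw [Finset.sum_congr rfl (fun α _ => Finset.sum_comm), Finset.sum_comm]
    have h3 : ∑ γ ∈ univ \ Γ, 2 * (∑ α ∈ Γ, ∑ β ∈ Γ,
        (if ({α, β, γ} : Finset Ω) ∈ C then (1:ℝ) else 0)) = ((n:ℝ)-d) * (d:ℝ)^2 := by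
      rw [Finset.sum_congr rfl (fun γ hγ => htriple γ (Finset.mem_sdiff.1 hγ).2),
        Finset.sum_const, nsmul_eq_mul, hndcard]
    have h4 : ∑ γ ∈ univ \ Γ, 2 * (∑ α ∈ Γ, ∑ β ∈ Γ,
        (if ({α, β, γ} : Finset Ω) ∈ C then (1:ℝ) else 0)) = 2 * ((d:ℝ) * ((d:ℝ)*a - a)) := by
      rw [← Finset.mul_sum, ← hswap, h1]
    linear_combination h3 - h4
  -- Equation 1 : d (2a - d) = (n - d - 1)(d - ρ + 1)
  have hγ₀mem : γ₀ ∈ univ \ Γ := Finset.mem_sdiff.2 ⟨mem_univ _, hγ₀⟩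
  have hΩ₂card : ((((univ \ Γ).erase γ₀).card : ℕ) : ℝ) = (n:ℝ) - d - 1 := by
    rw [card_erase_of_mem hγ₀mem]
    have hpos : 0 < (univ \ Γ).card := Finset.card_pos.2 ⟨γ₀, hγ₀mem⟩
    push_cast [Nat.cast_sub (Nat.one_le_iff_ne_zero.2 (Nat.pos_iff_ne_zero.1 hpos))]
    rw [hndcard]
  have hEq1 : (d:ℝ) * (2 * a - d) = ((n:ℝ) - d - 1) * ((d:ℝ) - ρ + 1) := by
    have hperα : ∀ α ∈ Γ, 2 * ∑ k ∈ (univ \ Γ).erase γ₀,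
        (if ({α, γ₀, k} : Finset Ω) ∈ C then (1:ℝ) else 0) = 2*(a:ℝ) - d := by
      intro α hα
      have hαγ : α ≠ γ₀ := fun h => hγ₀ (h ▸ hα)
      have htot : (((univ.filter fun k => ({α, γ₀, k} : Finset Ω) ∈ C).card : ℕ) : ℝ)
          = (a:ℝ) := by exact_mod_cast hacount α γ₀ hαγ
      rw [← Finset.sum_boole] at htot
      have hsplitU : ∑ k ∈ (univ : Finset Ω),
          (if ({α, γ₀, k} : Finset Ω) ∈ C then (1:ℝ) else 0)
          = ∑ k ∈ Γ, (if ({α, γ₀, k} : Finset Ω) ∈ C then (1:ℝ) else 0)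
            + ∑ k ∈ univ \ Γ, (if ({α, γ₀, k} : Finset Ω) ∈ C then (1:ℝ) else 0) := by
        rw [← Finset.sum_union (Finset.disjoint_sdiff),
          Finset.union_sdiff_of_subset (subset_univ Γ)]
      have hΓhalf : 2 * ∑ k ∈ Γ, (if ({α, γ₀, k} : Finset Ω) ∈ C then (1:ℝ) else 0)
          = (d:ℝ) := by
        rw [Finset.sum_boole]
        have hfe : Γ.filter (fun k => ({α, γ₀, k} : Finset Ω) ∈ C)
            = Γ.filter (fun k => t γ₀ α * t γ₀ k = -1) := by
          apply Finset.filter_congr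
          intro k hk
          constructor
          · intro hmem
            have hαk : α ≠ k := by
              rintro rfl
              exact hpairnot {α, γ₀, α} α γ₀
                (by ext w; simp only [mem_insert, mem_singleton]; tauto) hmem
            have : ({γ₀, α, k} : Finset Ω) ∈ C := by
              rwa [show ({γ₀, α, k} : Finset Ω) = {α, γ₀, k} from Finset.insert_comm γ₀ α {k}]
            exact (hchar γ₀ hγ₀ α hα k hk hαk).1 this
          · intro hval
            have hαk : α ≠ k := by
              rintro rfl
              rw [show t γ₀ α * t γ₀ α = t γ₀ α^2 by ring, ht2 γ₀ hγ₀ α hα] at hval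
              norm_num at hval
            have := (hchar γ₀ hγ₀ α hα k hk hαk).2 hval
            rwa [show ({γ₀, α, k} : Finset Ω) = {α, γ₀, k} from Finset.insert_comm γ₀ α {k}]
              at this
        rw [hfe, hcount2 γ₀ hγ₀ α hα, hSall γ₀ hγ₀, mul_zero, sub_zero]
      have herase : ∑ k ∈ univ \ Γ, (if ({α, γ₀, k} : Finset Ω) ∈ C then (1:ℝ) else 0)
          = (if ({α, γ₀, γ₀} : Finset Ω) ∈ C then (1:ℝ) else 0)
            + ∑ k ∈ (univ \ Γ).erase γ₀,
              (if ({α, γ₀, k} : Finset Ω) ∈ C then (1:ℝ) else 0) :=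
        (Finset.add_sum_erase _ _ hγ₀mem).symm
      rw [if_neg (hpairnot {α, γ₀, γ₀} α γ₀
        (by ext w; simp only [mem_insert, mem_singleton]; tauto)), zero_add] at herase
      rw [hsplitU, herase] at htot
      linarith
    have hperk : ∀ k ∈ (univ \ Γ).erase γ₀,
        2 * ∑ α ∈ Γ, (if ({α, γ₀, k} : Finset Ω) ∈ C then (1:ℝ) else 0)
          = (d:ℝ) - ρ + 1 := by
      intro k hk
      obtain ⟨hkγ₀, hkmem⟩ := Finset.mem_erase.1 hk
      have hkΓ : k ∉ Γ := (Finset.mem_sdiff.1 hkmem).2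
      have hfe : Γ.filter (fun α => ({α, γ₀, k} : Finset Ω) ∈ C)
          = Γ.filter (fun α => ({γ₀, k, α} : Finset Ω) ∈ C) := by
        apply Finset.filter_congr
        intro α hα
        rw [show ({α, γ₀, k} : Finset Ω) = {γ₀, k, α} from by
          ext w; simp only [mem_insert, mem_singleton]; tauto]
      rw [Finset.sum_boole, hfe]
      have := houtcount γ₀ hγ₀ k hkΓ (Ne.symm hkγ₀)
      linarith
    have hsum1 : ∑ α ∈ Γ, 2 * ∑ k ∈ (univ \ Γ).erase γ₀,
        (if ({α, γ₀, k} : Finset Ω) ∈ C then (1:ℝ) else 0) = (d:ℝ) * (2*a - d) := by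
      rw [Finset.sum_congr rfl hperα, Finset.sum_const, hΓcard, nsmul_eq_mul]
    have hsum2 : ∑ k ∈ (univ \ Γ).erase γ₀, 2 * ∑ α ∈ Γ,
        (if ({α, γ₀, k} : Finset Ω) ∈ C then (1:ℝ) else 0)
        = ((n:ℝ) - d - 1) * ((d:ℝ) - ρ + 1) := by
      rw [Finset.sum_congr rfl hperk, Finset.sum_const, nsmul_eq_mul, hΩ₂card]
    have hswap2 : ∑ α ∈ Γ, ∑ k ∈ (univ \ Γ).erase γ₀,
        (if ({α, γ₀, k} : Finset Ω) ∈ C then (1:ℝ) else 0)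
        = ∑ k ∈ (univ \ Γ).erase γ₀, ∑ α ∈ Γ,
            (if ({α, γ₀, k} : Finset Ω) ∈ C then (1:ℝ) else 0) := Finset.sum_comm
    rw [← Finset.mul_sum] at hsum1 hsum2
    rw [hswap2] at hsum1
    linarith
  -- solve for n
  have hnρ : (n:ℝ) = (ρ - 1) * (ρ ^ 2 - 1) := by
    rw [hdρ] at hEq1 hEq2
    have key : ((n:ℝ) - (ρ - 1) * (ρ ^ 2 - 1)) * ((ρ-1)^2 * (ρ+1)) = 0 := by
      linear_combination (ρ^2 - ρ - 1) * hEq1 - hEq2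
    have hne : ((ρ-1)^2 * (ρ+1)) ≠ 0 := by positivity
    have := mul_eq_zero.1 key
    rcases this with h | h
    · linarith
    · exact absurd h hne
  refine ⟨hdρ, hnρ, ?_⟩
  -- part 3
  intro _ α hα β hβ δ hδ hab had hbd
  have cA : ∀ γ, γ ∉ Γ → (({α, β, γ} : Finset Ω) ∈ C ↔ t γ α * t γ β = -1) := by
    intro γ hγ
    rw [hperm α β γ]
    exact hchar γ hγ α hα β hβ hab
  have cB : ∀ γ, γ ∉ Γ → (({α, δ, γ} : Finset Ω) ∈ C ↔ t γ α * t γ δ = -1) := by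
    intro γ hγ
    rw [hperm α δ γ]
    exact hchar γ hγ α hα δ hδ had
  have cC : ∀ γ, γ ∉ Γ → (({β, δ, γ} : Finset Ω) ∈ C ↔ t γ β * t γ δ = -1) := by
    intro γ hγ
    rw [hperm β δ γ]
    exact hchar γ hγ β hβ δ hδ hbd
  have cS1 : ∀ γ, γ ∉ Γ → (β ∈ Sset C γ α ↔ t γ α * t γ β = -1) := by
    intro γ hγ
    rw [show (β ∈ Sset C γ α) ↔ ({γ, α, β} : Finset Ω) ∈ C from by
      simp [Sset]]
    exact hchar γ hγ α hα β hβ hab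
  have cS2 : ∀ γ, γ ∉ Γ → (δ ∈ Sset C γ α ↔ t γ α * t γ δ = -1) := by
    intro γ hγ
    rw [show (δ ∈ Sset C γ α) ↔ ({γ, α, δ} : Finset Ω) ∈ C from by
      simp [Sset]]
    exact hchar γ hγ α hα δ hδ had
  have hpoint : ∀ γ ∈ univ \ Γ,
      (if ({α, β, γ} : Finset Ω) ∈ C then (1:ℝ) else 0)
        + (if ({α, δ, γ} : Finset Ω) ∈ C then (1:ℝ) else 0)
        + (if ({β, δ, γ} : Finset Ω) ∈ C then (1:ℝ) else 0)
      = 2 - 2 * (if β ∉ Sset C γ α ∧ δ ∉ Sset C γ α then (1:ℝ) else 0) := by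
    intro γ hγmem
    have hγ : γ ∉ Γ := (Finset.mem_sdiff.1 hγmem).2
    have hx2 : (t γ α * t γ β)^2 = 1 := by
      rw [mul_pow, ht2 γ hγ α hα, ht2 γ hγ β hβ]; norm_num
    have hy2 : (t γ α * t γ δ)^2 = 1 := by
      rw [mul_pow, ht2 γ hγ α hα, ht2 γ hγ δ hδ]; norm_num
    have hz : t γ β * t γ δ = (t γ α * t γ β) * (t γ α * t γ δ) := by
      have h2 := ht2 γ hγ α hα
      linear_combination (-(t γ β * t γ δ)) * h2
    rcases hpm _ hx2 with hx | hx <;> rcases hpm _ hy2 with hy | hy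
    · have h1 : ({α, β, γ} : Finset Ω) ∉ C := fun h => by
        have := (cA γ hγ).1 h; rw [hx] at this; norm_num at this
      have h2 : ({α, δ, γ} : Finset Ω) ∉ C := fun h => by
        have := (cB γ hγ).1 h; rw [hy] at this; norm_num at this
      have h3 : ({β, δ, γ} : Finset Ω) ∉ C := fun h => by
        have := (cC γ hγ).1 h; rw [hz, hx, hy] at this; norm_num at this
      have hcond : β ∉ Sset C γ α ∧ δ ∉ Sset C γ α := by
        constructor
        · intro h
          have := (cS1 γ hγ).1 h; rw [hx] at this; norm_num at this
        · intro h
          have := (cS2 γ hγ).1 h; rw [hy] at this; norm_num at this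
      rw [if_neg h1, if_neg h2, if_neg h3, if_pos hcond]
      norm_num
    · have h1 : ({α, β, γ} : Finset Ω) ∉ C := fun h => by
        have := (cA γ hγ).1 h; rw [hx] at this; norm_num at this
      have h2 : ({α, δ, γ} : Finset Ω) ∈ C := (cB γ hγ).2 hy
      have h3 : ({β, δ, γ} : Finset Ω) ∈ C := (cC γ hγ).2 (by rw [hz, hx, hy]; norm_num)
      rw [if_neg h1, if_pos h2, if_pos h3, if_neg (fun hc => hc.2 ((cS2 γ hγ).2 hy))]
      norm_num
    · have h1 : ({α, β, γ} : Finset Ω) ∈ C := (cA γ hγ).2 hx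
      have h2 : ({α, δ, γ} : Finset Ω) ∉ C := fun h => by
        have := (cB γ hγ).1 h; rw [hy] at this; norm_num at this
      have h3 : ({β, δ, γ} : Finset Ω) ∈ C := (cC γ hγ).2 (by rw [hz, hx, hy]; norm_num)
      rw [if_pos h1, if_neg h2, if_pos h3, if_neg (fun hc => hc.1 ((cS1 γ hγ).2 hx))]
      norm_num
    · have h1 : ({α, β, γ} : Finset Ω) ∈ C := (cA γ hγ).2 hx
      have h2 : ({α, δ, γ} : Finset Ω) ∈ C := (cB γ hγ).2 hy
      have h3 : ({β, δ, γ} : Finset Ω) ∉ C := fun h => by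
        have := (cC γ hγ).1 h; rw [hz, hx, hy] at this; norm_num at this
      rw [if_pos h1, if_pos h2, if_neg h3, if_neg (fun hc => hc.1 ((cS1 γ hγ).2 hx))]
      norm_num
  have hsumA : ∑ γ ∈ univ \ Γ, (if ({α, β, γ} : Finset Ω) ∈ C then (1:ℝ) else 0) = (a:ℝ) := by
    rw [Finset.sum_boole]; exact hpairΓ α hα β hβ hab
  have hsumB : ∑ γ ∈ univ \ Γ, (if ({α, δ, γ} : Finset Ω) ∈ C then (1:ℝ) else 0) = (a:ℝ) := by
    rw [Finset.sum_boole]; exact hpairΓ α hα δ hδ had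
  have hsumC : ∑ γ ∈ univ \ Γ, (if ({β, δ, γ} : Finset Ω) ∈ C then (1:ℝ) else 0) = (a:ℝ) := by
    rw [Finset.sum_boole]; exact hpairΓ β hβ δ hδ hbd
  have hkey := Finset.sum_congr rfl hpoint
  rw [Finset.sum_add_distrib, Finset.sum_add_distrib, hsumA, hsumB, hsumC,
    Finset.sum_sub_distrib, Finset.sum_const, nsmul_eq_mul, hndcard, ← Finset.mul_sum,
    Finset.sum_boole] at hkey
  have hfinal : (2:ℝ) * ((((univ \ Γ).filter fun γ =>
      β ∉ Sset C γ α ∧ δ ∉ Sset C γ α).card : ℕ) : ℝ) = 2*((n:ℝ) - d) - 3*(a:ℝ) := by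
    linarith
  exact_mod_cast hfinal
end

section
/- Let 0 < κ < 1, let v : Ω → EuclideanSpace ℝ (Fin d) be a finite family of unit vectors with |⟪v i, v j⟫| = κ for all i ≠ j whose two-graph (Ω, C) is a regular two-graph with parameters (n, a, b), and let Γ ⊆ Ω be an incoherent subset with |Γ| = d. Suppose k is a natural number such that for every γ ∈ Ω∖Γ and every α ∈ Γ, |Γ ∩ S_{γα}| = k or |Γ ∩ S_{γα}| = d − k. Then for all distinct α, β ∈ Γ, the sum of |S_{αβ} ∩ S_{ην}| over all 2-element subsets {η, ν} of Γ∖{α, β} equals a·(d − k − 1)·(k − 1). -/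
open scoped RealInnerProductSpace
open Finset

lemma arith_aux (d k m m' : ℕ) (hsum : m + m' = d) (hm : 1 ≤ m) (hm' : 1 ≤ m')
    (hk : m = k ∨ m = d - k) :
    ((m:ℤ)-1)*((m':ℤ)-1) = ((d:ℤ)-k-1)*((k:ℤ)-1) := by
  rcases hk with rfl | h
  · have h1 : (m' : ℤ) = (d:ℤ) - (m:ℤ) := by omega
    rw [h1]; ring
  · have h1 : (m:ℤ) = (d:ℤ) - (k:ℤ) := by omega
    have h2 : (m':ℤ) = (k:ℤ) := by omega
    rw [h1, h2]

lemma cross_pairs {Ω : Type*} [DecidableEq Ω] (s : Finset Ω) (f : Ω → ℝ)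
    (P : Finset Ω → Prop) [DecidablePred P]
    (hP : ∀ x ∈ s, ∀ y ∈ s, x ≠ y → (P {x, y} ↔ f x * f y < 0)) :
    ((s.powersetCard 2).filter P).card
      = (s.filter fun x => f x < 0).card * (s.filter fun x => 0 < f x).card := by
  rw [← Finset.card_product]
  apply (Finset.card_bij (fun (q : Ω × Ω) _ => ({q.1, q.2} : Finset Ω)) ?_ ?_ ?_).symm
  · rintro ⟨x, y⟩ hq
    rw [Finset.mem_product] at hq
    obtain ⟨hx, hy⟩ := hq
    rw [mem_filter] at hx hy
    have hxy : x ≠ y := by rintro rfl; exact absurd hy.2 (not_lt.mpr hx.2.le)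
    rw [mem_filter, mem_powersetCard]
    refine ⟨⟨?_, ?_⟩, ?_⟩
    · intro z hz; simp only [mem_insert, mem_singleton] at hz
      rcases hz with rfl | rfl; exact hx.1; exact hy.1
    · exact Finset.card_pair hxy
    · exact (hP x hx.1 y hy.1 hxy).mpr (mul_neg_of_neg_of_pos hx.2 hy.2)
  · rintro ⟨x, y⟩ hq ⟨x', y'⟩ hq' heq
    rw [Finset.mem_product, mem_filter, mem_filter] at hq hq'
    dsimp only at heq
    have hx' : x' ∈ ({x, y} : Finset Ω) := by rw [heq]; simp
    have hy' : y' ∈ ({x, y} : Finset Ω) := by rw [heq]; simp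
    simp only [mem_insert, mem_singleton] at hx' hy'
    have hxx : x' = x := by
      rcases hx' with rfl | rfl
      · rfl
      · exact absurd hq'.1.2 (not_lt.mpr hq.2.2.le)
    have hyy : y' = y := by
      rcases hy' with rfl | rfl
      · exact absurd hq'.2.2 (not_lt.mpr hq.1.2.le)
      · rfl
    simp [hxx, hyy]
  · intro p hp
    rw [mem_filter, mem_powersetCard] at hp
    obtain ⟨⟨hsub, hcard⟩, hPp⟩ := hp
    obtain ⟨x, y, hxy, rfl⟩ := Finset.card_eq_two.mp hcard
    have hx : x ∈ s := hsub (by simp)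
    have hy : y ∈ s := hsub (by simp)
    have hneg := (hP x hx y hy hxy).mp hPp
    rcases mul_neg_iff.mp hneg with ⟨h1, h2⟩ | ⟨h1, h2⟩
    · exact ⟨(y, x), Finset.mem_product.mpr ⟨mem_filter.mpr ⟨hy, h2⟩,
        mem_filter.mpr ⟨hx, h1⟩⟩, by dsimp only; exact (Finset.pair_comm x y).symm⟩
    · exact ⟨(x, y), Finset.mem_product.mpr ⟨mem_filter.mpr ⟨hx, h1⟩,
        mem_filter.mpr ⟨hy, h2⟩⟩, rfl⟩


/-- **Lemma 8.3 (Gillespie).** For a set of equiangular lines with regular two-graph with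
parameters `(n, a, b)` and an incoherent subset `Γ` of size `d`, for distinct `α, β ∈ Γ`
the sum of `|S_{αβ} ∩ S_{ην}|` over all 2-subsets `{η, ν}` of `Γ∖{α, β}` equals
`a(d-k-1)(k-1)`. -/
theorem stmt_15 {Ω : Type*} [Fintype Ω] [DecidableEq Ω] (d : ℕ)
    (κ : ℝ) (hκ0 : 0 < κ) (hκ1 : κ < 1)
    (v : Ω → EuclideanSpace ℝ (Fin d))
    (hunit : ∀ i, ‖v i‖ = 1)
    (hangle : ∀ i j : Ω, i ≠ j → |⟪v i, v j⟫| = κ)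
    (C : Finset (Finset Ω))
    (hC3 : ∀ c ∈ C, c.card = 3)
    (hCdef : ∀ i j l : Ω, i ≠ j → i ≠ l → j ≠ l →
      (({i, j, l} : Finset Ω) ∈ C ↔ ⟪v i, v j⟫ * ⟪v i, v l⟫ * ⟪v j, v l⟫ < 0))
    (n a b : ℕ)
    (hn : Fintype.card Ω = n)
    (ha : ∀ p : Finset Ω, p.card = 2 → (C.filter fun c => p ⊆ c).card = a)
    (hb : ∀ c ∈ C, (((univ : Finset Ω).powersetCard 4).filter
      (fun Q => c ⊆ Q ∧ ∀ t ∈ Q.powersetCard 3, t ∈ C)).card = b)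
    (Γ : Finset Ω) (hΓcard : Γ.card = d)
    (hinc : ∀ t ⊆ Γ, t.card = 3 → t ∉ C)
    (k : ℕ)
    (hpart : ∀ γ : Ω, γ ∉ Γ → ∀ α ∈ Γ,
      (Γ ∩ Sset C γ α).card = k ∨ (Γ ∩ Sset C γ α).card = d - k) :
    ∀ α ∈ Γ, ∀ β ∈ Γ, α ≠ β →
      (∑ p ∈ (Γ \ {α, β}).powersetCard 2,
          ((Sset C α β ∩ univ.filter fun γ => insert γ p ∈ C).card : ℤ))
        = a * ((d : ℤ) - k - 1) * ((k : ℤ) - 1) := by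
  intro α hα β hβ hαβ
  -- inner products are nonzero
  have hinn : ∀ i j : Ω, i ≠ j → ⟪v i, v j⟫ ≠ 0 := by
    intro i j hij h0
    have := hangle i j hij
    rw [h0, abs_zero] at this
    exact absurd this.symm (ne_of_gt hκ0)
  -- sign normalization using pivot α
  set ε : Ω → ℝ := fun η => if ⟪v α, v η⟫ < 0 then -1 else 1 with hεdef
  have hε2 : ∀ η, ε η * ε η = 1 := by
    intro η; simp only [hεdef]; split_ifs <;> norm_num
  have hεne : ∀ η, ε η ≠ 0 := by
    intro η; simp only [hεdef]; split_ifs <;> norm_num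
  have hεmul : ∀ η, η ≠ α → 0 < ε η * ⟪v α, v η⟫ := by
    intro η hη
    simp only [hεdef]
    split_ifs with h
    · nlinarith
    · push_neg at h
      have hne := hinn α η (Ne.symm hη)
      rw [one_mul]
      exact lt_of_le_of_ne h (Ne.symm hne)
  have hεα : ε α = 1 := by
    simp only [hεdef]
    rw [real_inner_self_eq_norm_sq, hunit α]
    norm_num
  have hpos : ∀ η ∈ Γ, ∀ ν ∈ Γ, η ≠ ν → 0 < ε η * ε ν * ⟪v η, v ν⟫ := by
    intro η hη ν hν hne
    by_cases hηα : η = α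
    · subst hηα
      rw [hεα, one_mul]
      exact hεmul ν (Ne.symm hne)
    · by_cases hνα : ν = α
      · subst hνα
        rw [hεα, mul_one, real_inner_comm]
        exact hεmul η hηα
      · have htri : ({α, η, ν} : Finset Ω) ⊆ Γ := by
          intro x hx; simp only [mem_insert, mem_singleton] at hx
          rcases hx with rfl | rfl | rfl <;> assumption
        have hcard3 : ({α, η, ν} : Finset Ω).card = 3 := by
          rw [Finset.card_insert_of_notMem, Finset.card_insert_of_notMem]
          · simp
          · simpa using hne
          · simp only [mem_insert, mem_singleton]
            push_neg
            exact ⟨Ne.symm hηα, Ne.symm hνα⟩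
        have hnC := hinc _ htri hcard3
        rw [hCdef α η ν (Ne.symm hηα) (Ne.symm hνα) hne] at hnC
        push_neg at hnC
        have hPne : ⟪v α, v η⟫ * ⟪v α, v ν⟫ * ⟪v η, v ν⟫ ≠ 0 :=
          mul_ne_zero (mul_ne_zero (hinn α η (Ne.symm hηα)) (hinn α ν (Ne.symm hνα)))
            (hinn η ν hne)
        have hP : 0 < ⟪v α, v η⟫ * ⟪v α, v ν⟫ * ⟪v η, v ν⟫ :=
          lt_of_le_of_ne hnC (Ne.symm hPne)
        have hX := hεmul η hηα
        have hY := hεmul ν hνα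
        have key : ε η * ε ν * ⟪v η, v ν⟫ * ((ε η * ⟪v α, v η⟫) * (ε ν * ⟪v α, v ν⟫))
            = (ε η * ε η) * (ε ν * ε ν) * (⟪v α, v η⟫ * ⟪v α, v ν⟫ * ⟪v η, v ν⟫) := by
          ring
        rw [hε2 η, hε2 ν, one_mul, one_mul] at key
        nlinarith [mul_pos hX hY]
  -- coherence in terms of signs
  have hsC : ∀ γ, γ ∉ Γ → ∀ η ∈ Γ, ∀ ν ∈ Γ, η ≠ ν →
      (({γ, η, ν} : Finset Ω) ∈ C ↔ (ε η * ⟪v γ, v η⟫) * (ε ν * ⟪v γ, v ν⟫) < 0) := by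
    intro γ hγ η hη ν hν hne
    have hγη : γ ≠ η := by rintro rfl; exact hγ hη
    have hγν : γ ≠ ν := by rintro rfl; exact hγ hν
    rw [hCdef γ η ν hγη hγν hne]
    have hpv := hpos η hη ν hν hne
    have key : (ε η * ⟪v γ, v η⟫) * (ε ν * ⟪v γ, v ν⟫) * (ε η * ε ν * ⟪v η, v ν⟫)
        = (ε η * ε η) * (ε ν * ε ν) * (⟪v γ, v η⟫ * ⟪v γ, v ν⟫ * ⟪v η, v ν⟫) := by
      ring
    rw [hε2 η, hε2 ν, one_mul, one_mul] at key
    constructor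
    · intro h
      by_contra h'
      push_neg at h'
      have := mul_nonneg h' hpv.le
      rw [key] at this
      linarith
    · intro h
      have := mul_neg_of_neg_of_pos h hpv
      rwa [key] at this
  have hsne : ∀ γ, γ ∉ Γ → ∀ η ∈ Γ, ε η * ⟪v γ, v η⟫ ≠ 0 := by
    intro γ hγ η hη
    exact mul_ne_zero (hεne η) (hinn γ η (by rintro rfl; exact hγ hη))
  -- identification of Γ ∩ S_{γμ}
  have hSint : ∀ γ, γ ∉ Γ → ∀ μ ∈ Γ,
      Γ ∩ Sset C γ μ
        = Γ.filter fun η => (ε μ * ⟪v γ, v μ⟫) * (ε η * ⟪v γ, v η⟫) < 0 := by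
    intro γ hγ μ hμ
    ext η
    simp only [Sset, mem_inter, mem_filter, mem_univ, true_and]
    refine and_congr_right fun hη => ?_
    by_cases hημ : η = μ
    · subst hημ
      constructor
      · intro hmem
        have h2 : ({γ, η, η} : Finset Ω) = {γ, η} := by
          ext x; simp
        rw [h2] at hmem
        have := hC3 _ hmem
        have hle : ({γ, η} : Finset Ω).card ≤ 2 :=
          (Finset.card_insert_le _ _).trans (by simp)
        omega
      · intro hlt
        exact absurd hlt (not_lt.mpr (mul_self_nonneg _))
    · exact hsC γ hγ μ hμ η hη (Ne.symm hημ)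
  -- cardinality of S_{αβ}
  have hmemS : ∀ γ, γ ∈ Sset C α β ↔ ({α, β, γ} : Finset Ω) ∈ C := by
    intro γ; simp [Sset]
  have hnotpair : ∀ γ, ({α, β, γ} : Finset Ω) ∈ C → γ ∉ ({α, β} : Finset Ω) := by
    intro γ hmem hγ
    have heq : ({α, β, γ} : Finset Ω) = {α, β} := by
      ext x
      simp only [mem_insert, mem_singleton] at hγ ⊢
      rcases hγ with rfl | rfl <;> tauto
    have h3 := hC3 _ hmem
    rw [heq] at h3
    rw [Finset.card_pair hαβ] at h3
    omega
  have hcardS : (Sset C α β).card = a := by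
    rw [← ha {α, β} (Finset.card_pair hαβ)]
    apply Finset.card_bij (fun γ _ => ({α, β, γ} : Finset Ω))
    · intro γ hγ
      rw [hmemS] at hγ
      rw [mem_filter]
      exact ⟨hγ, by intro x hx; simp only [mem_insert, mem_singleton] at hx ⊢; tauto⟩
    · intro γ hγ γ' hγ' heq
      rw [hmemS] at hγ hγ'
      have h1 := hnotpair γ hγ
      have h2 := hnotpair γ' hγ'
      have : γ' ∈ ({α, β, γ} : Finset Ω) := by rw [heq]; simp
      simp only [mem_insert, mem_singleton] at this h2
      push_neg at h2
      rcases this with rfl | rfl | rfl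
      · exact absurd rfl h2.1
      · exact absurd rfl h2.2
      · rfl
    · intro c hc
      rw [mem_filter] at hc
      obtain ⟨hcC, hsub⟩ := hc
      have h3 := hC3 _ hcC
      have hcd : (c \ ({α, β} : Finset Ω)).card = 1 := by
        rw [Finset.card_sdiff_of_subset hsub, Finset.card_pair hαβ, h3]
      obtain ⟨γ, hγ⟩ := Finset.card_eq_one.mp hcd
      have hun : ({α, β} : Finset Ω) ∪ c \ {α, β} = c :=
        Finset.union_sdiff_of_subset hsub
      rw [hγ] at hun
      have hceq : ({α, β, γ} : Finset Ω) = c := by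
        rw [← hun]; ext x; simp only [mem_union, mem_insert, mem_singleton]; tauto
      refine ⟨γ, ?_, hceq⟩
      rw [hmemS, hceq]
      exact hcC
  -- per-γ count
  have key : ∀ γ ∈ Sset C α β,
      (((((Γ \ {α, β}).powersetCard 2).filter fun p => insert γ p ∈ C).card : ℤ))
        = ((d : ℤ) - k - 1) * ((k : ℤ) - 1) := by
    intro γ hγS
    have hγC : ({α, β, γ} : Finset Ω) ∈ C := (hmemS γ).mp hγS
    have hγΓ : γ ∉ Γ := by
      intro hγ
      have hsub : ({α, β, γ} : Finset Ω) ⊆ Γ := by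
        intro x hx; simp only [mem_insert, mem_singleton] at hx
        rcases hx with rfl | rfl | rfl <;> assumption
      exact hinc _ hsub (hC3 _ hγC) hγC
    -- α, β have opposite signs w.r.t. γ
    have hperm : ({γ, α, β} : Finset Ω) = {α, β, γ} := by
      ext x; simp only [mem_insert, mem_singleton]; tauto
    have hopp : (ε α * ⟪v γ, v α⟫) * (ε β * ⟪v γ, v β⟫) < 0 := by
      rw [← hsC γ hγΓ α hα β hβ hαβ, hperm]
      exact hγC
    set A : Finset Ω := Γ.filter fun η => ε η * ⟪v γ, v η⟫ < 0 with hAdef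
    set B : Finset Ω := Γ.filter fun η => 0 < ε η * ⟪v γ, v η⟫ with hBdef
    have hnegf : Γ.filter (fun η => ¬ (ε η * ⟪v γ, v η⟫ < 0)) = B := by
      rw [hBdef]
      apply Finset.filter_congr
      intro η hη
      have := hsne γ hγΓ η hη
      simp only [not_lt]
      constructor
      · intro h; exact lt_of_le_of_ne h (Ne.symm this)
      · intro h; exact h.le
    have hABd : A.card + B.card = d := by
      have h := Finset.card_filter_add_card_filter_not (s := Γ)
        (p := fun η => ε η * ⟪v γ, v η⟫ < 0)
      rw [hnegf, hΓcard] at h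
      exact h
    -- the hpart hypothesis in terms of A or B
    have hpartα := hpart γ hγΓ α hα
    rw [hSint γ hγΓ α hα] at hpartα
    -- counting pairs
    have hcount := cross_pairs (Γ \ {α, β}) (fun η => ε η * ⟪v γ, v η⟫)
      (fun p => insert γ p ∈ C) ?_
    swap
    · intro x hx y hy hxy
      have hxΓ : x ∈ Γ := (Finset.mem_sdiff.mp hx).1
      have hyΓ : y ∈ Γ := (Finset.mem_sdiff.mp hy).1
      exact hsC γ hγΓ x hxΓ y hyΓ hxy
    rw [hcount]
    -- identify the filtered sets over Γ \ {α,β}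
    rcases lt_or_gt_of_ne (hsne γ hγΓ α hα) with hsα | hsα
    · -- sα < 0, so sβ > 0
      have hsβ : 0 < ε β * ⟪v γ, v β⟫ := by nlinarith
      have hαA : α ∈ A := mem_filter.mpr ⟨hα, hsα⟩
      have hβB : β ∈ B := mem_filter.mpr ⟨hβ, hsβ⟩
      have hβA : β ∉ A := by
        rw [hAdef, mem_filter]; push_neg; intro _; exact hsβ.le
      have hαB : α ∉ B := by
        rw [hBdef, mem_filter]; push_neg; intro _; exact hsα.le
      have hA' : (Γ \ {α, β}).filter (fun η => ε η * ⟪v γ, v η⟫ < 0) = A.erase α := by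
        ext x
        simp only [hAdef, mem_filter, mem_sdiff, mem_erase, mem_insert, mem_singleton]
        constructor
        · rintro ⟨⟨h1, h2⟩, h3⟩; exact ⟨fun h => h2 (Or.inl h), h1, h3⟩
        · rintro ⟨h1, h2, h3⟩
          refine ⟨⟨h2, ?_⟩, h3⟩
          rintro (rfl | rfl)
          · exact h1 rfl
          · exact hβA (mem_filter.mpr ⟨h2, h3⟩)
      have hB' : (Γ \ {α, β}).filter (fun η => 0 < ε η * ⟪v γ, v η⟫) = B.erase β := by
        ext x
        simp only [hBdef, mem_filter, mem_sdiff, mem_erase, mem_insert, mem_singleton]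
        constructor
        · rintro ⟨⟨h1, h2⟩, h3⟩; exact ⟨fun h => h2 (Or.inr h), h1, h3⟩
        · rintro ⟨h1, h2, h3⟩
          refine ⟨⟨h2, ?_⟩, h3⟩
          rintro (rfl | rfl)
          · exact hαB (mem_filter.mpr ⟨h2, h3⟩)
          · exact h1 rfl
      rw [hA', hB', Finset.card_erase_of_mem hαA, Finset.card_erase_of_mem hβB]
      have hA1 : 1 ≤ A.card := Finset.card_pos.mpr ⟨α, hαA⟩
      have hB1 : 1 ≤ B.card := Finset.card_pos.mpr ⟨β, hβB⟩
      -- hpartα : the filter equals B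
      have hfiltB : Γ.filter (fun η => (ε α * ⟪v γ, v α⟫) * (ε η * ⟪v γ, v η⟫) < 0) = B := by
        rw [hBdef]
        apply Finset.filter_congr
        intro η hη
        constructor
        · intro h
          by_contra h'
          push_neg at h'
          nlinarith
        · intro h
          exact mul_neg_of_neg_of_pos hsα h
      rw [hfiltB] at hpartα
      push_cast [Nat.cast_sub hA1, Nat.cast_sub hB1]
      rw [mul_comm]
      exact arith_aux d k B.card A.card (by omega) hB1 hA1 hpartα
    · -- sα > 0, so sβ < 0
      have hsβ : ε β * ⟪v γ, v β⟫ < 0 := by nlinarith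
      have hαB : α ∈ B := mem_filter.mpr ⟨hα, hsα⟩
      have hβA : β ∈ A := mem_filter.mpr ⟨hβ, hsβ⟩
      have hαA : α ∉ A := by
        rw [hAdef, mem_filter]; push_neg; intro _; exact hsα.le
      have hβB : β ∉ B := by
        rw [hBdef, mem_filter]; push_neg; intro _; exact hsβ.le
      have hA' : (Γ \ {α, β}).filter (fun η => ε η * ⟪v γ, v η⟫ < 0) = A.erase β := by
        ext x
        simp only [hAdef, mem_filter, mem_sdiff, mem_erase, mem_insert, mem_singleton]
        constructor
        · rintro ⟨⟨h1, h2⟩, h3⟩; exact ⟨fun h => h2 (Or.inr h), h1, h3⟩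
        · rintro ⟨h1, h2, h3⟩
          refine ⟨⟨h2, ?_⟩, h3⟩
          rintro (rfl | rfl)
          · exact hαA (mem_filter.mpr ⟨h2, h3⟩)
          · exact h1 rfl
      have hB' : (Γ \ {α, β}).filter (fun η => 0 < ε η * ⟪v γ, v η⟫) = B.erase α := by
        ext x
        simp only [hBdef, mem_filter, mem_sdiff, mem_erase, mem_insert, mem_singleton]
        constructor
        · rintro ⟨⟨h1, h2⟩, h3⟩; exact ⟨fun h => h2 (Or.inl h), h1, h3⟩
        · rintro ⟨h1, h2, h3⟩
          refine ⟨⟨h2, ?_⟩, h3⟩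
          rintro (rfl | rfl)
          · exact h1 rfl
          · exact hβB (mem_filter.mpr ⟨h2, h3⟩)
      rw [hA', hB', Finset.card_erase_of_mem hβA, Finset.card_erase_of_mem hαB]
      have hA1 : 1 ≤ A.card := Finset.card_pos.mpr ⟨β, hβA⟩
      have hB1 : 1 ≤ B.card := Finset.card_pos.mpr ⟨α, hαB⟩
      -- hpartα : the filter equals A
      have hfiltA : Γ.filter (fun η => (ε α * ⟪v γ, v α⟫) * (ε η * ⟪v γ, v η⟫) < 0) = A := by
        rw [hAdef]
        apply Finset.filter_congr
        intro η hη
        constructor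
        · intro h
          by_contra h'
          push_neg at h'
          nlinarith
        · intro h
          exact mul_neg_of_pos_of_neg hsα h
      rw [hfiltA] at hpartα
      push_cast [Nat.cast_sub hA1, Nat.cast_sub hB1]
      exact arith_aux d k A.card B.card (by omega) hA1 hB1 hpartα
  -- now assemble the sum
  have hset : ∀ p : Finset Ω,
      Sset C α β ∩ univ.filter (fun γ => insert γ p ∈ C)
        = (Sset C α β).filter (fun γ => insert γ p ∈ C) := by
    intro p
    ext x
    simp only [mem_inter, mem_filter, mem_univ, true_and]
  have step : ∀ p : Finset Ω,
      ((Sset C α β ∩ univ.filter fun γ => insert γ p ∈ C).card : ℤ)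
        = ∑ γ ∈ Sset C α β, if insert γ p ∈ C then (1:ℤ) else 0 := by
    intro p
    rw [hset p]
    rw [Finset.sum_boole]
  rw [Finset.sum_congr rfl fun p _ => step p, Finset.sum_comm]
  have step2 : ∀ γ ∈ Sset C α β,
      (∑ p ∈ (Γ \ {α, β}).powersetCard 2, if insert γ p ∈ C then (1:ℤ) else 0)
        = ((d:ℤ) - k - 1) * ((k:ℤ) - 1) := by
    intro γ hγ
    rw [Finset.sum_boole]
    exact key γ hγ
  rw [Finset.sum_congr rfl step2, Finset.sum_const, hcardS]
  push_cast
  ring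
end

section
/- Let P be a finite set with 23 elements and let 𝓑 be a set of 7-element subsets of P (heptads) such that every 4-element subset of P is contained in exactly one member of 𝓑 (an S(4,7,23) Steiner system). Let σ be a permutation of P with σ ≠ id and σ² = id which maps every member of 𝓑 to a member of 𝓑. Then: (i) the set fix(σ) of fixed points of σ is a member of 𝓑, and it is the only heptad B with σ(B) = B and B ∩ supp(σ) = ∅; (ii) there are exactly 28 heptads B ∈ 𝓑 with |B ∩ supp(σ)| = 4 and σ(B) = B; (iii) there are exactly 112 heptads B ∈ 𝓑 with |B ∩ supp(σ)| = 4 and σ(B) ≠ B; (iv) there are exactly 112 heptads B ∈ 𝓑 with |B ∩ supp(σ)| = 6; (v) every heptad B ∈ 𝓑 with σ(B) ≠ B satisfies |B ∩ σ(B)| = 3. Here supp(σ) denotes the set of points moved by σ. -/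
open Finset

namespace P92

variable {σ : Equiv.Perm (Fin 23)} {𝓑 : Finset (Finset (Fin 23))}

lemma sig_sig (hσ2 : σ ^ 2 = 1) (x : Fin 23) : σ (σ x) = x := by
  have h : (σ ^ 2) x = x := by rw [hσ2]; rfl
  simpa [sq, Equiv.Perm.mul_apply] using h

lemma mem_image_iff (hσ2 : σ ^ 2 = 1) {B : Finset (Fin 23)} {x : Fin 23} :
    x ∈ B.image σ ↔ σ x ∈ B := by
  constructor
  · rintro h
    obtain ⟨y, hy, rfl⟩ := Finset.mem_image.1 h
    rwa [sig_sig hσ2]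
  · intro h
    exact Finset.mem_image.2 ⟨σ x, h, sig_sig hσ2 x⟩

lemma image_eq_of_mem (hσ2 : σ ^ 2 = 1) {B : Finset (Fin 23)}
    (h : ∀ x ∈ B, σ x ∈ B) : B.image σ = B := by
  apply Finset.eq_of_subset_of_card_le
  · intro x hx
    obtain ⟨y, hy, rfl⟩ := Finset.mem_image.1 hx
    exact h y hy
  · rw [Finset.card_image_of_injective _ σ.injective]

lemma mem_of_fix {B : Finset (Fin 23)} (hfix : Finset.image σ B = B) {x : Fin 23}
    (hx : x ∈ B) : σ x ∈ B := by
  rw [← hfix]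
  exact Finset.mem_image_of_mem _ hx

lemma even_card_of_invol (hσ2 : σ ^ 2 = 1) (W : Finset (Fin 23))
    (hW : ∀ x ∈ W, σ x ∈ W ∧ σ x ≠ x) : Even W.card := by
  induction W using Finset.strongInductionOn with
  | _ W ih =>
    rcases W.eq_empty_or_nonempty with rfl | ⟨x, hx⟩
    · simp
    · have hσx : σ x ∈ W := (hW x hx).1
      have hne : σ x ≠ x := (hW x hx).2
      set W' := (W.erase x).erase (σ x) with hW'
      have hsub : W' ⊂ W :=
        lt_of_le_of_lt (Finset.erase_subset _ _) (Finset.erase_ssubset hx)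
      have hmem : σ x ∈ W.erase x := Finset.mem_erase.2 ⟨hne, hσx⟩
      have hc : W'.card = W.card - 2 := by
        rw [hW', Finset.card_erase_of_mem hmem, Finset.card_erase_of_mem hx]; omega
      have h2 : 2 ≤ W.card := Finset.one_lt_card.2 ⟨x, hx, σ x, hσx, fun h => hne h.symm⟩
      have hWinv : ∀ y ∈ W', σ y ∈ W' ∧ σ y ≠ y := by
        intro y hy
        obtain ⟨hy1, hy2, hy3⟩ : y ≠ σ x ∧ y ≠ x ∧ y ∈ W := by
          simp only [hW', Finset.mem_erase] at hy; tauto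
        refine ⟨?_, (hW y hy3).2⟩
        simp only [hW', Finset.mem_erase]
        refine ⟨fun h => hy2 ?_, fun h => hy1 ?_, (hW y hy3).1⟩
        · have := congrArg σ h; rwa [sig_sig hσ2, sig_sig hσ2] at this
        · rw [← h, sig_sig hσ2]
      obtain ⟨r, hr⟩ := ih W' hsub hWinv
      exact ⟨r + 1, by omega⟩

lemma card_between (X Y : Finset (Fin 23)) (k : ℕ) (hXY : X ⊆ Y) (hk : X.card ≤ k) :
    ((Y.powersetCard k).filter (fun Q => X ⊆ Q)).card = (Y.card - X.card).choose (k - X.card) := by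
  rw [← Finset.card_sdiff_of_subset hXY, ← Finset.card_powersetCard (k - X.card) (Y \ X)]
  apply Finset.card_bij' (fun Q _ => Q \ X) (fun R _ => R ∪ X)
  · intro Q hQ
    simp only [Finset.mem_filter, Finset.mem_powersetCard] at hQ
    obtain ⟨⟨hQY, hQc⟩, hXQ⟩ := hQ
    simp only [Finset.mem_powersetCard]
    exact ⟨Finset.sdiff_subset_sdiff hQY (le_refl X), by rw [Finset.card_sdiff_of_subset hXQ, hQc]⟩
  · intro R hR
    simp only [Finset.mem_powersetCard] at hR
    obtain ⟨hRY, hRc⟩ := hR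
    have hdisj : Disjoint R X := Finset.disjoint_of_subset_left hRY (Finset.sdiff_disjoint)
    simp only [Finset.mem_filter, Finset.mem_powersetCard]
    refine ⟨⟨Finset.union_subset (hRY.trans (Finset.sdiff_subset)) hXY, ?_⟩,
      Finset.subset_union_right⟩
    rw [Finset.card_union_of_disjoint hdisj, hRc]
    omega
  · intro Q hQ
    simp only [Finset.mem_filter] at hQ
    exact Finset.sdiff_union_of_subset hQ.2
  · intro R hR
    simp only [Finset.mem_powersetCard] at hR
    exact Finset.union_sdiff_cancel_right (Finset.disjoint_of_subset_left hR.1 Finset.sdiff_disjoint)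

open Classical in
noncomputable def blk (𝓑 : Finset (Finset (Fin 23))) (Q : Finset (Fin 23)) : Finset (Fin 23) :=
  if h : ∃ B, B ∈ 𝓑 ∧ Q ⊆ B then h.choose else ∅

lemma blk_spec (hSteiner : ∀ Q : Finset (Fin 23), Q.card = 4 → ∃! B, B ∈ 𝓑 ∧ Q ⊆ B)
    {Q : Finset (Fin 23)} (hQ : Q.card = 4) : blk 𝓑 Q ∈ 𝓑 ∧ Q ⊆ blk 𝓑 Q := by
  obtain ⟨B, hB, _⟩ := hSteiner Q hQ
  have h : ∃ B, B ∈ 𝓑 ∧ Q ⊆ B := ⟨B, hB⟩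
  rw [blk, dif_pos h]
  exact h.choose_spec

lemma blk_eq (hSteiner : ∀ Q : Finset (Fin 23), Q.card = 4 → ∃! B, B ∈ 𝓑 ∧ Q ⊆ B)
    {Q B : Finset (Fin 23)} (hQ : Q.card = 4) (hB : B ∈ 𝓑) (hQB : Q ⊆ B) : blk 𝓑 Q = B := by
  obtain ⟨B', hB', huniq⟩ := hSteiner Q hQ
  rw [huniq _ (blk_spec hSteiner hQ), huniq B ⟨hB, hQB⟩]

lemma inter_le_three (hcard : ∀ B ∈ 𝓑, B.card = 7)
    (hSteiner : ∀ Q : Finset (Fin 23), Q.card = 4 → ∃! B, B ∈ 𝓑 ∧ Q ⊆ B)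
    {B B' : Finset (Fin 23)} (hB : B ∈ 𝓑) (hB' : B' ∈ 𝓑) (hne : B ≠ B') :
    (B ∩ B').card ≤ 3 := by
  by_contra h
  obtain ⟨Q, hQsub, hQ4⟩ := Finset.exists_subset_card_eq (show 4 ≤ (B ∩ B').card by omega)
  have h1 := blk_eq hSteiner hQ4 hB (hQsub.trans Finset.inter_subset_left)
  have h2 := blk_eq hSteiner hQ4 hB' (hQsub.trans Finset.inter_subset_right)
  exact hne (h1 ▸ h2)

lemma lam_count (hcard : ∀ B ∈ 𝓑, B.card = 7)
    (hSteiner : ∀ Q : Finset (Fin 23), Q.card = 4 → ∃! B, B ∈ 𝓑 ∧ Q ⊆ B)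
    (X : Finset (Fin 23)) (hX : X.card ≤ 4) :
    (𝓑.filter (fun B => X ⊆ B)).card * Nat.choose (7 - X.card) (4 - X.card)
      = Nat.choose (23 - X.card) (4 - X.card) := by
  have hmaps : ∀ Q ∈ (univ.powersetCard 4).filter (fun Q => X ⊆ Q),
      blk 𝓑 Q ∈ 𝓑.filter (fun B => X ⊆ B) := by
    intro Q hQ
    simp only [Finset.mem_filter, Finset.mem_powersetCard] at hQ
    obtain ⟨⟨_, hQ4⟩, hXQ⟩ := hQ
    obtain ⟨h1, h2⟩ := blk_spec hSteiner hQ4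
    exact Finset.mem_filter.2 ⟨h1, hXQ.trans h2⟩
  have h := Finset.card_eq_sum_card_fiberwise hmaps
  rw [card_between X univ 4 (Finset.subset_univ X) hX] at h
  have hfib : ∀ B ∈ 𝓑.filter (fun B => X ⊆ B),
      (((univ.powersetCard 4).filter (fun Q => X ⊆ Q)).filter (fun Q => blk 𝓑 Q = B)).card
        = Nat.choose (7 - X.card) (4 - X.card) := by
    intro B hB
    simp only [Finset.mem_filter] at hB
    have : ((univ.powersetCard 4).filter (fun Q => X ⊆ Q)).filter (fun Q => blk 𝓑 Q = B)
        = (B.powersetCard 4).filter (fun Q => X ⊆ Q) := by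
      ext Q
      simp only [Finset.mem_filter, Finset.mem_powersetCard]
      constructor
      · rintro ⟨⟨⟨_, hQ4⟩, hXQ⟩, hblk⟩
        exact ⟨⟨hblk ▸ (blk_spec hSteiner hQ4).2, hQ4⟩, hXQ⟩
      · rintro ⟨⟨hQB, hQ4⟩, hXQ⟩
        exact ⟨⟨⟨Finset.subset_univ Q, hQ4⟩, hXQ⟩, blk_eq hSteiner hQ4 hB.1 hQB⟩
    rw [this, card_between X B 4 hB.2 hX, hcard B hB.1]
  rw [Finset.sum_congr rfl hfib, Finset.sum_const, smul_eq_mul] at h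
  rw [show (univ : Finset (Fin 23)).card = 23 from by simp] at h
  omega

lemma lam0 (hcard : ∀ B ∈ 𝓑, B.card = 7)
    (hSteiner : ∀ Q : Finset (Fin 23), Q.card = 4 → ∃! B, B ∈ 𝓑 ∧ Q ⊆ B) :
    𝓑.card = 253 := by
  have h := lam_count hcard hSteiner ∅ (by simp)
  rw [Finset.filter_true_of_mem (fun B _ => Finset.empty_subset B)] at h
  simp only [Finset.card_empty, Nat.sub_zero] at h
  rw [show Nat.choose 7 4 = 35 by decide, show Nat.choose 23 4 = 8855 by decide] at h
  omega

lemma lam1s (hcard : ∀ B ∈ 𝓑, B.card = 7)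
    (hSteiner : ∀ Q : Finset (Fin 23), Q.card = 4 → ∃! B, B ∈ 𝓑 ∧ Q ⊆ B)
    {T : Finset (Fin 23)} (hT : T.card = 1) :
    (𝓑.filter (fun B => T ⊆ B)).card = 77 := by
  have h := lam_count hcard hSteiner T (by omega)
  rw [hT] at h
  norm_num at h
  rw [show Nat.choose 6 3 = 20 by decide, show Nat.choose 22 3 = 1540 by decide] at h
  omega

lemma lam2s (hcard : ∀ B ∈ 𝓑, B.card = 7)
    (hSteiner : ∀ Q : Finset (Fin 23), Q.card = 4 → ∃! B, B ∈ 𝓑 ∧ Q ⊆ B)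
    {T : Finset (Fin 23)} (hT : T.card = 2) :
    (𝓑.filter (fun B => T ⊆ B)).card = 21 := by
  have h := lam_count hcard hSteiner T (by omega)
  rw [hT] at h
  norm_num at h
  rw [show Nat.choose 5 2 = 10 by decide, show Nat.choose 21 2 = 210 by decide] at h
  omega

lemma lam3s (hcard : ∀ B ∈ 𝓑, B.card = 7)
    (hSteiner : ∀ Q : Finset (Fin 23), Q.card = 4 → ∃! B, B ∈ 𝓑 ∧ Q ⊆ B)
    {T : Finset (Fin 23)} (hT : T.card = 3) :
    (𝓑.filter (fun B => T ⊆ B)).card = 5 := by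
  have h := lam_count hcard hSteiner T (by omega)
  rw [hT] at h
  norm_num at h
  omega

lemma card_four {a b c d : Fin 23} (hab : a ≠ b) (hac : a ≠ c) (had : a ≠ d)
    (hbc : b ≠ c) (hbd : b ≠ d) (hcd : c ≠ d) :
    ({a, b, c, d} : Finset (Fin 23)).card = 4 := by
  rw [Finset.card_insert_of_notMem (by simp [hab, hac, had]),
    Finset.card_insert_of_notMem (by simp [hbc, hbd]), Finset.card_pair hcd]

lemma pairs_card (σ : Equiv.Perm (Fin 23)) (W : Finset (Fin 23))
    (hW : ∀ x ∈ W, σ x ∈ W ∧ σ x ≠ x) :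
    ((W ×ˢ W).filter (fun p => p.2 ≠ p.1 ∧ p.2 ≠ σ p.1)).card = W.card * (W.card - 2) := by
  have hmaps : ∀ p ∈ (W ×ˢ W).filter (fun p => p.2 ≠ p.1 ∧ p.2 ≠ σ p.1), p.1 ∈ W := by
    intro p hp
    simp only [Finset.mem_filter, Finset.mem_product] at hp
    exact hp.1.1
  rw [Finset.card_eq_sum_card_fiberwise hmaps]
  have hfib : ∀ x ∈ W,
      (((W ×ˢ W).filter (fun p => p.2 ≠ p.1 ∧ p.2 ≠ σ p.1)).filter (fun p => p.1 = x)).card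
        = W.card - 2 := by
    intro x hx
    have : ((W ×ˢ W).filter (fun p => p.2 ≠ p.1 ∧ p.2 ≠ σ p.1)).filter (fun p => p.1 = x)
        = {x} ×ˢ ((W.erase x).erase (σ x)) := by
      ext p
      simp only [Finset.mem_filter, Finset.mem_product, Finset.mem_singleton, Finset.mem_erase]
      constructor
      · rintro ⟨⟨⟨h1, h2⟩, h3, h4⟩, rfl⟩
        exact ⟨rfl, h4, h3, h2⟩
      · rintro ⟨rfl, ⟨hne2, hne1, hmem⟩⟩
        exact ⟨⟨⟨hx, hmem⟩, hne1, hne2⟩, rfl⟩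
    rw [this, Finset.card_product, Finset.card_singleton,
      Finset.card_erase_of_mem (Finset.mem_erase.2 ⟨(hW x hx).2, (hW x hx).1⟩),
      Finset.card_erase_of_mem hx]
    omega
  rw [Finset.sum_congr rfl hfib, Finset.sum_const, smul_eq_mul]

def Fx (σ : Equiv.Perm (Fin 23)) : Finset (Fin 23) := univ.filter (fun x => σ x = x)
def Sp (σ : Equiv.Perm (Fin 23)) : Finset (Fin 23) := univ.filter (fun x => σ x ≠ x)
def Bfx (𝓑 : Finset (Finset (Fin 23))) (σ : Equiv.Perm (Fin 23)) : Finset (Finset (Fin 23)) :=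
  𝓑.filter (fun B => B.image σ = B)

lemma mem_Fx {x : Fin 23} : x ∈ Fx σ ↔ σ x = x := by simp [Fx]
lemma mem_Sp {x : Fin 23} : x ∈ Sp σ ↔ σ x ≠ x := by simp [Sp]

lemma Sp_invol (hσ2 : σ ^ 2 = 1) : ∀ x ∈ Sp σ, σ x ∈ Sp σ ∧ σ x ≠ x := by
  intro x hx
  rw [mem_Sp] at hx
  refine ⟨mem_Sp.2 ?_, hx⟩
  rw [sig_sig hσ2]
  exact fun h => hx h.symm

lemma blk_fixed (hSteiner : ∀ Q : Finset (Fin 23), Q.card = 4 → ∃! B, B ∈ 𝓑 ∧ Q ⊆ B)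
    (hσ2 : σ ^ 2 = 1) (hσB : ∀ B ∈ 𝓑, B.image σ ∈ 𝓑)
    {Q : Finset (Fin 23)} (hQ4 : Q.card = 4) (hQinv : ∀ z ∈ Q, σ z ∈ Q) :
    blk 𝓑 Q ∈ Bfx 𝓑 σ := by
  obtain ⟨hBmem, hQB⟩ := blk_spec hSteiner hQ4
  have himg : (blk 𝓑 Q).image σ ∈ 𝓑 := hσB _ hBmem
  have hQsub : Q ⊆ (blk 𝓑 Q).image σ := by
    intro z hz
    rw [mem_image_iff hσ2]
    exact hQB (hQinv z hz)
  have := blk_eq hSteiner hQ4 himg hQsub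
  exact Finset.mem_filter.2 ⟨hBmem, this.symm⟩

lemma card_split (σ : Equiv.Perm (Fin 23)) (B : Finset (Fin 23)) :
    (B ∩ Fx σ).card + (B ∩ Sp σ).card = B.card := by
  have h1 : B ∩ Fx σ = B.filter (fun x => σ x = x) := by
    ext x; simp [Fx, Finset.mem_filter]
  have h2 : B ∩ Sp σ = B.filter (fun x => ¬ σ x = x) := by
    ext x; simp [Sp, Finset.mem_filter]
  rw [h1, h2]
  exact Finset.card_filter_add_card_filter_not _

lemma eqn1 (hcard : ∀ B ∈ 𝓑, B.card = 7)
    (hSteiner : ∀ Q : Finset (Fin 23), Q.card = 4 → ∃! B, B ∈ 𝓑 ∧ Q ⊆ B)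
    (hσ2 : σ ^ 2 = 1) (hσB : ∀ B ∈ 𝓑, B.image σ ∈ 𝓑) :
    ∑ B ∈ Bfx 𝓑 σ, (B ∩ Sp σ).card * ((B ∩ Sp σ).card - 2)
      = (Sp σ).card * ((Sp σ).card - 2) := by
  classical
  set S := Sp σ with hS
  set P₁ := (S ×ˢ S).filter (fun p => p.2 ≠ p.1 ∧ p.2 ≠ σ p.1) with hP₁
  have hQprop : ∀ p : Fin 23 × Fin 23, p ∈ P₁ →
      ({p.1, σ p.1, p.2, σ p.2} : Finset (Fin 23)).card = 4 ∧
      (∀ z ∈ ({p.1, σ p.1, p.2, σ p.2} : Finset (Fin 23)), σ z ∈ ({p.1, σ p.1, p.2, σ p.2} : Finset (Fin 23))) := by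
    rintro ⟨x, y⟩ hp
    simp only [hP₁, Finset.mem_filter, Finset.mem_product] at hp
    obtain ⟨⟨hxS, hyS⟩, hyx, hysx⟩ := hp
    have hx : σ x ≠ x := mem_Sp.1 hxS
    have hy : σ y ≠ y := mem_Sp.1 hyS
    have hxsy : x ≠ σ y := by
      intro h; apply hysx; rw [h, sig_sig hσ2]
    have hsxsy : σ x ≠ σ y := fun h => hyx (σ.injective h).symm
    constructor
    · exact card_four (fun h => hx h.symm) (fun h => hyx h.symm) hxsy
        (fun h => hysx h.symm) hsxsy (fun h => hy h.symm)
    · intro z hz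
      simp only [Finset.mem_insert, Finset.mem_singleton] at hz ⊢
      rcases hz with rfl | rfl | rfl | rfl
      · tauto
      · rw [sig_sig hσ2]; tauto
      · tauto
      · rw [sig_sig hσ2]; tauto
  have hmaps : ∀ p ∈ P₁, blk 𝓑 {p.1, σ p.1, p.2, σ p.2} ∈ Bfx 𝓑 σ := by
    intro p hp
    exact blk_fixed hSteiner hσ2 hσB (hQprop p hp).1 (hQprop p hp).2
  have h := Finset.card_eq_sum_card_fiberwise hmaps
  rw [pairs_card σ S (Sp_invol hσ2)] at h
  have hfib : ∀ B ∈ Bfx 𝓑 σ,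
      (P₁.filter (fun p => blk 𝓑 {p.1, σ p.1, p.2, σ p.2} = B)).card
        = (B ∩ S).card * ((B ∩ S).card - 2) := by
    intro B hB
    obtain ⟨hBmem, hBfix⟩ := Finset.mem_filter.1 hB
    have hrw : P₁.filter (fun p => blk 𝓑 {p.1, σ p.1, p.2, σ p.2} = B)
        = ((B ∩ S) ×ˢ (B ∩ S)).filter (fun p => p.2 ≠ p.1 ∧ p.2 ≠ σ p.1) := by
      ext ⟨x, y⟩
      simp only [Finset.mem_filter, Finset.mem_product, Finset.mem_inter, hP₁]
      constructor
      · rintro ⟨⟨⟨hxS, hyS⟩, hne⟩, hblk⟩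
        have hQ4 := (hQprop (x, y) (by simp only [hP₁, Finset.mem_filter, Finset.mem_product]; exact ⟨⟨hxS, hyS⟩, hne⟩)).1
        have hsub : ({x, σ x, y, σ y} : Finset (Fin 23)) ⊆ B := hblk ▸ (blk_spec hSteiner hQ4).2
        exact ⟨⟨⟨hsub (by simp), hxS⟩, hsub (by simp), hyS⟩, hne⟩
      · rintro ⟨⟨⟨hxB, hxS⟩, hyB, hyS⟩, hne⟩
        have hp₁ : (x, y) ∈ P₁ := by
          simp only [hP₁, Finset.mem_filter, Finset.mem_product]; exact ⟨⟨hxS, hyS⟩, hne⟩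
        refine ⟨⟨⟨hxS, hyS⟩, hne⟩, ?_⟩
        apply blk_eq hSteiner (hQprop (x, y) hp₁).1 hBmem
        intro z hz
        simp only [Finset.mem_insert, Finset.mem_singleton] at hz
        rcases hz with rfl | rfl | rfl | rfl
        · exact hxB
        · exact mem_of_fix hBfix hxB
        · exact hyB
        · exact mem_of_fix hBfix hyB
    rw [hrw]
    apply pairs_card σ (B ∩ S)
    intro x hx
    obtain ⟨hxB, hxS⟩ := Finset.mem_inter.1 hx
    obtain ⟨h1, h2⟩ := Sp_invol hσ2 x hxS
    exact ⟨Finset.mem_inter.2 ⟨mem_of_fix hBfix hxB, h1⟩, h2⟩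
  rw [Finset.sum_congr rfl hfib] at h
  exact h.symm

lemma eqn2 (hSteiner : ∀ Q : Finset (Fin 23), Q.card = 4 → ∃! B, B ∈ 𝓑 ∧ Q ⊆ B)
    (hσ2 : σ ^ 2 = 1) (hσB : ∀ B ∈ 𝓑, B.image σ ∈ 𝓑) :
    ∑ B ∈ Bfx 𝓑 σ, (B ∩ Sp σ).card * ((B ∩ Fx σ).card * (B ∩ Fx σ).card - (B ∩ Fx σ).card)
      = (Sp σ).card * ((Fx σ).card * (Fx σ).card - (Fx σ).card) := by
  classical
  set S := Sp σ with hSdef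
  set F := Fx σ with hFdef
  set P₂ := S ×ˢ F.offDiag with hP₂
  have hQprop : ∀ p : Fin 23 × Fin 23 × Fin 23, p ∈ P₂ →
      ({p.1, σ p.1, p.2.1, p.2.2} : Finset (Fin 23)).card = 4 ∧
      (∀ z ∈ ({p.1, σ p.1, p.2.1, p.2.2} : Finset (Fin 23)),
        σ z ∈ ({p.1, σ p.1, p.2.1, p.2.2} : Finset (Fin 23))) := by
    rintro ⟨x, y, z⟩ hp
    simp only [hP₂, Finset.mem_product, Finset.mem_offDiag] at hp
    obtain ⟨hxS, hyF, hzF, hyz⟩ := hp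
    have hx : σ x ≠ x := mem_Sp.1 hxS
    have hy : σ y = y := mem_Fx.1 hyF
    have hz : σ z = z := mem_Fx.1 hzF
    have hxy : x ≠ y := fun h => hx (by rw [h, hy])
    have hxz : x ≠ z := fun h => hx (by rw [h, hz])
    have hsxy : σ x ≠ y := by
      intro h
      apply hxy
      have := congrArg σ h
      rwa [sig_sig hσ2, hy] at this
    have hsxz : σ x ≠ z := by
      intro h
      apply hxz
      have := congrArg σ h
      rwa [sig_sig hσ2, hz] at this
    constructor
    · exact card_four (fun h => hx h.symm) hxy hxz hsxy hsxz hyz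
    · intro w hw
      simp only [Finset.mem_insert, Finset.mem_singleton] at hw ⊢
      rcases hw with rfl | rfl | rfl | rfl
      · tauto
      · rw [sig_sig hσ2]; tauto
      · rw [hy]; tauto
      · rw [hz]; tauto
  have hmaps : ∀ p ∈ P₂, blk 𝓑 {p.1, σ p.1, p.2.1, p.2.2} ∈ Bfx 𝓑 σ := by
    intro p hp
    exact blk_fixed hSteiner hσ2 hσB (hQprop p hp).1 (hQprop p hp).2
  have h := Finset.card_eq_sum_card_fiberwise hmaps
  rw [Finset.card_product, Finset.offDiag_card] at h
  have hfib : ∀ B ∈ Bfx 𝓑 σ,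
      (P₂.filter (fun p => blk 𝓑 {p.1, σ p.1, p.2.1, p.2.2} = B)).card
        = (B ∩ S).card * ((B ∩ F).card * (B ∩ F).card - (B ∩ F).card) := by
    intro B hB
    obtain ⟨hBmem, hBfix⟩ := Finset.mem_filter.1 hB
    have hrw : P₂.filter (fun p => blk 𝓑 {p.1, σ p.1, p.2.1, p.2.2} = B)
        = (B ∩ S) ×ˢ (B ∩ F).offDiag := by
      ext ⟨x, y, z⟩
      simp only [Finset.mem_filter, Finset.mem_product, Finset.mem_inter, Finset.mem_offDiag,
        hP₂]
      constructor
      · rintro ⟨⟨hxS, hyF, hzF, hyz⟩, hblk⟩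
        have hp₁ : (x, y, z) ∈ P₂ := by
          simp only [hP₂, Finset.mem_product, Finset.mem_offDiag]; exact ⟨hxS, hyF, hzF, hyz⟩
        have hsub : ({x, σ x, y, z} : Finset (Fin 23)) ⊆ B :=
          hblk ▸ (blk_spec hSteiner (hQprop _ hp₁).1).2
        exact ⟨⟨hsub (by simp), hxS⟩, ⟨hsub (by simp), hyF⟩, ⟨hsub (by simp), hzF⟩, hyz⟩
      · rintro ⟨⟨hxB, hxS⟩, ⟨hyB, hyF⟩, ⟨hzB, hzF⟩, hyz⟩
        have hp₁ : (x, y, z) ∈ P₂ := by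
          simp only [hP₂, Finset.mem_product, Finset.mem_offDiag]; exact ⟨hxS, hyF, hzF, hyz⟩
        refine ⟨⟨hxS, hyF, hzF, hyz⟩, ?_⟩
        apply blk_eq hSteiner (hQprop _ hp₁).1 hBmem
        intro w hw
        simp only [Finset.mem_insert, Finset.mem_singleton] at hw
        rcases hw with rfl | rfl | rfl | rfl
        · exact hxB
        · exact mem_of_fix hBfix hxB
        · exact hyB
        · exact hzB
    rw [hrw, Finset.card_product, Finset.offDiag_card]
  rw [Finset.sum_congr rfl hfib] at h
  exact h.symm

-- Equation E3

lemma eqn3 (hSteiner : ∀ Q : Finset (Fin 23), Q.card = 4 → ∃! B, B ∈ 𝓑 ∧ Q ⊆ B)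
    (hσ2 : σ ^ 2 = 1) (hσB : ∀ B ∈ 𝓑, B.image σ ∈ 𝓑) :
    ∑ B ∈ Bfx 𝓑 σ, Nat.choose (B ∩ Fx σ).card 4 = Nat.choose (Fx σ).card 4 := by
  classical
  set F := Fx σ with hFdef
  have hQprop : ∀ Q ∈ F.powersetCard 4, Q.card = 4 ∧ ∀ z ∈ Q, σ z ∈ Q := by
    intro Q hQ
    rw [Finset.mem_powersetCard] at hQ
    refine ⟨hQ.2, fun z hz => ?_⟩
    have := mem_Fx.1 (hQ.1 hz)
    rwa [this]
  have hmaps : ∀ Q ∈ F.powersetCard 4, blk 𝓑 Q ∈ Bfx 𝓑 σ := by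
    intro Q hQ
    exact blk_fixed hSteiner hσ2 hσB (hQprop Q hQ).1 (hQprop Q hQ).2
  have h := Finset.card_eq_sum_card_fiberwise hmaps
  rw [Finset.card_powersetCard] at h
  have hfib : ∀ B ∈ Bfx 𝓑 σ,
      ((F.powersetCard 4).filter (fun Q => blk 𝓑 Q = B)).card = Nat.choose (B ∩ F).card 4 := by
    intro B hB
    obtain ⟨hBmem, hBfix⟩ := Finset.mem_filter.1 hB
    have hrw : (F.powersetCard 4).filter (fun Q => blk 𝓑 Q = B) = (B ∩ F).powersetCard 4 := by
      ext Q
      simp only [Finset.mem_filter, Finset.mem_powersetCard]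
      constructor
      · rintro ⟨⟨hQF, hQ4⟩, hblk⟩
        have hsub : Q ⊆ B := hblk ▸ (blk_spec hSteiner hQ4).2
        exact ⟨fun z hz => Finset.mem_inter.2 ⟨hsub hz, hQF hz⟩, hQ4⟩
      · rintro ⟨hQBF, hQ4⟩
        have hQF : Q ⊆ F := hQBF.trans Finset.inter_subset_right
        have hQB : Q ⊆ B := hQBF.trans Finset.inter_subset_left
        exact ⟨⟨hQF, hQ4⟩, blk_eq hSteiner hQ4 hBmem hQB⟩
    rw [hrw, Finset.card_powersetCard]
  rw [Finset.sum_congr rfl hfib] at h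
  exact h.symm

/-- number of σ-fixed blocks whose support-intersection has size j -/
def Ac (𝓑 : Finset (Finset (Fin 23))) (σ : Equiv.Perm (Fin 23)) (j : ℕ) : ℕ :=
  ((Bfx 𝓑 σ).filter (fun B => (B ∩ Sp σ).card = j)).card

lemma sB_mem (hcard : ∀ B ∈ 𝓑, B.card = 7) (hσ2 : σ ^ 2 = 1) :
    ∀ B ∈ Bfx 𝓑 σ, (B ∩ Sp σ).card ∈ ({0, 2, 4, 6} : Finset ℕ) := by
  intro B hB
  obtain ⟨hBmem, hBfix⟩ := Finset.mem_filter.1 hB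
  have heven : Even (B ∩ Sp σ).card := by
    apply even_card_of_invol hσ2
    intro x hx
    obtain ⟨hxB, hxS⟩ := Finset.mem_inter.1 hx
    obtain ⟨h1, h2⟩ := Sp_invol hσ2 x hxS
    exact ⟨Finset.mem_inter.2 ⟨mem_of_fix hBfix hxB, h1⟩, h2⟩
  have hle : (B ∩ Sp σ).card ≤ 7 := by
    have := Finset.card_le_card (Finset.inter_subset_left : B ∩ Sp σ ⊆ B)
    rw [hcard B hBmem] at this
    exact this
  obtain ⟨r, hr⟩ := heven
  simp only [Finset.mem_insert, Finset.mem_singleton]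
  omega

lemma sum_Ac (hcard : ∀ B ∈ 𝓑, B.card = 7) (hσ2 : σ ^ 2 = 1) (gv : ℕ → ℕ) :
    ∑ B ∈ Bfx 𝓑 σ, gv ((B ∩ Sp σ).card)
      = gv 0 * Ac 𝓑 σ 0 + gv 2 * Ac 𝓑 σ 2 + gv 4 * Ac 𝓑 σ 4 + gv 6 * Ac 𝓑 σ 6 := by
  classical
  rw [← Finset.sum_fiberwise_of_maps_to (sB_mem hcard hσ2) (fun B => gv ((B ∩ Sp σ).card))]
  have hj : ∀ j : ℕ, ∑ B ∈ (Bfx 𝓑 σ).filter (fun B => (B ∩ Sp σ).card = j),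
      gv ((B ∩ Sp σ).card) = gv j * Ac 𝓑 σ j := by
    intro j
    rw [Finset.sum_congr rfl (fun B hB => by
      rw [(Finset.mem_filter.1 hB).2]), Finset.sum_const, smul_eq_mul, Ac, mul_comm]
  rw [show ({0, 2, 4, 6} : Finset ℕ) = insert 0 (insert 2 (insert 4 {6})) from rfl]
  rw [Finset.sum_insert (by decide), Finset.sum_insert (by decide),
    Finset.sum_insert (by decide), Finset.sum_singleton, hj 0, hj 2, hj 4, hj 6]
  ring

lemma i_eq (hcard : ∀ B ∈ 𝓑, B.card = 7) {B : Finset (Fin 23)} (hB : B ∈ 𝓑) :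
    (B ∩ Fx σ).card = 7 - (B ∩ Sp σ).card := by
  have := card_split σ B
  rw [hcard B hB] at this
  omega

def Dd (𝓑 : Finset (Finset (Fin 23))) (σ : Equiv.Perm (Fin 23)) : Finset (Finset (Fin 23)) :=
  𝓑.filter (fun B => B ⊆ Fx σ)

lemma Ac0_eq_Dd (hσ2 : σ ^ 2 = 1) : Ac 𝓑 σ 0 = (Dd 𝓑 σ).card := by
  unfold Ac Dd Bfx
  rw [Finset.filter_filter]
  congr 1
  apply Finset.filter_congr
  intro B _
  constructor
  · rintro ⟨hfix, hS0⟩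
    intro x hx
    rw [mem_Fx]
    by_contra h
    have : x ∈ B ∩ Sp σ := Finset.mem_inter.2 ⟨hx, mem_Sp.2 h⟩
    rw [Finset.card_eq_zero.1 hS0] at this
    exact absurd this (Finset.notMem_empty x)
  · intro hBF
    constructor
    · exact image_eq_of_mem hσ2 (fun x hx => by rw [mem_Fx.1 (hBF hx)]; exact hx)
    · rw [Finset.card_eq_zero, Finset.eq_empty_iff_forall_notMem]
      intro x hx
      obtain ⟨hxB, hxS⟩ := Finset.mem_inter.1 hx
      exact (mem_Sp.1 hxS) (mem_Fx.1 (hBF hxB))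

lemma X1 (hcard : ∀ B ∈ 𝓑, B.card = 7) :
    ∑ T ∈ (Fx σ).powersetCard 3, ((Dd 𝓑 σ).filter (fun B => T ⊆ B)).card
      = (Dd 𝓑 σ).card * 35 := by
  classical
  have hpt : ∀ T, ((Dd 𝓑 σ).filter (fun B => T ⊆ B)).card
      = ∑ B ∈ Dd 𝓑 σ, (if T ⊆ B then 1 else 0) := by
    intro T; rw [Finset.card_filter]
  simp only [hpt]
  rw [Finset.sum_comm]
  have hBsum : ∀ B ∈ Dd 𝓑 σ, (∑ T ∈ (Fx σ).powersetCard 3, if T ⊆ B then 1 else 0) = 35 := by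
    intro B hB
    have hBF : B ⊆ Fx σ := (Finset.mem_filter.1 hB).2
    have hB𝓑 : B ∈ 𝓑 := (Finset.mem_filter.1 hB).1
    rw [← Finset.card_filter]
    have heq : ((Fx σ).powersetCard 3).filter (fun T => T ⊆ B) = B.powersetCard 3 := by
      ext T
      simp only [Finset.mem_filter, Finset.mem_powersetCard]
      constructor
      · rintro ⟨⟨_, h3⟩, hTB⟩; exact ⟨hTB, h3⟩
      · rintro ⟨hTB, h3⟩; exact ⟨⟨hTB.trans hBF, h3⟩, hTB⟩
    rw [heq, Finset.card_powersetCard, hcard B hB𝓑]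
    decide
  rw [Finset.sum_congr rfl hBsum, Finset.sum_const, smul_eq_mul]

lemma X2 (hcard : ∀ B ∈ 𝓑, B.card = 7)
    (hSteiner : ∀ Q : Finset (Fin 23), Q.card = 4 → ∃! B, B ∈ 𝓑 ∧ Q ⊆ B) :
    ∑ T ∈ (Fx σ).powersetCard 3,
        (((Dd 𝓑 σ).filter (fun B => T ⊆ B)).card * (((Dd 𝓑 σ).filter (fun B => T ⊆ B)).card - 1))
      ≤ (Dd 𝓑 σ).card * (Dd 𝓑 σ).card - (Dd 𝓑 σ).card := by
  classical
  have hpt : ∀ T ∈ (Fx σ).powersetCard 3,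
      ((Dd 𝓑 σ).filter (fun B => T ⊆ B)).card * (((Dd 𝓑 σ).filter (fun B => T ⊆ B)).card - 1)
        = ∑ q ∈ (Dd 𝓑 σ).offDiag, (if T ⊆ q.1 ∧ T ⊆ q.2 then 1 else 0) := by
    intro T _
    have h1 : ((Dd 𝓑 σ).filter (fun B => T ⊆ B)).offDiag
        = (Dd 𝓑 σ).offDiag.filter (fun q => T ⊆ q.1 ∧ T ⊆ q.2) := by
      ext ⟨B, B'⟩
      simp only [Finset.mem_offDiag, Finset.mem_filter]
      tauto
    rw [← Finset.card_filter, ← h1, Finset.offDiag_card]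
    generalize ((Dd 𝓑 σ).filter (fun B => T ⊆ B)).card = p
    cases p with
    | zero => simp
    | succ n => simp [Nat.succ_sub_one, Nat.succ_mul, Nat.mul_succ]
  rw [Finset.sum_congr rfl hpt, Finset.sum_comm]
  calc ∑ q ∈ (Dd 𝓑 σ).offDiag, ∑ T ∈ (Fx σ).powersetCard 3, (if T ⊆ q.1 ∧ T ⊆ q.2 then 1 else 0)
      ≤ ∑ _q ∈ (Dd 𝓑 σ).offDiag, 1 := by
        apply Finset.sum_le_sum
        intro q hq
        obtain ⟨hq1, hq2, hqne⟩ := Finset.mem_offDiag.1 hq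
        rw [← Finset.card_filter]
        have heq : ((Fx σ).powersetCard 3).filter (fun T => T ⊆ q.1 ∧ T ⊆ q.2)
            = (q.1 ∩ q.2).powersetCard 3 := by
          ext T
          simp only [Finset.mem_filter, Finset.mem_powersetCard, Finset.subset_inter_iff]
          constructor
          · rintro ⟨⟨_, h3⟩, hT1, hT2⟩; exact ⟨⟨hT1, hT2⟩, h3⟩
          · rintro ⟨⟨hT1, hT2⟩, h3⟩
            exact ⟨⟨hT1.trans (Finset.mem_filter.1 hq1).2, h3⟩, hT1, hT2⟩
        rw [heq, Finset.card_powersetCard]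
        calc ((q.1 ∩ q.2).card).choose 3 ≤ Nat.choose 3 3 :=
              Nat.choose_le_choose 3
                (inter_le_three hcard hSteiner (Finset.mem_filter.1 hq1).1
                  (Finset.mem_filter.1 hq2).1 hqne)
          _ = 1 := by decide
    _ = (Dd 𝓑 σ).card * (Dd 𝓑 σ).card - (Dd 𝓑 σ).card := by
        rw [Finset.sum_const, smul_eq_mul, mul_one, Finset.offDiag_card]

lemma X3 (hcard : ∀ B ∈ 𝓑, B.card = 7)
    (hSteiner : ∀ Q : Finset (Fin 23), Q.card = 4 → ∃! B, B ∈ 𝓑 ∧ Q ⊆ B)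
    {T : Finset (Fin 23)} (hT : T ∈ (Fx σ).powersetCard 3) :
    4 * ((Dd 𝓑 σ).filter (fun B => T ⊆ B)).card + 3 ≤ (Fx σ).card := by
  classical
  obtain ⟨hTF, hT3⟩ := Finset.mem_powersetCard.1 hT
  set DT := (Dd 𝓑 σ).filter (fun B => T ⊆ B) with hDT
  have hdisj : ∀ B ∈ DT, ∀ B' ∈ DT, B ≠ B' → Disjoint (B \ T) (B' \ T) := by
    intro B hB B' hB' hne
    obtain ⟨hBD, hTB⟩ := Finset.mem_filter.1 hB
    obtain ⟨hB'D, hTB'⟩ := Finset.mem_filter.1 hB'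
    have hint : B ∩ B' = T := by
      refine (Finset.eq_of_subset_of_card_le (Finset.subset_inter hTB hTB') ?_).symm
      rw [hT3]
      exact inter_le_three hcard hSteiner (Finset.mem_filter.1 hBD).1
        (Finset.mem_filter.1 hB'D).1 hne
    rw [Finset.disjoint_left]
    intro z hz hz'
    obtain ⟨hzB, hzT⟩ := Finset.mem_sdiff.1 hz
    obtain ⟨hzB', _⟩ := Finset.mem_sdiff.1 hz'
    exact hzT (hint ▸ Finset.mem_inter.2 ⟨hzB, hzB'⟩)
  have hcardU := Finset.card_biUnion hdisj
  have hsub : DT.biUnion (fun B => B \ T) ⊆ Fx σ \ T := by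
    intro z hz
    obtain ⟨B, hB, hzB⟩ := Finset.mem_biUnion.1 hz
    obtain ⟨hzB', hzT⟩ := Finset.mem_sdiff.1 hzB
    obtain ⟨hBD, _⟩ := Finset.mem_filter.1 hB
    exact Finset.mem_sdiff.2 ⟨(Finset.mem_filter.1 hBD).2 hzB', hzT⟩
  have hle := Finset.card_le_card hsub
  rw [hcardU] at hle
  have hterm : ∀ B ∈ DT, (B \ T).card = 4 := by
    intro B hB
    obtain ⟨hBD, hTB⟩ := Finset.mem_filter.1 hB
    rw [Finset.card_sdiff_of_subset hTB, hT3, hcard B (Finset.mem_filter.1 hBD).1]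
  rw [Finset.sum_congr rfl hterm, Finset.sum_const, smul_eq_mul,
    Finset.card_sdiff_of_subset hTF, hT3] at hle
  have h3F : 3 ≤ (Fx σ).card := hT3 ▸ Finset.card_le_card hTF
  omega

lemma sum_inter_choose (k L : ℕ)
    (hlam : ∀ T ∈ (Fx σ).powersetCard k, (𝓑.filter (fun B => T ⊆ B)).card = L) :
    ∑ B ∈ 𝓑, Nat.choose (B ∩ Fx σ).card k = Nat.choose (Fx σ).card k * L := by
  classical
  have hper : ∀ B ∈ 𝓑, Nat.choose (B ∩ Fx σ).card k
      = ∑ T ∈ (Fx σ).powersetCard k, (if T ⊆ B then 1 else 0) := by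
    intro B _
    rw [← Finset.card_filter]
    have heq : ((Fx σ).powersetCard k).filter (fun T => T ⊆ B) = (B ∩ (Fx σ)).powersetCard k := by
      ext T
      simp only [Finset.mem_filter, Finset.mem_powersetCard, Finset.subset_inter_iff]
      tauto
    rw [heq, Finset.card_powersetCard]
  rw [Finset.sum_congr rfl hper, Finset.sum_comm]
  have hT : ∀ T ∈ (Fx σ).powersetCard k, (∑ B ∈ 𝓑, if T ⊆ B then 1 else 0) = L := by
    intro T hT
    rw [← Finset.card_filter]
    exact hlam T hT
  rw [Finset.sum_congr rfl hT, Finset.sum_const, smul_eq_mul, Finset.card_powersetCard]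

/-- w-count of a block -/
def wB (σ : Equiv.Perm (Fin 23)) (B : Finset (Fin 23)) : ℕ :=
  ((B ∩ Sp σ).filter (fun x => σ x ∈ B)).card

lemma W1 (hcard : ∀ B ∈ 𝓑, B.card = 7)
    (hSteiner : ∀ Q : Finset (Fin 23), Q.card = 4 → ∃! B, B ∈ 𝓑 ∧ Q ⊆ B) :
    ∑ B ∈ 𝓑, wB σ B = (Sp σ).card * 21 := by
  classical
  have hper : ∀ B ∈ 𝓑, wB σ B = ∑ x ∈ Sp σ, (if x ∈ B ∧ σ x ∈ B then 1 else 0) := by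
    intro B _
    rw [← Finset.card_filter, wB]
    congr 1
    ext x
    simp only [Finset.mem_filter, Finset.mem_inter]
    tauto
  rw [Finset.sum_congr rfl hper, Finset.sum_comm]
  have hx : ∀ x ∈ Sp σ, (∑ B ∈ 𝓑, if x ∈ B ∧ σ x ∈ B then 1 else 0) = 21 := by
    intro x hx
    rw [← Finset.card_filter]
    have hxne : x ≠ σ x := fun h => (mem_Sp.1 hx) h.symm
    have heq : 𝓑.filter (fun B => x ∈ B ∧ σ x ∈ B)
        = 𝓑.filter (fun B => ({x, σ x} : Finset (Fin 23)) ⊆ B) := by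
      apply Finset.filter_congr
      intro B _
      simp [Finset.insert_subset_iff]
    rw [heq]
    exact lam2s hcard hSteiner (Finset.card_pair hxne)
  rw [Finset.sum_congr rfl hx, Finset.sum_const, smul_eq_mul]

lemma W2 (hσ2 : σ ^ 2 = 1) (B : Finset (Fin 23)) :
    (B ∩ B.image σ).card = (B ∩ Fx σ).card + wB σ B := by
  classical
  have heq : B ∩ B.image σ = (B ∩ Fx σ) ∪ (B ∩ Sp σ).filter (fun x => σ x ∈ B) := by
    ext x
    simp only [Finset.mem_inter, Finset.mem_union, Finset.mem_filter, mem_Fx, mem_Sp,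
      mem_image_iff hσ2]
    constructor
    · rintro ⟨hxB, hσxB⟩
      by_cases h : σ x = x
      · exact Or.inl ⟨hxB, h⟩
      · exact Or.inr ⟨⟨hxB, h⟩, hσxB⟩
    · rintro (⟨hxB, h⟩ | ⟨⟨hxB, _⟩, hσxB⟩)
      · exact ⟨hxB, by rw [h]; exact hxB⟩
      · exact ⟨hxB, hσxB⟩
  rw [heq, Finset.card_union_of_disjoint, wB]
  rw [Finset.disjoint_left]
  intro x hx hx'
  obtain ⟨_, hfix⟩ := Finset.mem_inter.1 hx
  obtain ⟨hmem, _⟩ := Finset.mem_filter.1 hx'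
  exact (mem_Sp.1 (Finset.mem_inter.1 hmem).2) (mem_Fx.1 hfix)

lemma W3 (hfix : B.image σ = B) : wB σ B = (B ∩ Sp σ).card := by
  rw [wB]
  rw [Finset.filter_true_of_mem]
  intro x hx
  exact mem_of_fix hfix (Finset.mem_inter.1 hx).1

lemma sum_classify4 (s : Finset (Finset (Fin 23))) (itf : Finset (Fin 23) → ℕ)
    (hclass : ∀ B ∈ s, itf B ∈ ({0, 1, 2, 3} : Finset ℕ)) (gv : ℕ → ℕ) :
    ∑ B ∈ s, gv (itf B)
      = gv 0 * (s.filter (fun B => itf B = 0)).card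
      + gv 1 * (s.filter (fun B => itf B = 1)).card
      + gv 2 * (s.filter (fun B => itf B = 2)).card
      + gv 3 * (s.filter (fun B => itf B = 3)).card := by
  classical
  rw [← Finset.sum_fiberwise_of_maps_to hclass (fun B => gv (itf B))]
  have hj : ∀ j : ℕ, ∑ B ∈ s.filter (fun B => itf B = j), gv (itf B)
      = gv j * (s.filter (fun B => itf B = j)).card := by
    intro j
    rw [Finset.sum_congr rfl (fun B hB => by rw [(Finset.mem_filter.1 hB).2]),
      Finset.sum_const, smul_eq_mul, mul_comm]
  rw [show ({0, 1, 2, 3} : Finset ℕ) = insert 0 (insert 1 (insert 2 {3})) from rfl]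
  rw [Finset.sum_insert (by decide), Finset.sum_insert (by decide),
    Finset.sum_insert (by decide), Finset.sum_singleton, hj 0, hj 1, hj 2, hj 3]
  ring

lemma two_mul_le (p : ℕ) : 2 * p ≤ 2 + p * (p - 1) := by
  cases p with
  | zero => simp
  | succ n =>
    simp only [Nat.succ_sub_one]
    have h : (n + 1) * n = n * n + n := by ring
    rcases Nat.eq_zero_or_pos n with hn | hn
    · omega
    · have h2 : 1 * n ≤ n * n := Nat.mul_le_mul_right n hn
      omega

end P92

/-- **Proposition 9.2 (Gillespie).** Let `(P, 𝓑)` be an `S(4,7,23)` Steiner system and `σ`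
an involutory automorphism. Then `fix(σ)` is the unique heptad fixed by `σ` and disjoint
from `supp(σ)`; there are exactly `28` heptads meeting `supp(σ)` in `4` points that are
fixed by `σ`, exactly `112` meeting it in `4` points that are moved, and exactly `112`
meeting it in `6` points; and any heptad moved by `σ` meets its image in `3` points. -/
theorem stmt_16 (𝓑 : Finset (Finset (Fin 23)))
    (hcard : ∀ B ∈ 𝓑, B.card = 7)
    (hSteiner : ∀ Q : Finset (Fin 23), Q.card = 4 → ∃! B, B ∈ 𝓑 ∧ Q ⊆ B)
    (σ : Equiv.Perm (Fin 23)) (hσ1 : σ ≠ 1) (hσ2 : σ ^ 2 = 1)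
    (hσB : ∀ B ∈ 𝓑, B.image σ ∈ 𝓑) :
    ((univ.filter fun x => σ x = x) ∈ 𝓑 ∧
      ∀ B ∈ 𝓑, B.image σ = B → B ∩ (univ.filter fun x => σ x ≠ x) = ∅ →
        B = univ.filter fun x => σ x = x) ∧
    (𝓑.filter fun B =>
      (B ∩ (univ.filter fun x => σ x ≠ x)).card = 4 ∧ B.image σ = B).card = 28 ∧
    (𝓑.filter fun B =>
      (B ∩ (univ.filter fun x => σ x ≠ x)).card = 4 ∧ B.image σ ≠ B).card = 112 ∧
    (𝓑.filter fun B =>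
      (B ∩ (univ.filter fun x => σ x ≠ x)).card = 6).card = 112 ∧
    (∀ B ∈ 𝓑, B.image σ ≠ B → (B ∩ B.image σ).card = 3) := by
  show ((P92.Fx σ) ∈ 𝓑 ∧
      ∀ B ∈ 𝓑, B.image σ = B → B ∩ (P92.Sp σ) = ∅ → B = P92.Fx σ) ∧
    (𝓑.filter fun B => (B ∩ P92.Sp σ).card = 4 ∧ B.image σ = B).card = 28 ∧
    (𝓑.filter fun B => (B ∩ P92.Sp σ).card = 4 ∧ B.image σ ≠ B).card = 112 ∧
    (𝓑.filter fun B => (B ∩ P92.Sp σ).card = 6).card = 112 ∧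
    (∀ B ∈ 𝓑, B.image σ ≠ B → (B ∩ B.image σ).card = 3)
  have hSinv := P92.Sp_invol hσ2
  have htot : (P92.Fx σ).card + (P92.Sp σ).card = 23 := by
    have h := Finset.card_filter_add_card_filter_not
      (p := fun x : Fin 23 => σ x = x) (s := (univ : Finset (Fin 23)))
    rw [Finset.card_univ] at h
    simpa [P92.Fx, P92.Sp] using h
  have hSeven : Even (P92.Sp σ).card := P92.even_card_of_invol hσ2 _ hSinv
  have hSpos : (P92.Sp σ).card ≠ 0 := by
    intro h
    apply hσ1
    apply Equiv.ext
    intro x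
    by_contra hx
    have hxS : x ∈ P92.Sp σ := P92.mem_Sp.2 (by simpa using hx)
    rw [Finset.card_eq_zero.1 h] at hxS
    exact absurd hxS (Finset.notMem_empty x)
  have hE1 := P92.eqn1 hcard hSteiner hσ2 hσB
  have hE2 := P92.eqn2 hSteiner hσ2 hσB
  have hE3 := P92.eqn3 hSteiner hσ2 hσB
  have hA1 := P92.sum_Ac (𝓑 := 𝓑) hcard hσ2 (fun j => j * (j - 2))
  rw [hE1] at hA1
  norm_num at hA1
  have hE2' : ∑ B ∈ P92.Bfx 𝓑 σ, (B ∩ P92.Sp σ).card *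
      ((7 - (B ∩ P92.Sp σ).card) * (7 - (B ∩ P92.Sp σ).card) - (7 - (B ∩ P92.Sp σ).card))
      = (P92.Sp σ).card * ((P92.Fx σ).card * (P92.Fx σ).card - (P92.Fx σ).card) := by
    rw [← hE2]
    apply Finset.sum_congr rfl
    intro B hB
    rw [P92.i_eq hcard (Finset.mem_filter.1 hB).1]
  have hA2 := P92.sum_Ac (𝓑 := 𝓑) hcard hσ2 (fun j => j * ((7 - j) * (7 - j) - (7 - j)))
  rw [hE2'] at hA2
  norm_num at hA2
  have hE3' : ∑ B ∈ P92.Bfx 𝓑 σ, Nat.choose (7 - (B ∩ P92.Sp σ).card) 4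
      = Nat.choose (P92.Fx σ).card 4 := by
    rw [← hE3]
    apply Finset.sum_congr rfl
    intro B hB
    rw [P92.i_eq hcard (Finset.mem_filter.1 hB).1]
  have hA3 := P92.sum_Ac (𝓑 := 𝓑) hcard hσ2 (fun j => Nat.choose (7 - j) 4)
  rw [hE3'] at hA3
  simp only [show Nat.choose 7 4 = 35 from by decide, show Nat.choose 5 4 = 5 from by decide,
    show Nat.choose 3 4 = 0 from by decide, show Nat.choose 1 4 = 0 from by decide] at hA3
  norm_num at hA3
  obtain ⟨r, hr⟩ := hSeven
  have hcase : (P92.Sp σ).card = 2 ∨ (P92.Sp σ).card = 4 ∨ (P92.Sp σ).card = 6 ∨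
      (P92.Sp σ).card = 8 ∨ (P92.Sp σ).card = 10 ∨ (P92.Sp σ).card = 12 ∨
      (P92.Sp σ).card = 14 ∨ (P92.Sp σ).card = 16 ∨ (P92.Sp σ).card = 18 ∨
      (P92.Sp σ).card = 20 ∨ (P92.Sp σ).card = 22 := by omega
  rcases hcase with hs|hs|hs|hs|hs|hs|hs|hs|hs|hs|hs
  -- s = 2, f = 21
  · exfalso
    have hf : (P92.Fx σ).card = 21 := by omega
    rw [hs] at hA1 hA2
    rw [hf] at hA2 hA3
    rw [show Nat.choose 21 4 = 5985 by decide] at hA3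
    have hD : (P92.Dd 𝓑 σ).card = 168 := by rw [← P92.Ac0_eq_Dd hσ2]; omega
    have hX1 := P92.X1 (σ := σ) hcard
    have hbound : ∀ T ∈ (P92.Fx σ).powersetCard 3,
        ((P92.Dd 𝓑 σ).filter (fun B => T ⊆ B)).card ≤ 4 := by
      intro T hT
      have := P92.X3 hcard hSteiner hT
      omega
    have hle := Finset.sum_le_sum hbound
    rw [hX1, Finset.sum_const, smul_eq_mul, Finset.card_powersetCard, hf] at hle
    rw [show Nat.choose 21 3 = 1330 by decide, hD] at hle
    omega
  -- s = 4, f = 19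
  · exfalso
    have hf : (P92.Fx σ).card = 19 := by omega
    rw [hs] at hA1 hA2
    rw [hf] at hA2 hA3
    rw [show Nat.choose 19 4 = 3876 by decide] at hA3
    omega
  -- s = 6, f = 17
  · exfalso
    have hf : (P92.Fx σ).card = 17 := by omega
    rw [hs] at hA1 hA2
    rw [hf] at hA2 hA3
    rw [show Nat.choose 17 4 = 2380 by decide] at hA3
    omega
  -- s = 8, f = 15
  · exfalso
    have hf : (P92.Fx σ).card = 15 := by omega
    rw [hs] at hA1 hA2
    rw [hf] at hA2 hA3
    rw [show Nat.choose 15 4 = 1365 by decide] at hA3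
    have hD : (P92.Dd 𝓑 σ).card = 33 := by rw [← P92.Ac0_eq_Dd hσ2]; omega
    have hX1 := P92.X1 (σ := σ) hcard
    have hX2 := P92.X2 (σ := σ) hcard hSteiner
    have hlow : ∀ T ∈ (P92.Fx σ).powersetCard 3,
        2 * ((P92.Dd 𝓑 σ).filter (fun B => T ⊆ B)).card
          ≤ 2 + ((P92.Dd 𝓑 σ).filter (fun B => T ⊆ B)).card *
              (((P92.Dd 𝓑 σ).filter (fun B => T ⊆ B)).card - 1) :=
      fun T _ => P92.two_mul_le _
    have hle := Finset.sum_le_sum hlow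
    rw [← Finset.mul_sum, hX1] at hle
    rw [Finset.sum_add_distrib, Finset.sum_const, smul_eq_mul,
      Finset.card_powersetCard, hf] at hle
    have hfin := le_trans hle (Nat.add_le_add_left hX2 _)
    rw [hD, show Nat.choose 15 3 = 455 by decide] at hfin
    omega
  -- s = 10, f = 13
  · exfalso
    have hf : (P92.Fx σ).card = 13 := by omega
    rw [hs] at hA1 hA2
    rw [hf] at hA2 hA3
    rw [show Nat.choose 13 4 = 715 by decide] at hA3
    omega
  -- s = 12, f = 11
  · exfalso
    have hf : (P92.Fx σ).card = 11 := by omega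
    rw [hs] at hA1 hA2
    rw [hf] at hA2 hA3
    rw [show Nat.choose 11 4 = 330 by decide] at hA3
    have hD : (P92.Dd 𝓑 σ).card = 6 := by rw [← P92.Ac0_eq_Dd hσ2]; omega
    have hX1 := P92.X1 (σ := σ) hcard
    have hX2 := P92.X2 (σ := σ) hcard hSteiner
    have hlow : ∀ T ∈ (P92.Fx σ).powersetCard 3,
        2 * ((P92.Dd 𝓑 σ).filter (fun B => T ⊆ B)).card
          ≤ 2 + ((P92.Dd 𝓑 σ).filter (fun B => T ⊆ B)).card *
              (((P92.Dd 𝓑 σ).filter (fun B => T ⊆ B)).card - 1) :=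
      fun T _ => P92.two_mul_le _
    have hle := Finset.sum_le_sum hlow
    rw [← Finset.mul_sum, hX1] at hle
    rw [Finset.sum_add_distrib, Finset.sum_const, smul_eq_mul,
      Finset.card_powersetCard, hf] at hle
    have hfin := le_trans hle (Nat.add_le_add_left hX2 _)
    rw [hD, show Nat.choose 11 3 = 165 by decide] at hfin
    omega
  -- s = 14, f = 9
  · exfalso
    have hf : (P92.Fx σ).card = 9 := by omega
    rw [hs] at hA1 hA2
    rw [hf] at hA2 hA3
    rw [show Nat.choose 9 4 = 126 by decide] at hA3
    omega
  -- s = 16, f = 7 : THE GOOD CASE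
  · -- s = 16, f = 7
    have hf : (P92.Fx σ).card = 7 := by omega
    rw [hs] at hA1 hA2
    rw [hf] at hA2 hA3
    rw [show Nat.choose 7 4 = 35 by decide] at hA3
    have hAc4 : P92.Ac 𝓑 σ 4 = 28 := by omega
    have hAc6 : P92.Ac 𝓑 σ 6 = 0 := by omega
    have hAc2 : P92.Ac 𝓑 σ 2 = 0 := by omega
    have hAc0 : P92.Ac 𝓑 σ 0 = 1 := by omega
    -- Fx σ is a block
    have hDcard : (P92.Dd 𝓑 σ).card = 1 := by rw [← P92.Ac0_eq_Dd hσ2]; exact hAc0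
    obtain ⟨B0, hB0⟩ := Finset.card_eq_one.1 hDcard
    have hB0mem : B0 ∈ P92.Dd 𝓑 σ := hB0 ▸ Finset.mem_singleton_self B0
    have hB0B : B0 ∈ 𝓑 := (Finset.mem_filter.1 hB0mem).1
    have hB0F : B0 ⊆ P92.Fx σ := (Finset.mem_filter.1 hB0mem).2
    have hB0eq : B0 = P92.Fx σ := by
      apply Finset.eq_of_subset_of_card_le hB0F
      rw [hf, hcard B0 hB0B]
    have hFmem : P92.Fx σ ∈ 𝓑 := hB0eq ▸ hB0B
    have hFfix : (P92.Fx σ).image σ = P92.Fx σ :=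
      P92.image_eq_of_mem hσ2 (fun x hx => by rw [P92.mem_Fx.1 hx]; exact hx)
    have hFS : P92.Fx σ ∩ P92.Sp σ = ∅ := by
      rw [Finset.eq_empty_iff_forall_notMem]
      intro x hx
      exact (P92.mem_Sp.1 (Finset.mem_inter.1 hx).2) (P92.mem_Fx.1 (Finset.mem_inter.1 hx).1)
    have hiS : ∀ B ∈ 𝓑, (B ∩ P92.Fx σ).card + (B ∩ P92.Sp σ).card = 7 := fun B hB => by
      rw [← hcard B hB]; exact P92.card_split σ B
    -- the λ-sums over all blocks
    have hsum1 : ∑ B ∈ 𝓑, Nat.choose (B ∩ P92.Fx σ).card 1 = 539 := by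
      rw [P92.sum_inter_choose 1 77
        (fun T hT => P92.lam1s hcard hSteiner (Finset.mem_powersetCard.1 hT).2), hf]
      decide
    have hsum2 : ∑ B ∈ 𝓑, Nat.choose (B ∩ P92.Fx σ).card 2 = 441 := by
      rw [P92.sum_inter_choose 2 21
        (fun T hT => P92.lam2s hcard hSteiner (Finset.mem_powersetCard.1 hT).2), hf]
      decide
    have hsum3 : ∑ B ∈ 𝓑, Nat.choose (B ∩ P92.Fx σ).card 3 = 175 := by
      rw [P92.sum_inter_choose 3 5
        (fun T hT => P92.lam3s hcard hSteiner (Finset.mem_powersetCard.1 hT).2), hf]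
      decide
    -- erase-F sums
    have her0 : (𝓑.erase (P92.Fx σ)).card = 252 := by
      rw [Finset.card_erase_of_mem hFmem, P92.lam0 hcard hSteiner]
    have hFF : (P92.Fx σ ∩ P92.Fx σ).card = 7 := by rw [Finset.inter_self]; exact hf
    have her1 : ∑ B ∈ 𝓑.erase (P92.Fx σ), Nat.choose (B ∩ P92.Fx σ).card 1 = 532 := by
      have h := Finset.add_sum_erase 𝓑 (fun B => Nat.choose (B ∩ P92.Fx σ).card 1) hFmem
      simp only [hFF] at h
      rw [hsum1] at h
      rw [show Nat.choose 7 1 = 7 by decide] at h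
      omega
    have her2 : ∑ B ∈ 𝓑.erase (P92.Fx σ), Nat.choose (B ∩ P92.Fx σ).card 2 = 420 := by
      have h := Finset.add_sum_erase 𝓑 (fun B => Nat.choose (B ∩ P92.Fx σ).card 2) hFmem
      simp only [hFF] at h
      rw [hsum2] at h
      rw [show Nat.choose 7 2 = 21 by decide] at h
      omega
    have her3 : ∑ B ∈ 𝓑.erase (P92.Fx σ), Nat.choose (B ∩ P92.Fx σ).card 3 = 140 := by
      have h := Finset.add_sum_erase 𝓑 (fun B => Nat.choose (B ∩ P92.Fx σ).card 3) hFmem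
      simp only [hFF] at h
      rw [hsum3] at h
      rw [show Nat.choose 7 3 = 35 by decide] at h
      omega
    -- classification of other blocks
    have hclass : ∀ B ∈ 𝓑.erase (P92.Fx σ),
        (B ∩ P92.Fx σ).card ∈ ({0, 1, 2, 3} : Finset ℕ) := by
      intro B hB
      obtain ⟨hne, hBB⟩ := Finset.mem_erase.1 hB
      have := P92.inter_le_three hcard hSteiner hBB hFmem hne
      simp only [Finset.mem_insert, Finset.mem_singleton]
      omega
    have hM0e := P92.sum_classify4 (𝓑.erase (P92.Fx σ))
      (fun B => (B ∩ P92.Fx σ).card) hclass (fun _ => 1)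
    rw [Finset.sum_const, smul_eq_mul, her0, mul_one] at hM0e
    have hM1e := P92.sum_classify4 (𝓑.erase (P92.Fx σ))
      (fun B => (B ∩ P92.Fx σ).card) hclass (fun j => Nat.choose j 1)
    rw [her1] at hM1e
    norm_num at hM1e
    have hM2e := P92.sum_classify4 (𝓑.erase (P92.Fx σ))
      (fun B => (B ∩ P92.Fx σ).card) hclass (fun j => Nat.choose j 2)
    rw [her2] at hM2e
    simp only [show Nat.choose 0 2 = 0 from by decide, show Nat.choose 1 2 = 0 from by decide,
      show Nat.choose 2 2 = 1 from by decide, show Nat.choose 3 2 = 3 from by decide] at hM2e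
    norm_num at hM2e
    have hM3e := P92.sum_classify4 (𝓑.erase (P92.Fx σ))
      (fun B => (B ∩ P92.Fx σ).card) hclass (fun j => Nat.choose j 3)
    rw [her3] at hM3e
    simp only [show Nat.choose 0 3 = 0 from by decide, show Nat.choose 1 3 = 0 from by decide,
      show Nat.choose 2 3 = 0 from by decide, show Nat.choose 3 3 = 1 from by decide] at hM3e
    norm_num at hM3e
    have hM3 : ((𝓑.erase (P92.Fx σ)).filter
        (fun B => (B ∩ P92.Fx σ).card = 3)).card = 140 := by omega
    have hM2 : ((𝓑.erase (P92.Fx σ)).filter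
        (fun B => (B ∩ P92.Fx σ).card = 2)).card = 0 := by omega
    have hM1 : ((𝓑.erase (P92.Fx σ)).filter
        (fun B => (B ∩ P92.Fx σ).card = 1)).card = 112 := by omega
    have hM0 : ((𝓑.erase (P92.Fx σ)).filter
        (fun B => (B ∩ P92.Fx σ).card = 0)).card = 0 := by omega
    -- goal (ii): 28 heptads with |B∩S|=4 fixed
    have h28 : (𝓑.filter fun B => (B ∩ P92.Sp σ).card = 4 ∧ B.image σ = B).card = 28 := by
      have hset : (𝓑.filter fun B => (B ∩ P92.Sp σ).card = 4 ∧ B.image σ = B)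
          = (P92.Bfx 𝓑 σ).filter (fun B => (B ∩ P92.Sp σ).card = 4) := by
        rw [P92.Bfx, Finset.filter_filter]
        apply Finset.filter_congr
        intro B _
        constructor
        · rintro ⟨h1, h2⟩; exact ⟨h2, h1⟩
        · rintro ⟨h1, h2⟩; exact ⟨h2, h1⟩
      rw [hset]
      exact hAc4
    -- the set of blocks with |B∩S|=4
    have h140 : (𝓑.filter fun B => (B ∩ P92.Sp σ).card = 4).card = 140 := by
      have hset4 : (𝓑.filter fun B => (B ∩ P92.Sp σ).card = 4)
          = (𝓑.erase (P92.Fx σ)).filter (fun B => (B ∩ P92.Fx σ).card = 3) := by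
        ext B
        simp only [Finset.mem_filter, Finset.mem_erase]
        constructor
        · rintro ⟨hBB, h4⟩
          have hi := hiS B hBB
          have hne : B ≠ P92.Fx σ := by
            rintro rfl
            rw [hFS] at h4
            simp at h4
          exact ⟨⟨hne, hBB⟩, by omega⟩
        · rintro ⟨⟨hne, hBB⟩, h3⟩
          exact ⟨hBB, by have := hiS B hBB; omega⟩
      rw [hset4]
      exact hM3
    have hsplit := Finset.card_filter_add_card_filter_not
      (s := 𝓑.filter (fun B => (B ∩ P92.Sp σ).card = 4)) (p := fun B => B.image σ = B)
    rw [Finset.filter_filter, Finset.filter_filter, h140] at hsplit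
    -- goal (iv): 112 heptads with |B∩S|=6
    have h112s6 : (𝓑.filter fun B => (B ∩ P92.Sp σ).card = 6).card = 112 := by
      have hset6 : (𝓑.filter fun B => (B ∩ P92.Sp σ).card = 6)
          = (𝓑.erase (P92.Fx σ)).filter (fun B => (B ∩ P92.Fx σ).card = 1) := by
        ext B
        simp only [Finset.mem_filter, Finset.mem_erase]
        constructor
        · rintro ⟨hBB, h6⟩
          have hi := hiS B hBB
          have hne : B ≠ P92.Fx σ := by
            rintro rfl
            rw [hFS] at h6
            simp at h6
          exact ⟨⟨hne, hBB⟩, by omega⟩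
        · rintro ⟨⟨hne, hBB⟩, h1⟩
          exact ⟨hBB, by have := hiS B hBB; omega⟩
      rw [hset6]
      exact hM1
    refine ⟨⟨hFmem, ?_⟩, h28, ?_, h112s6, ?_⟩
    -- (i) uniqueness
    · intro B hB hfix hdisj
      have key : B ⊆ P92.Fx σ := by
        intro x hx
        by_contra hxF
        have hxS : x ∈ P92.Sp σ := P92.mem_Sp.2 (fun h => hxF (P92.mem_Fx.2 h))
        have hmem : x ∈ B ∩ P92.Sp σ := Finset.mem_inter.2 ⟨hx, hxS⟩
        rw [hdisj] at hmem
        exact absurd hmem (Finset.notMem_empty x)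
      apply Finset.eq_of_subset_of_card_le key
      rw [hf, hcard B hB]
    -- (iii) 112 heptads with |B∩S|=4 moved
    · have : (𝓑.filter fun B => (B ∩ P92.Sp σ).card = 4 ∧ ¬ B.image σ = B).card = 112 := by
        omega
      exact this
    -- (v) moved heptads meet their image in 3 points
    · intro B hB hmoved
      have hBneF : B ≠ P92.Fx σ := fun h => hmoved (by rw [h]; exact hFfix)
      have hBerase : B ∈ 𝓑.erase (P92.Fx σ) := Finset.mem_erase.2 ⟨hBneF, hB⟩
      have hBi := hclass B hBerase
      simp only [Finset.mem_insert, Finset.mem_singleton] at hBi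
      have hi0 : (B ∩ P92.Fx σ).card ≠ 0 := by
        intro h
        have hmem : B ∈ (𝓑.erase (P92.Fx σ)).filter (fun B => (B ∩ P92.Fx σ).card = 0) :=
          Finset.mem_filter.2 ⟨hBerase, h⟩
        rw [Finset.card_eq_zero.1 hM0] at hmem
        exact absurd hmem (Finset.notMem_empty B)
      have hi2 : (B ∩ P92.Fx σ).card ≠ 2 := by
        intro h
        have hmem : B ∈ (𝓑.erase (P92.Fx σ)).filter (fun B => (B ∩ P92.Fx σ).card = 2) :=
          Finset.mem_filter.2 ⟨hBerase, h⟩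
        rw [Finset.card_eq_zero.1 hM2] at hmem
        exact absurd hmem (Finset.notMem_empty B)
      have hle3 : (B ∩ B.image σ).card ≤ 3 :=
        P92.inter_le_three hcard hSteiner hB (hσB B hB) (fun h => hmoved h.symm)
      have hW2B := P92.W2 hσ2 B
      rcases (show (B ∩ P92.Fx σ).card = 1 ∨ (B ∩ P92.Fx σ).card = 3 by omega) with hi1 | hi3
      -- case |B∩F| = 1 : use the w-counting
      · -- total w-sum
        have hWtot : ∑ B' ∈ 𝓑, P92.wB σ B' = 336 := by
          rw [P92.W1 hcard hSteiner, hs]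
        have hWF : P92.wB σ (P92.Fx σ) = 0 := by
          rw [P92.wB, hFS]
          simp
        have hsplitF := Finset.add_sum_erase 𝓑 (P92.wB σ) hFmem
        have hfib := Finset.sum_fiberwise_of_maps_to hclass (P92.wB σ)
        rw [show ({0, 1, 2, 3} : Finset ℕ) = insert 0 (insert 1 (insert 2 {3})) from rfl,
          Finset.sum_insert (by decide), Finset.sum_insert (by decide),
          Finset.sum_insert (by decide), Finset.sum_singleton] at hfib
        try simp only at hfib
        have hfib0 : ∑ B' ∈ (𝓑.erase (P92.Fx σ)).filter
            (fun B => (B ∩ P92.Fx σ).card = 0), P92.wB σ B' = 0 := by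
          rw [Finset.card_eq_zero.1 hM0, Finset.sum_empty]
        have hfib2 : ∑ B' ∈ (𝓑.erase (P92.Fx σ)).filter
            (fun B => (B ∩ P92.Fx σ).card = 2), P92.wB σ B' = 0 := by
          rw [Finset.card_eq_zero.1 hM2, Finset.sum_empty]
        have hsplit3 := Finset.sum_filter_add_sum_filter_not
          ((𝓑.erase (P92.Fx σ)).filter (fun B => (B ∩ P92.Fx σ).card = 3))
          (fun B => B.image σ = B) (P92.wB σ)
        have hfixset : (((𝓑.erase (P92.Fx σ)).filter
              (fun B => (B ∩ P92.Fx σ).card = 3)).filter (fun B => B.image σ = B))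
            = (P92.Bfx 𝓑 σ).filter (fun B => (B ∩ P92.Sp σ).card = 4) := by
          ext B'
          simp only [Finset.mem_filter, Finset.mem_erase, P92.Bfx]
          constructor
          · rintro ⟨⟨⟨hne, hBB⟩, h3⟩, hfx⟩
            exact ⟨⟨hBB, hfx⟩, by have := hiS B' hBB; omega⟩
          · rintro ⟨⟨hBB, hfx⟩, h4⟩
            have hi := hiS B' hBB
            refine ⟨⟨⟨?_, hBB⟩, by omega⟩, hfx⟩
            rintro rfl
            rw [hFS] at h4
            simp at h4
        have hfixsum : ∑ B' ∈ ((𝓑.erase (P92.Fx σ)).filter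
            (fun B => (B ∩ P92.Fx σ).card = 3)).filter (fun B => B.image σ = B),
            P92.wB σ B' = 112 := by
          rw [hfixset]
          have hterm : ∀ B' ∈ (P92.Bfx 𝓑 σ).filter (fun B => (B ∩ P92.Sp σ).card = 4),
              P92.wB σ B' = 4 := by
            intro B' hB'
            obtain ⟨hBfx, h4⟩ := Finset.mem_filter.1 hB'
            rw [P92.W3 (Finset.mem_filter.1 hBfx).2, h4]
          rw [Finset.sum_congr rfl hterm, Finset.sum_const, smul_eq_mul]
          rw [show ((P92.Bfx 𝓑 σ).filter (fun B => (B ∩ P92.Sp σ).card = 4)).card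
            = P92.Ac 𝓑 σ 4 from rfl, hAc4]
        have hmovsum0 : ∑ B' ∈ ((𝓑.erase (P92.Fx σ)).filter
            (fun B => (B ∩ P92.Fx σ).card = 3)).filter (fun B => ¬ B.image σ = B),
            P92.wB σ B' = 0 := by
          apply Finset.sum_eq_zero
          intro B' hB'
          obtain ⟨hmem3, hnfx⟩ := Finset.mem_filter.1 hB'
          obtain ⟨hBer, h3⟩ := Finset.mem_filter.1 hmem3
          have hBB : B' ∈ 𝓑 := (Finset.mem_erase.1 hBer).2
          have hW2' := P92.W2 hσ2 B'
          have hle' := P92.inter_le_three hcard hSteiner hBB (hσB B' hBB)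
            (fun h => hnfx h.symm)
          omega
        have hsum1f : ∑ B' ∈ (𝓑.erase (P92.Fx σ)).filter
            (fun B => (B ∩ P92.Fx σ).card = 1), P92.wB σ B' = 224 := by
          omega
        have hble : ∀ B' ∈ (𝓑.erase (P92.Fx σ)).filter
            (fun B => (B ∩ P92.Fx σ).card = 1), P92.wB σ B' ≤ 2 := by
          intro B' hB'
          obtain ⟨hBer, h1⟩ := Finset.mem_filter.1 hB'
          have hBB : B' ∈ 𝓑 := (Finset.mem_erase.1 hBer).2
          have hnfx : ¬ B'.image σ = B' := by
            intro hfx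
            have hmem6 : B' ∈ (P92.Bfx 𝓑 σ).filter (fun B => (B ∩ P92.Sp σ).card = 6) :=
              Finset.mem_filter.2 ⟨Finset.mem_filter.2 ⟨hBB, hfx⟩,
                by have := hiS B' hBB; omega⟩
            have hAc6' : ((P92.Bfx 𝓑 σ).filter
                (fun B => (B ∩ P92.Sp σ).card = 6)).card = 0 := hAc6
            rw [Finset.card_eq_zero.1 hAc6'] at hmem6
            exact absurd hmem6 (Finset.notMem_empty B')
          have hW2' := P92.W2 hσ2 B'
          have hle' := P92.inter_le_three hcard hSteiner hBB (hσB B' hBB)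
            (fun h => hnfx h.symm)
          omega
        have hBfib1 : B ∈ (𝓑.erase (P92.Fx σ)).filter
            (fun B => (B ∩ P92.Fx σ).card = 1) := Finset.mem_filter.2 ⟨hBerase, hi1⟩
        have hwB : P92.wB σ B = 2 := by
          by_contra hw
          have hwlt : P92.wB σ B < 2 := lt_of_le_of_ne (hble B hBfib1) hw
          have hlt := Finset.sum_lt_sum hble ⟨B, hBfib1, hwlt⟩
          rw [hsum1f, Finset.sum_const, smul_eq_mul, hM1] at hlt
          omega
        omega
      -- case |B∩F| = 3
      · have hge3 : 3 ≤ (B ∩ B.image σ).card := by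
          have hsub : B ∩ P92.Fx σ ⊆ B ∩ B.image σ := by
            intro x hx
            obtain ⟨hxB, hxF⟩ := Finset.mem_inter.1 hx
            refine Finset.mem_inter.2 ⟨hxB, ?_⟩
            rw [P92.mem_image_iff hσ2, P92.mem_Fx.1 hxF]
            exact hxB
          have := Finset.card_le_card hsub
          omega
        omega
  -- s = 18, f = 5
  · exfalso
    have hf : (P92.Fx σ).card = 5 := by omega
    rw [hs] at hA1 hA2
    rw [hf] at hA2 hA3
    rw [show Nat.choose 5 4 = 5 by decide] at hA3
    omega
  -- s = 20, f = 3
  · exfalso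
    have hf : (P92.Fx σ).card = 3 := by omega
    rw [hs] at hA1 hA2
    rw [hf] at hA2 hA3
    rw [show Nat.choose 3 4 = 0 by decide] at hA3
    omega
  -- s = 22, f = 1
  · exfalso
    have hf : (P92.Fx σ).card = 1 := by omega
    rw [hs] at hA1 hA2
    rw [hf] at hA2 hA3
    rw [show Nat.choose 1 4 = 0 by decide] at hA3
    omega
end

section
/- Let i ≥ 1 be an integer. If there exists a quasi-symmetric 2-(2i(2i+1), i(2i+1), i(2i−1)(i+1)) design with block intersection numbers i² + i and i², then there exists a quasi-symmetric 2-(2i(2i+1) − 1, (2i−1)(i+1), i(2i² + i − 2)) design with block intersection numbers i² + i − 1 and i² − 1. -/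
open Finset



private lemma splitE {β : Type*} (s : Finset β) (P : β → Prop) [DecidablePred P]
    (Q : β → Prop) [DecidablePred Q] :
    (s.filter P).card
      = (s.filter fun B => P B ∧ Q B).card + (s.filter fun B => P B ∧ ¬ Q B).card := by
  rw [← Finset.filter_filter, ← Finset.filter_filter]
  exact (Finset.card_filter_add_card_filter_not (s := s.filter P) Q).symm

private lemma ccard {β : Type*} (s : Finset β) (P Q : β → Prop)
    [DecidablePred P] [DecidablePred Q] (h : ∀ B, P B ↔ Q B) :
    (s.filter P).card = (s.filter Q).card := by
  rw [Finset.filter_congr (fun B _ => h B)]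

private lemma aux_ie {β : Type*} (s : Finset β) (p q r : β → Prop)
    [DecidablePred p] [DecidablePred q] [DecidablePred r] (R L : ℕ)
    (hp : (s.filter p).card = R) (hq : (s.filter q).card = R) (hr : (s.filter r).card = R)
    (hpq : (s.filter fun B => p B ∧ q B).card = L)
    (hpr : (s.filter fun B => p B ∧ r B).card = L)
    (hqr : (s.filter fun B => q B ∧ r B).card = L)
    (htot : s.card = 2 * R) :
    (s.filter fun B => ((p B ∧ q B) ∧ r B) ∨ ((¬ p B ∧ ¬ q B) ∧ ¬ r B)).card + R = 3 * L := by
  classical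
  have E0 : (s.filter p).card + (s.filter fun B => ¬ p B).card = s.card :=
    Finset.card_filter_add_card_filter_not p
  have E1 := splitE s p q
  have E2 := splitE s (fun B => p B ∧ q B) r
  have E3 := splitE s (fun B => p B ∧ ¬ q B) r
  have E4 := splitE s (fun B => ¬ p B) q
  have E5 := splitE s (fun B => ¬ p B ∧ q B) r
  have E6 := splitE s (fun B => ¬ p B ∧ ¬ q B) r
  -- tie (p ∧ r)
  have F1 : (s.filter fun B => p B ∧ r B).card
      = (s.filter fun B => (p B ∧ q B) ∧ r B).card
        + (s.filter fun B => (p B ∧ ¬ q B) ∧ r B).card := by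
    rw [splitE s (fun B => p B ∧ r B) q]
    congr 1
    · exact ccard s _ _ (fun B => by tauto)
    · exact ccard s _ _ (fun B => by tauto)
  -- tie (q ∧ r)
  have F2 : (s.filter fun B => q B ∧ r B).card
      = (s.filter fun B => (p B ∧ q B) ∧ r B).card
        + (s.filter fun B => (¬ p B ∧ q B) ∧ r B).card := by
    rw [splitE s (fun B => q B ∧ r B) p]
    congr 1
    · exact ccard s _ _ (fun B => by tauto)
    · exact ccard s _ _ (fun B => by tauto)
  -- tie q
  have G1 : (s.filter q).card
      = (s.filter fun B => p B ∧ q B).card + (s.filter fun B => ¬ p B ∧ q B).card := by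
    rw [splitE s q p]
    congr 1
    · exact ccard s _ _ (fun B => by tauto)
    · exact ccard s _ _ (fun B => by tauto)
  -- tie r
  have G2 : (s.filter r).card
      = (s.filter fun B => p B ∧ r B).card + (s.filter fun B => ¬ p B ∧ r B).card := by
    rw [splitE s r p]
    congr 1
    · exact ccard s _ _ (fun B => by tauto)
    · exact ccard s _ _ (fun B => by tauto)
  have G3 : (s.filter fun B => ¬ p B ∧ r B).card
      = (s.filter fun B => (¬ p B ∧ q B) ∧ r B).card
        + (s.filter fun B => (¬ p B ∧ ¬ q B) ∧ r B).card := by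
    rw [splitE s (fun B => ¬ p B ∧ r B) q]
    congr 1
    · exact ccard s _ _ (fun B => by tauto)
    · exact ccard s _ _ (fun B => by tauto)
  have T : (s.filter fun B => ((p B ∧ q B) ∧ r B) ∨ ((¬ p B ∧ ¬ q B) ∧ ¬ r B)).card
      = (s.filter fun B => (p B ∧ q B) ∧ r B).card
        + (s.filter fun B => (¬ p B ∧ ¬ q B) ∧ ¬ r B).card := by
    rw [Finset.filter_or]
    apply Finset.card_union_of_disjoint
    rw [Finset.disjoint_left]
    intro B h1 h2
    simp only [Finset.mem_filter] at h1 h2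
    tauto
  omega

private lemma aux_r {α : Type*} [Fintype α] [DecidableEq α]
    (𝓑 : Finset (Finset α)) (k lam : ℕ)
    (hk : ∀ B ∈ 𝓑, B.card = k)
    (hl : ∀ pp : Finset α, pp.card = 2 → (𝓑.filter fun B => pp ⊆ B).card = lam)
    (p : α) :
    (𝓑.filter fun B => p ∈ B).card * (k - 1) = (Fintype.card α - 1) * lam := by
  classical
  have key : ∑ B ∈ 𝓑.filter (fun B => p ∈ B), (B.erase p).card
      = ∑ q ∈ (univ : Finset α).erase p,
          ((𝓑.filter fun B => p ∈ B).filter fun B => q ∈ B).card := by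
    have h1 : ∀ B ∈ 𝓑.filter (fun B => p ∈ B),
        (B.erase p).card = ∑ q ∈ (univ : Finset α).erase p, if q ∈ B then 1 else 0 := by
      intro B _
      have h0 : B.erase p = ((univ : Finset α).erase p).filter (fun q => q ∈ B) := by
        ext q; simp [and_comm]
      rw [h0, Finset.card_filter]
    rw [Finset.sum_congr rfl h1, Finset.sum_comm]
    exact Finset.sum_congr rfl fun q _ => (Finset.card_filter _ _).symm
  have h2 : ∑ B ∈ 𝓑.filter (fun B => p ∈ B), (B.erase p).card
      = (𝓑.filter fun B => p ∈ B).card * (k - 1) := by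
    rw [Finset.sum_congr rfl (fun B hB => ?_), Finset.sum_const, smul_eq_mul]
    rw [Finset.card_erase_of_mem (Finset.mem_filter.mp hB).2, hk B (Finset.mem_filter.mp hB).1]
  have h3 : ∀ q ∈ (univ : Finset α).erase p,
      ((𝓑.filter fun B => p ∈ B).filter fun B => q ∈ B).card = lam := by
    intro q hq
    have hqp : q ≠ p := (Finset.mem_erase.mp hq).1
    have hh : (𝓑.filter fun B => p ∈ B).filter (fun B => q ∈ B)
        = 𝓑.filter fun B => ({p, q} : Finset α) ⊆ B := by
      rw [Finset.filter_filter]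
      exact Finset.filter_congr fun B _ => by simp [Finset.insert_subset_iff]
    rw [hh]
    exact hl _ (Finset.card_pair fun h => hqp h.symm)
  rw [h2, Finset.sum_congr rfl h3, Finset.sum_const, smul_eq_mul,
    Finset.card_erase_of_mem (Finset.mem_univ p), Finset.card_univ] at key
  exact key

private lemma aux_b {α : Type*} [Fintype α] [DecidableEq α]
    (𝓑 : Finset (Finset α)) (k : ℕ) (hk : ∀ B ∈ 𝓑, B.card = k) :
    𝓑.card * k = ∑ q ∈ (univ : Finset α), (𝓑.filter fun B => q ∈ B).card := by
  classical
  have h1 : ∀ B ∈ 𝓑, B.card = ∑ q ∈ (univ : Finset α), if q ∈ B then 1 else 0 := by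
    intro B _
    have h0 : B = (univ : Finset α).filter (fun q => q ∈ B) := by ext q; simp
    conv_lhs => rw [h0]
    rw [Finset.card_filter]
  have h2 : ∑ B ∈ 𝓑, B.card = 𝓑.card * k := by
    rw [Finset.sum_congr rfl hk, Finset.sum_const, smul_eq_mul]
  rw [← h2, Finset.sum_congr rfl h1, Finset.sum_comm]
  exact Finset.sum_congr rfl fun q _ => (Finset.card_filter _ _).symm

private lemma aux_s {α : Type*} [DecidableEq α] (𝓑 : Finset (Finset α)) (B : Finset α) :
    ∑ C ∈ 𝓑.erase B, (B ∩ C).card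
      = ∑ p ∈ B, ((𝓑.erase B).filter fun C => p ∈ C).card := by
  classical
  have h1 : ∀ C ∈ 𝓑.erase B, (B ∩ C).card = ∑ p ∈ B, if p ∈ C then 1 else 0 := by
    intro C _
    have h0 : B ∩ C = B.filter (fun p => p ∈ C) := by ext q; simp
    rw [h0, Finset.card_filter]
  rw [Finset.sum_congr rfl h1, Finset.sum_comm]
  exact Finset.sum_congr rfl fun p _ => (Finset.card_filter _ _).symm


set_option maxHeartbeats 3200000 in
/-- **Theorem 10.3 (Gillespie).** A quasi-symmetric
`2-(2i(2i+1), i(2i+1), i(2i-1)(i+1); i²+i, i²)` design exists only if a quasi-symmetric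
`2-(2i(2i+1)-1, (2i-1)(i+1), i(2i²+i-2); i²+i-1, i²-1)` design exists. -/
theorem stmt_17 (i : ℕ) (hi : 1 ≤ i)
    (hex : ∃ 𝓑 : Finset (Finset (Fin (2 * i * (2 * i + 1)))),
      (∀ B ∈ 𝓑, B.card = i * (2 * i + 1)) ∧
      (∀ p : Finset (Fin (2 * i * (2 * i + 1))), p.card = 2 →
        (𝓑.filter fun B => p ⊆ B).card = i * (2 * i - 1) * (i + 1)) ∧
      (∀ B₁ ∈ 𝓑, ∀ B₂ ∈ 𝓑, B₁ ≠ B₂ →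
        (B₁ ∩ B₂).card = i ^ 2 + i ∨ (B₁ ∩ B₂).card = i ^ 2) ∧
      (∃ B₁ ∈ 𝓑, ∃ B₂ ∈ 𝓑, B₁ ≠ B₂ ∧ (B₁ ∩ B₂).card = i ^ 2 + i) ∧
      (∃ B₁ ∈ 𝓑, ∃ B₂ ∈ 𝓑, B₁ ≠ B₂ ∧ (B₁ ∩ B₂).card = i ^ 2)) :
    ∃ 𝓓 : Finset (Finset (Fin (2 * i * (2 * i + 1) - 1))),
      (∀ B ∈ 𝓓, B.card = (2 * i - 1) * (i + 1)) ∧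
      (∀ p : Finset (Fin (2 * i * (2 * i + 1) - 1)), p.card = 2 →
        (𝓓.filter fun B => p ⊆ B).card = i * (2 * i ^ 2 + i - 2)) ∧
      (∀ B₁ ∈ 𝓓, ∀ B₂ ∈ 𝓓, B₁ ≠ B₂ →
        (B₁ ∩ B₂).card = i ^ 2 + i - 1 ∨ (B₁ ∩ B₂).card = i ^ 2 - 1) ∧
      (∃ B₁ ∈ 𝓓, ∃ B₂ ∈ 𝓓, B₁ ≠ B₂ ∧ (B₁ ∩ B₂).card = i ^ 2 + i - 1) ∧
      (∃ B₁ ∈ 𝓓, ∃ B₂ ∈ 𝓓, B₁ ≠ B₂ ∧ (B₁ ∩ B₂).card = i ^ 2 - 1) := by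
  classical
  obtain ⟨j, rfl⟩ : ∃ j, i = j + 1 := ⟨i - 1, by omega⟩
  obtain ⟨𝓑, hk, hl, hints, hw1, hw2⟩ := hex
  -- generalize the arithmetic quantities
  obtain ⟨K, hK⟩ : ∃ K, (j+1) * (2*(j+1) + 1) = K := ⟨_, rfl⟩
  obtain ⟨L, hL⟩ : ∃ L, (j+1) * (2*(j+1) - 1) * ((j+1) + 1) = L := ⟨_, rfl⟩
  obtain ⟨K1, hK1⟩ : ∃ m, (2*(j+1) - 1) * ((j+1) + 1) = m := ⟨_, rfl⟩
  obtain ⟨Λ, hΛ⟩ : ∃ m, (j+1) * (2*(j+1)^2 + (j+1) - 2) = m := ⟨_, rfl⟩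
  obtain ⟨S1, hS1⟩ : ∃ m, (j+1)^2 + (j+1) = m := ⟨_, rfl⟩
  obtain ⟨S2, hS2⟩ : ∃ m, (j+1)^2 = m := ⟨_, rfl⟩
  obtain ⟨R, hRdef⟩ : ∃ m, (j+1) * (4*j^2 + 10*j + 5) = m := ⟨_, rfl⟩
  -- arithmetic facts
  have fKS : K = S1 + S2 := by rw [← hK, ← hS1, ← hS2]; ring
  have fK1 : K1 + 1 = K := by
    rw [← hK1, ← hK, show 2*(j+1) - 1 = 2*j+1 from by omega]; ring
  have fΛ : Λ + R = 3 * L := by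
    rw [← hΛ, ← hRdef, ← hL, show 2*(j+1) - 1 = 2*j+1 from by omega,
      show 2*(j+1)^2 + (j+1) - 2 = 2*j^2+5*j+1 from by
        have : 2*(j+1)^2 + (j+1) = 2*j^2+5*j+3 := by ring
        omega]
    ring
  have fS12 : S1 = S2 + (j+1) := by rw [← hS1, ← hS2]
  have fS2pos : 1 ≤ S2 := by
    have h0 : 0 < (j+1)^2 := by positivity
    omega
  have fRpos : 1 ≤ R := by
    have h0 : 0 < (j+1) * (4*j^2 + 10*j + 5) := by positivity
    omega
  have fK2 : 2 ≤ K := by rw [← hK]; nlinarith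
  have fN : Fintype.card (Fin (2*(j+1)*(2*(j+1)+1))) = 2*K := by
    rw [Fintype.card_fin, ← hK]; ring
  have fN' : 2*(j+1)*(2*(j+1)+1) = 2*K := by rw [← hK]; ring
  -- rewrite hypotheses and goal
  rw [hK] at hk
  rw [hL] at hl
  rw [hK1, hΛ, hS1, hS2]
  rw [hS1, hS2] at hints
  rw [hS1] at hw1
  rw [hS2] at hw2
  -- replication number
  have hr : ∀ y : Fin (2*(j+1)*(2*(j+1)+1)), (𝓑.filter fun B => y ∈ B).card = R := by
    intro y
    have h0 := aux_r 𝓑 K L hk hl y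
    rw [fN] at h0
    have h1 : R * (K - 1) = (2*K - 1) * L := by
      rw [← hRdef, ← fN', ← hK, ← hL,
        show (j+1)*(2*(j+1)+1) - 1 = 2*j^2+5*j+2 from by
          have : (j+1)*(2*(j+1)+1) = 2*j^2+5*j+3 := by ring
          omega,
        show 2*(j+1)*(2*(j+1)+1) - 1 = 4*j^2+10*j+5 from by
          have : 2*(j+1)*(2*(j+1)+1) = 4*j^2+10*j+6 := by ring
          omega,
        show 2*(j+1) - 1 = 2*j+1 from by omega]
      ring
    exact Nat.eq_of_mul_eq_mul_right (by omega) (h0.trans h1.symm)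
  have hb2 : 𝓑.card = 2 * R := by
    have h0 := aux_b 𝓑 K hk
    rw [Finset.sum_congr rfl (fun y _ => hr y), Finset.sum_const, smul_eq_mul,
      Finset.card_univ, fN] at h0
    have h1 : 2*K*R = (2*R)*K := by ring
    rw [h1] at h0
    exact Nat.eq_of_mul_eq_mul_right (by omega) h0
  -- the point x and embedding
  have hNpos : 0 < 2*(j+1)*(2*(j+1)+1) := by omega
  set x : Fin (2*(j+1)*(2*(j+1)+1)) :=
    ⟨2*(j+1)*(2*(j+1)+1) - 1, Nat.sub_lt hNpos one_pos⟩ with hxdef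
  set ι : Fin (2*(j+1)*(2*(j+1)+1) - 1) → Fin (2*(j+1)*(2*(j+1)+1)) :=
    Fin.castLE (Nat.sub_le _ 1) with hιdef
  have hιinj : Function.Injective ι := Fin.castLE_injective _
  have hιx : ∀ y, ι y ≠ x := by
    intro y h
    have h1 : (ι y).1 = x.1 := congrArg Fin.val h
    have h2 := y.isLt
    simp only [hιdef, hxdef, Fin.coe_castLE] at h1
    omega
  have hsurj : ∀ z : Fin (2*(j+1)*(2*(j+1)+1)), z ≠ x →
      ∃ y, ι y = z := by
    intro z hz
    have h2 := z.isLt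
    have h1 : z.1 ≠ 2*(j+1)*(2*(j+1)+1) - 1 := by
      intro h; exact hz (Fin.ext h)
    exact ⟨⟨z.1, by omega⟩, Fin.ext rfl⟩
  -- the trace map
  set g : Finset (Fin (2*(j+1)*(2*(j+1)+1))) → Finset (Fin (2*(j+1)*(2*(j+1)+1) - 1)) :=
    fun B => univ.filter (fun y => ι y ∈ B) with hgdef
  have hgmem : ∀ B y, y ∈ g B ↔ ι y ∈ B := by
    intro B y; simp [hgdef]
  have hgcard : ∀ B, x ∈ B → (g B).card + 1 = B.card := by
    intro B hxB
    have h1 : (g B).card = (B.erase x).card := by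
      apply Finset.card_bij (fun y _ => ι y)
      · intro y hy
        exact Finset.mem_erase.2 ⟨hιx y, (hgmem B y).1 hy⟩
      · intro y1 _ y2 _ h
        exact hιinj h
      · intro z hz
        obtain ⟨y, rfl⟩ := hsurj z (Finset.mem_erase.mp hz).1
        exact ⟨y, (hgmem B y).2 (Finset.mem_erase.mp hz).2, rfl⟩
    have h2 : (B.erase x).card = B.card - 1 := Finset.card_erase_of_mem hxB
    have h3 : 1 ≤ B.card := Finset.card_pos.2 ⟨x, hxB⟩
    omega
  have hginter : ∀ B C, g B ∩ g C = g (B ∩ C) := by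
    intro B C; ext y
    simp [hgdef]
  have hgeq : ∀ B C, x ∈ B → x ∈ C → g B = g C → B = C := by
    intro B C hB hC h
    ext z
    by_cases hz : z = x
    · subst hz; simp [hB, hC]
    · obtain ⟨y, rfl⟩ := hsurj z hz
      rw [← hgmem B y, ← hgmem C y, h]
  set f : Finset (Fin (2*(j+1)*(2*(j+1)+1))) → Finset (Fin (2*(j+1)*(2*(j+1)+1) - 1)) :=
    fun B => if x ∈ B then g B else g Bᶜ with hfdef
  have hfx : ∀ B (y : Fin (2*(j+1)*(2*(j+1)+1) - 1)),
      y ∈ f B ↔ ((x ∈ B ∧ ι y ∈ B) ∨ (x ∉ B ∧ ι y ∉ B)) := by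
    intro B y
    by_cases hxB : x ∈ B <;> simp [hfdef, hxB, hgmem, Finset.mem_compl]
  -- injectivity on 𝓑
  have hfinj : ∀ B ∈ 𝓑, ∀ C ∈ 𝓑, f B = f C → B = C := by
    intro B hB C hC h
    by_cases hxB : x ∈ B <;> by_cases hxC : x ∈ C
    · exact hgeq B C hxB hxC (by simpa [hfdef, hxB, hxC] using h)
    · exfalso
      have hBC : B = Cᶜ :=
        hgeq B Cᶜ hxB (Finset.mem_compl.2 hxC) (by simpa [hfdef, hxB, hxC] using h)
      have hne : B ≠ C := by rintro rfl; exact hxC hxB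
      have hint := hints B hB C hC hne
      rw [hBC, show Cᶜ ∩ C = (∅ : Finset _) from by ext z; simp] at hint
      simp only [Finset.card_empty] at hint
      omega
    · exfalso
      have hCB : C = Bᶜ :=
        hgeq C Bᶜ hxC (Finset.mem_compl.2 hxB) (by simpa [hfdef, hxB, hxC] using h.symm)
      have hne : B ≠ C := by rintro rfl; exact hxB hxC
      have hint := hints B hB C hC hne
      rw [hCB, show B ∩ Bᶜ = (∅ : Finset _) from by ext z; simp] at hint
      simp only [Finset.card_empty] at hint
      omega
    · have h1 : Bᶜ = Cᶜ :=
        hgeq Bᶜ Cᶜ (Finset.mem_compl.2 hxB) (Finset.mem_compl.2 hxC)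
          (by simpa [hfdef, hxB, hxC] using h)
      have := congrArg (·ᶜ) h1
      simpa using this
  -- the key intersection computation
  have hcomp : ∀ B ∈ 𝓑, ∀ C ∈ 𝓑,
      ((x ∈ B ↔ x ∈ C) → (f B ∩ f C).card + 1 = (B ∩ C).card) ∧
      ((¬ (x ∈ B ↔ x ∈ C)) → (f B ∩ f C).card + 1 + (B ∩ C).card = K) := by
    intro B hB C hC
    constructor
    · intro hiff
      by_cases hxB : x ∈ B
      · have hxC := hiff.mp hxB
        simp only [hfdef, if_pos hxB, if_pos hxC, hginter]
        exact hgcard _ (Finset.mem_inter.2 ⟨hxB, hxC⟩)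
      · have hxC : x ∉ C := fun h => hxB (hiff.mpr h)
        simp only [hfdef, if_neg hxB, if_neg hxC, hginter]
        have h1 : (g (Bᶜ ∩ Cᶜ)).card + 1 = (Bᶜ ∩ Cᶜ).card :=
          hgcard _ (Finset.mem_inter.2 ⟨Finset.mem_compl.2 hxB, Finset.mem_compl.2 hxC⟩)
        have h4 := Finset.card_union_add_card_inter B C
        rw [hk B hB, hk C hC] at h4
        have h5 : (Bᶜ ∩ Cᶜ).card = 2*K - (B ∪ C).card := by
          rw [(Finset.compl_union B C).symm, Finset.card_compl, fN]
        have h6 : (B ∪ C).card ≤ 2*K := by omega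
        omega
    · intro hne
      by_cases hxB : x ∈ B
      · have hxC : x ∉ C := fun h => hne ⟨fun _ => h, fun _ => hxB⟩
        simp only [hfdef, if_pos hxB, if_neg hxC, hginter]
        have h1 : (g (B ∩ Cᶜ)).card + 1 = (B ∩ Cᶜ).card :=
          hgcard _ (Finset.mem_inter.2 ⟨hxB, Finset.mem_compl.2 hxC⟩)
        have h3 := Finset.card_sdiff_add_card_inter B C
        rw [hk B hB] at h3
        have h5 : (B ∩ Cᶜ).card = (B \ C).card := by
          congr 1
          ext z; simp [Finset.mem_sdiff]
        omega
      · have hxC : x ∈ C := by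
          by_contra hxC
          exact hne ⟨fun h => absurd h hxB, fun h => absurd h hxC⟩
        simp only [hfdef, if_neg hxB, if_pos hxC, hginter]
        have h1 : (g (Bᶜ ∩ C)).card + 1 = (Bᶜ ∩ C).card :=
          hgcard _ (Finset.mem_inter.2 ⟨Finset.mem_compl.2 hxB, hxC⟩)
        have h3 := Finset.card_sdiff_add_card_inter C B
        rw [hk C hC, Finset.inter_comm C B] at h3
        have h5 : (Bᶜ ∩ C).card = (C \ B).card := by
          congr 1
          ext z; simp [Finset.mem_sdiff, and_comm]
        omega
  refine ⟨𝓑.image f, ?_, ?_, ?_, ?_, ?_⟩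
  -- block sizes
  · intro D hD
    obtain ⟨B, hB, rfl⟩ := Finset.mem_image.mp hD
    by_cases hxB : x ∈ B
    · have h1 : (g B).card + 1 = B.card := hgcard B hxB
      rw [hk B hB] at h1
      simp only [hfdef, if_pos hxB]
      omega
    · have h1 : (g Bᶜ).card + 1 = Bᶜ.card := hgcard Bᶜ (Finset.mem_compl.2 hxB)
      have h2 : Bᶜ.card = Fintype.card (Fin (2*(j+1)*(2*(j+1)+1))) - B.card :=
        Finset.card_compl B
      rw [hk B hB, fN] at h2
      simp only [hfdef, if_neg hxB]
      omega
  -- 2-design property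
  · intro p hp
    obtain ⟨a, b, hab, rfl⟩ := Finset.card_eq_two.mp hp
    have himg : (𝓑.image f).filter (fun D => {a, b} ⊆ D)
        = (𝓑.filter fun B => ({a, b} : Finset _) ⊆ f B).image f := by
      ext D
      simp only [Finset.mem_filter, Finset.mem_image]
      constructor
      · rintro ⟨⟨B, hB, rfl⟩, h2⟩; exact ⟨B, ⟨hB, h2⟩, rfl⟩
      · rintro ⟨B, ⟨hB, h2⟩, rfl⟩; exact ⟨⟨B, hB, rfl⟩, h2⟩
    have hinjOn : Set.InjOn f (𝓑.filter (fun B => ({a, b} : Finset _) ⊆ f B) : Finset _) := by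
      intro B hB C hC h
      simp only [Finset.coe_filter, Set.mem_setOf_eq] at hB hC
      exact hfinj B hB.1 C hC.1 h
    rw [himg, Finset.card_image_of_injOn hinjOn]
    have hpred : 𝓑.filter (fun B => ({a, b} : Finset _) ⊆ f B)
        = 𝓑.filter (fun B => ((x ∈ B ∧ ι a ∈ B) ∧ ι b ∈ B) ∨ ((¬ x ∈ B ∧ ¬ ι a ∈ B) ∧ ¬ ι b ∈ B)) := by
      apply Finset.filter_congr
      intro B _
      rw [Finset.insert_subset_iff, Finset.singleton_subset_iff, hfx, hfx]
      tauto
    rw [hpred]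
    have hpair : ∀ y z : Fin (2*(j+1)*(2*(j+1)+1)), y ≠ z →
        (𝓑.filter fun B => y ∈ B ∧ z ∈ B).card = L := by
      intro y z hyz
      have h1 : 𝓑.filter (fun B => y ∈ B ∧ z ∈ B)
          = 𝓑.filter (fun B => ({y, z} : Finset _) ⊆ B) :=
        Finset.filter_congr fun B _ => by simp [Finset.insert_subset_iff]
      rw [h1]
      exact hl _ (Finset.card_pair hyz)
    have hxa : x ≠ ι a := fun h => hιx a h.symm
    have hxb : x ≠ ι b := fun h => hιx b h.symm
    have hab' : ι a ≠ ι b := fun h => hab (hιinj h)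
    have hie := aux_ie 𝓑 (fun B => x ∈ B) (fun B => ι a ∈ B) (fun B => ι b ∈ B) R L
      (hr x) (hr (ι a)) (hr (ι b)) (hpair x (ι a) hxa) (hpair x (ι b) hxb)
      (hpair (ι a) (ι b) hab') hb2
    have hie' : (𝓑.filter (fun B => ((x ∈ B ∧ ι a ∈ B) ∧ ι b ∈ B) ∨ ((¬ x ∈ B ∧ ¬ ι a ∈ B) ∧ ¬ ι b ∈ B))).card + R = 3 * L := hie
    omega
  -- intersection numbers
  · intro D1 hD1 D2 hD2 hne
    obtain ⟨B, hB, rfl⟩ := Finset.mem_image.mp hD1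
    obtain ⟨C, hC, rfl⟩ := Finset.mem_image.mp hD2
    have hBC : B ≠ C := fun h => hne (by rw [h])
    have hint := hints B hB C hC hBC
    obtain ⟨h1, h2⟩ := hcomp B hB C hC
    by_cases hiff : (x ∈ B ↔ x ∈ C)
    · have := h1 hiff; omega
    · have := h2 hiff; omega
  -- existence of the large intersection
  · by_contra hno
    push_neg at hno
    obtain ⟨B0, hB0, -⟩ := hw1
    -- every pair of distinct image blocks has intersection S2 - 1
    have hall : ∀ C ∈ 𝓑.erase B0,
        ((x ∈ B0 ↔ x ∈ C) → (B0 ∩ C).card = S2) ∧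
        ((¬ (x ∈ B0 ↔ x ∈ C)) → (B0 ∩ C).card = S1) := by
      intro C hCe
      have hCB : C ∈ 𝓑 := Finset.mem_of_mem_erase hCe
      have hneBC : B0 ≠ C := (Finset.ne_of_mem_erase hCe).symm
      have hfne : f B0 ≠ f C := fun h => hneBC (hfinj B0 hB0 C hCB h)
      have hv := hno (f B0) (Finset.mem_image_of_mem f hB0) (f C)
        (Finset.mem_image_of_mem f hCB) hfne
      have hint := hints B0 hB0 C hCB hneBC
      obtain ⟨h1, h2⟩ := hcomp B0 hB0 C hCB
      constructor
      · intro h; have := h1 h; omega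
      · intro h; have := h2 h; omega
    -- count the two sides
    have hsum := aux_s 𝓑 B0
    have hterm : ∀ p ∈ B0, ((𝓑.erase B0).filter fun C => p ∈ C).card = R - 1 := by
      intro p hp
      have h1 : (𝓑.erase B0).filter (fun C => p ∈ C)
          = (𝓑.filter fun C => p ∈ C).erase B0 := by
        ext C
        simp only [Finset.mem_erase, Finset.mem_filter]
        tauto
      rw [h1, Finset.card_erase_of_mem (Finset.mem_filter.2 ⟨hB0, hp⟩), hr p]
    rw [Finset.sum_congr rfl hterm, Finset.sum_const, hk B0 hB0, smul_eq_mul] at hsum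
    -- split
    have hsplit := Finset.sum_filter_add_sum_filter_not (𝓑.erase B0)
      (fun C => x ∈ B0 ↔ x ∈ C) (fun C => (B0 ∩ C).card)
    have hcard1 : ((𝓑.erase B0).filter (fun C => x ∈ B0 ↔ x ∈ C)).card = R - 1 := by
      by_cases hxB : x ∈ B0
      · have h1 : (𝓑.erase B0).filter (fun C => x ∈ B0 ↔ x ∈ C)
            = (𝓑.filter fun C => x ∈ C).erase B0 := by
          ext C
          simp only [Finset.mem_erase, Finset.mem_filter]
          tauto
        rw [h1, Finset.card_erase_of_mem (Finset.mem_filter.2 ⟨hB0, hxB⟩), hr x]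
      · have h1 : (𝓑.erase B0).filter (fun C => x ∈ B0 ↔ x ∈ C)
            = (𝓑.filter fun C => ¬ x ∈ C).erase B0 := by
          ext C
          simp only [Finset.mem_erase, Finset.mem_filter]
          tauto
        have h2 : (𝓑.filter fun C => ¬ x ∈ C).card = R := by
          have h3 := Finset.card_filter_add_card_filter_not
            (s := 𝓑) (fun C => x ∈ C)
          rw [hr x, hb2] at h3
          omega
        rw [h1, Finset.card_erase_of_mem (Finset.mem_filter.2 ⟨hB0, hxB⟩), h2]
    have hcard2 : ((𝓑.erase B0).filter (fun C => ¬ (x ∈ B0 ↔ x ∈ C))).card = R := by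
      have h3 := Finset.card_filter_add_card_filter_not
        (s := 𝓑.erase B0) (fun C => x ∈ B0 ↔ x ∈ C)
      have h4 : (𝓑.erase B0).card = 2*R - 1 := by
        rw [Finset.card_erase_of_mem hB0, hb2]
      omega
    have hs1 : ∑ C ∈ (𝓑.erase B0).filter (fun C => x ∈ B0 ↔ x ∈ C), (B0 ∩ C).card
        = (R - 1) * S2 := by
      rw [Finset.sum_congr rfl (fun C hC => ((hall C (Finset.mem_of_mem_filter _ hC)).1
        (Finset.mem_filter.mp hC).2)), Finset.sum_const, hcard1, smul_eq_mul]
    have hs2 : ∑ C ∈ (𝓑.erase B0).filter (fun C => ¬ (x ∈ B0 ↔ x ∈ C)), (B0 ∩ C).card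
        = R * S1 := by
      rw [Finset.sum_congr rfl (fun C hC => ((hall C (Finset.mem_of_mem_filter _ hC)).2
        (Finset.mem_filter.mp hC).2)), Finset.sum_const, hcard2, smul_eq_mul]
    rw [hs1, hs2, hsum] at hsplit
    -- hsplit : (R-1) * S2 + R * S1 = K * (R - 1)
    obtain ⟨R', rfl⟩ : ∃ R', R = R' + 1 := ⟨R - 1, by omega⟩
    rw [fKS] at hsplit
    simp only [Nat.add_sub_cancel] at hsplit
    -- hsplit : R' * S2 + (R'+1) * S1 = (S1 + S2) * R'
    nlinarith [hsplit, fS12, fS2pos]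
  -- existence of the small intersection
  · by_contra hno
    push_neg at hno
    obtain ⟨B0, hB0, -⟩ := hw1
    have hall : ∀ C ∈ 𝓑.erase B0,
        ((x ∈ B0 ↔ x ∈ C) → (B0 ∩ C).card = S1) ∧
        ((¬ (x ∈ B0 ↔ x ∈ C)) → (B0 ∩ C).card = S2) := by
      intro C hCe
      have hCB : C ∈ 𝓑 := Finset.mem_of_mem_erase hCe
      have hneBC : B0 ≠ C := (Finset.ne_of_mem_erase hCe).symm
      have hfne : f B0 ≠ f C := fun h => hneBC (hfinj B0 hB0 C hCB h)
      have hv := hno (f B0) (Finset.mem_image_of_mem f hB0) (f C)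
        (Finset.mem_image_of_mem f hCB) hfne
      have hint := hints B0 hB0 C hCB hneBC
      obtain ⟨h1, h2⟩ := hcomp B0 hB0 C hCB
      constructor
      · intro h; have := h1 h; omega
      · intro h; have := h2 h; omega
    have hsum := aux_s 𝓑 B0
    have hterm : ∀ p ∈ B0, ((𝓑.erase B0).filter fun C => p ∈ C).card = R - 1 := by
      intro p hp
      have h1 : (𝓑.erase B0).filter (fun C => p ∈ C)
          = (𝓑.filter fun C => p ∈ C).erase B0 := by
        ext C
        simp only [Finset.mem_erase, Finset.mem_filter]
        tauto
      rw [h1, Finset.card_erase_of_mem (Finset.mem_filter.2 ⟨hB0, hp⟩), hr p]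
    rw [Finset.sum_congr rfl hterm, Finset.sum_const, hk B0 hB0, smul_eq_mul] at hsum
    have hsplit := Finset.sum_filter_add_sum_filter_not (𝓑.erase B0)
      (fun C => x ∈ B0 ↔ x ∈ C) (fun C => (B0 ∩ C).card)
    have hcard1 : ((𝓑.erase B0).filter (fun C => x ∈ B0 ↔ x ∈ C)).card = R - 1 := by
      by_cases hxB : x ∈ B0
      · have h1 : (𝓑.erase B0).filter (fun C => x ∈ B0 ↔ x ∈ C)
            = (𝓑.filter fun C => x ∈ C).erase B0 := by
          ext C
          simp only [Finset.mem_erase, Finset.mem_filter]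
          tauto
        rw [h1, Finset.card_erase_of_mem (Finset.mem_filter.2 ⟨hB0, hxB⟩), hr x]
      · have h1 : (𝓑.erase B0).filter (fun C => x ∈ B0 ↔ x ∈ C)
            = (𝓑.filter fun C => ¬ x ∈ C).erase B0 := by
          ext C
          simp only [Finset.mem_erase, Finset.mem_filter]
          tauto
        have h2 : (𝓑.filter fun C => ¬ x ∈ C).card = R := by
          have h3 := Finset.card_filter_add_card_filter_not
            (s := 𝓑) (fun C => x ∈ C)
          rw [hr x, hb2] at h3
          omega
        rw [h1, Finset.card_erase_of_mem (Finset.mem_filter.2 ⟨hB0, hxB⟩), h2]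
    have hcard2 : ((𝓑.erase B0).filter (fun C => ¬ (x ∈ B0 ↔ x ∈ C))).card = R := by
      have h3 := Finset.card_filter_add_card_filter_not
        (s := 𝓑.erase B0) (fun C => x ∈ B0 ↔ x ∈ C)
      have h4 : (𝓑.erase B0).card = 2*R - 1 := by
        rw [Finset.card_erase_of_mem hB0, hb2]
      omega
    have hs1 : ∑ C ∈ (𝓑.erase B0).filter (fun C => x ∈ B0 ↔ x ∈ C), (B0 ∩ C).card
        = (R - 1) * S1 := by
      rw [Finset.sum_congr rfl (fun C hC => ((hall C (Finset.mem_of_mem_filter _ hC)).1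
        (Finset.mem_filter.mp hC).2)), Finset.sum_const, hcard1, smul_eq_mul]
    have hs2 : ∑ C ∈ (𝓑.erase B0).filter (fun C => ¬ (x ∈ B0 ↔ x ∈ C)), (B0 ∩ C).card
        = R * S2 := by
      rw [Finset.sum_congr rfl (fun C hC => ((hall C (Finset.mem_of_mem_filter _ hC)).2
        (Finset.mem_filter.mp hC).2)), Finset.sum_const, hcard2, smul_eq_mul]
    rw [hs1, hs2, hsum] at hsplit
    obtain ⟨R', rfl⟩ : ∃ R', R = R' + 1 := ⟨R - 1, by omega⟩
    rw [fKS] at hsplit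
    simp only [Nat.add_sub_cancel] at hsplit
    nlinarith [hsplit, fS12, fS2pos]
end
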